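/- arXiv:2412.15145 — 4 statements merged into one kernel-verified Lean document; each statement's English description precedes it below -/
import Mathlib

section
/- Let G = (V, E, w) be a locally finite connected weighted graph and W a finite proper nonempty subset of V. Then there exists a constant C = C(W) > 0 such that for any function f: V → ℝ supported on W, Σ_{x∈V} f(x)² μ(x) ≤ C Σ_{x,y∈V} |∇_{xy}f|² w_{xy}. -/
open scoped BigOperators

noncomputable def vmu {V : Type*} (w : V → V → ℝ) (x : V) : ℝ := ∑' y, w x y

noncomputable def gdiff {V : Type*} (w : V → V → ℝ) (f : V → ℝ) (x y : V) : ℝ :=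
  if 0 < w x y then f y - f x else 0

/-- Discrete Poincaré inequality for a finite proper nonempty subset `W`. -/
theorem poincare_inequality {V : Type*} (w : V → V → ℝ)
    (hsymm : ∀ x y, w x y = w y x) (hnonneg : ∀ x y, 0 ≤ w x y)
    (hlf : ∀ x, {y | 0 < w x y}.Finite)
    (hconn : ∀ x y : V, Relation.ReflTransGen (fun a b => 0 < w a b) x y)
    (W : Set V) (hWfin : W.Finite) (hWne : W.Nonempty) (hWproper : W ≠ Set.univ) :
    ∃ C > (0:ℝ), ∀ f : V → ℝ, (∀ x ∉ W, f x = 0) →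
      ∑' x, (f x)^2 * vmu w x
        ≤ C * ∑' p : V × V, (gdiff w f p.1 p.2)^2 * w p.1 p.2 := by
  classical
  obtain ⟨z, hz⟩ : ∃ z, z ∉ W := by
    by_contra h
    push_neg at h
    exact hWproper (Set.eq_univ_of_forall h)
  set g : (V → ℝ) → V × V → ℝ :=
    fun f p => (gdiff w f p.1 p.2)^2 * w p.1 p.2 with hg
  have hgnn : ∀ f p, 0 ≤ g f p := fun f p => mul_nonneg (sq_nonneg _) (hnonneg _ _)
  have hEnn : ∀ f, 0 ≤ ∑' p, g f p := fun f => tsum_nonneg (hgnn f)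
  have hmu : ∀ x, 0 ≤ vmu w x := fun x => tsum_nonneg (fun y => hnonneg x y)
  -- Summability of the energy for compactly supported f
  have hsumm : ∀ f : V → ℝ, (∀ y ∉ W, f y = 0) → Summable (g f) := by
    intro f hf
    apply summable_of_finite_support
    have hfin : ((⋃ a ∈ W, ({a} : Set V) ×ˢ {y | 0 < w a y}) ∪
        (⋃ a ∈ W, {y | 0 < w a y} ×ˢ ({a} : Set V))).Finite := by
      refine Set.Finite.union ?_ ?_
      · exact Set.Finite.biUnion hWfin fun a _ => (Set.finite_singleton a).prod (hlf a)
      · exact Set.Finite.biUnion hWfin fun a _ => (hlf a).prod (Set.finite_singleton a)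
    refine hfin.subset ?_
    intro p hp
    simp only [Function.mem_support, hg] at hp
    have hw : 0 < w p.1 p.2 := by
      rcases (hnonneg p.1 p.2).lt_or_eq with h | h
      · exact h
      · exact absurd (by rw [← h]; ring) hp
    have hne : f p.2 ≠ f p.1 := by
      intro hfe
      exact hp (by simp [gdiff, hw, hfe])
    have hmem : p.1 ∈ W ∨ p.2 ∈ W := by
      by_contra hc
      push_neg at hc
      exact hne (by rw [hf _ hc.2, hf _ hc.1])
    rcases hmem with h1 | h2
    · left
      exact Set.mem_biUnion h1 ⟨rfl, hw⟩
    · right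
      refine Set.mem_biUnion h2 ?_
      exact ⟨by simpa [hsymm p.2 p.1] using hw, rfl⟩
  -- Main path estimate
  have main : ∀ x y : V, Relation.ReflTransGen (fun a b => 0 < w a b) x y →
      ∃ C ≥ (0:ℝ), ∃ D ≥ (0:ℝ), ∀ f : V → ℝ, Summable (g f) →
        (f x)^2 ≤ C * (∑' p, g f p) + D * (f y)^2 := by
    intro x y h
    induction h with
    | refl =>
      exact ⟨0, le_rfl, 1, zero_le_one, fun f _ => by nlinarith [hEnn f]⟩
    | @tail b c hxb hbc ih =>
      obtain ⟨C, hC, D, hD, hfD⟩ := ih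
      refine ⟨C + 2 * D / (w b c), by positivity, 2 * D, by positivity, ?_⟩
      intro f hs
      have h1 := hfD f hs
      have h2 : g f (b, c) ≤ ∑' p, g f p := Summable.le_tsum hs (b, c) (fun j _ => hgnn f j)
      have h3 : g f (b, c) = (f c - f b)^2 * w b c := by
        simp [hg, gdiff, hbc]
      have h4 : (f c - f b)^2 ≤ (∑' p, g f p) / w b c := by
        rw [le_div_iff₀ hbc]
        linarith [h3 ▸ h2]
      have hb2 : (f b)^2 ≤ 2 * (f c - f b)^2 + 2 * (f c)^2 := by
        nlinarith [sq_nonneg (f b - 2 * f c)]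
      have h5 : D * (f c - f b)^2 ≤ D * ((∑' p, g f p) / w b c) :=
        mul_le_mul_of_nonneg_left h4 hD
      have h6 : D * (f b)^2 ≤ D * (2 * (f c - f b)^2 + 2 * (f c)^2) :=
        mul_le_mul_of_nonneg_left hb2 hD
      have hEq : (C + 2 * D / (w b c)) * (∑' p, g f p)
          = C * (∑' p, g f p) + 2 * (D * ((∑' p, g f p) / w b c)) := by
        field_simp
      rw [hEq]
      nlinarith [h1, h5, h6]
  have key : ∀ x : V, ∃ C ≥ (0:ℝ), ∀ f : V → ℝ, Summable (g f) → f z = 0 →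
      (f x)^2 ≤ C * (∑' p, g f p) := by
    intro x
    obtain ⟨C, hC, D, hD, hf⟩ := main x z (hconn x z)
    refine ⟨C, hC, fun f hs hfz => ?_⟩
    have := hf f hs
    rw [hfz] at this
    nlinarith [this]
  choose C hC0 hCle using key
  refine ⟨(∑ x ∈ hWfin.toFinset, C x * vmu w x) + 1, ?_, ?_⟩
  · have hsum0 : 0 ≤ ∑ x ∈ hWfin.toFinset, C x * vmu w x :=
      Finset.sum_nonneg fun x _ => mul_nonneg (hC0 x) (hmu x)
    linarith
  · intro f hf
    have hs := hsumm f hf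
    have hfz : f z = 0 := hf z hz
    have hL : ∑' x, (f x)^2 * vmu w x = ∑ x ∈ hWfin.toFinset, (f x)^2 * vmu w x := by
      refine tsum_eq_sum fun b hb => ?_
      rw [hf b (by simpa using hb)]
      ring
    rw [hL]
    show _ ≤ _ * ∑' p, g f p
    calc ∑ x ∈ hWfin.toFinset, (f x)^2 * vmu w x
        ≤ ∑ x ∈ hWfin.toFinset, (C x * (∑' p, g f p)) * vmu w x :=
          Finset.sum_le_sum fun x _ =>
            mul_le_mul_of_nonneg_right (hCle x f hs hfz) (hmu x)
      _ = (∑ x ∈ hWfin.toFinset, C x * vmu w x) * (∑' p, g f p) := by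
          rw [Finset.sum_mul]
          exact Finset.sum_congr rfl fun x _ => by ring
      _ ≤ ((∑ x ∈ hWfin.toFinset, C x * vmu w x) + 1) * (∑' p, g f p) := by
          have := hEnn f
          nlinarith
end

section
/- Let G₀ be a locally finite connected weighted graph, G = G₀ □ ℤ, W = W₀ × ℤ with W₀ a finite proper nonempty subset of V₀. There exists ε > 0 depending only on G such that: if c: V → ℝ satisfies c ≤ ε and u: V × ℝ_{≤0} → ℝ solves ∂_t u = Δu + cu on W × ℝ_{≤0} with u = 0 on (V∖W) × ℝ_{≤0}, then for all integers R > r > 0, ∫_{Q_r} u² ≤ (C/(R-r)²)(∫_{Q_R} u² - ∫_{Q_r} u²) for some constant C depending only on G, where Q_r = [-r², 0] × (V₀ × ([-r,r]∩ℤ)) and ∫_{Q_r} u² = ∫_{-r²}^0 Σ_{x∈D_r} u(x,t)² μ(x) dt. -/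
open scoped BigOperators

attribute [local instance] Classical.propDecidable

noncomputable def glap {V : Type*} (w : V → V → ℝ) (f : V → ℝ) (x : V) : ℝ :=
  (∑' y, w x y * (f y - f x)) / vmu w x

/-- Edge weights of the strip-type graph `G₀ □ ℤ` (with `p = q = 1`). -/
noncomputable def wProdZ {V₀ : Type*} (w0 : V₀ → V₀ → ℝ) :
    (V₀ × ℤ) → (V₀ × ℤ) → ℝ := fun x y =>
  if x.1 = y.1 ∧ |x.2 - y.2| = 1 then vmu w0 x.1
  else if x.2 = y.2 ∧ 0 < w0 x.1 y.1 then 2 * w0 x.1 y.1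
  else 0

/-- Space-time energy `∫_{Q_r} u² = ∫_{-r²}^0 Σ_{x ∈ D_r} u(x,t)² μ(x) dt`,
where `D_r = V₀ × ([-r,r] ∩ ℤ)`. -/
noncomputable def Qint {V₀ : Type*} (w0 : V₀ → V₀ → ℝ) (u : V₀ × ℤ → ℝ → ℝ)
    (r : ℕ) : ℝ :=
  ∫ t in (-(r:ℝ)^2)..(0:ℝ),
    ∑' x : V₀ × ℤ, if |x.2| ≤ (r:ℤ) then (u x t)^2 * vmu (wProdZ w0) x else 0

section Aux
variable {V₀ : Type*} {w0 : V₀ → V₀ → ℝ}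

lemma vmu_eq_sum (hnonneg : ∀ x y, 0 ≤ w0 x y) (hlf : ∀ x, {y | 0 < w0 x y}.Finite) (x : V₀) :
    vmu w0 x = ∑ y ∈ (hlf x).toFinset, w0 x y := by
  apply tsum_eq_sum
  intro b hb
  simp only [Set.Finite.mem_toFinset, Set.mem_setOf_eq, not_lt] at hb
  exact le_antisymm hb (hnonneg x b)

lemma vmu_nonneg (hnonneg : ∀ x y, 0 ≤ w0 x y) (x : V₀) : 0 ≤ vmu w0 x :=
  tsum_nonneg (fun y => hnonneg x y)

lemma vmu_pos (hnonneg : ∀ x y, 0 ≤ w0 x y) (hlf : ∀ x, {y | 0 < w0 x y}.Finite)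
    (x y0 : V₀) (hconn : Relation.ReflTransGen (fun a b => 0 < w0 a b) x y0)
    (hxy : x ≠ y0) : 0 < vmu w0 x := by
  rcases (Relation.ReflTransGen.cases_head hconn) with h | ⟨z, hz, _⟩
  · exact absurd h hxy
  · have hzmem : z ∈ (hlf x).toFinset := by
      simp only [Set.Finite.mem_toFinset, Set.mem_setOf_eq]; exact hz
    have : w0 x z ≤ ∑ y ∈ (hlf x).toFinset, w0 x y :=
      Finset.single_le_sum (fun i _ => hnonneg x i) hzmem
    rw [vmu_eq_sum hnonneg hlf]
    exact lt_of_lt_of_le hz this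

lemma wProdZ_nonneg (hnonneg : ∀ x y, 0 ≤ w0 x y) (x y : V₀ × ℤ) :
    0 ≤ wProdZ w0 x y := by
  unfold wProdZ
  split_ifs with h1 h2
  · exact vmu_nonneg hnonneg _
  · linarith [hnonneg x.1 y.1]
  · exact le_refl 0

lemma wProdZ_cases (x y : V₀ × ℤ) :
    wProdZ w0 x y = if x.1 = y.1 ∧ |x.2 - y.2| = 1 then vmu w0 x.1
      else if x.2 = y.2 ∧ 0 < w0 x.1 y.1 then 2 * w0 x.1 y.1 else 0 := rfl

lemma wProdZ_symm (hsymm : ∀ x y, w0 x y = w0 y x) (x y : V₀ × ℤ) :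
    wProdZ w0 x y = wProdZ w0 y x := by
  have h2 : |x.2 - y.2| = 1 ↔ |y.2 - x.2| = 1 := by rw [abs_sub_comm]
  by_cases hv : x.1 = y.1 ∧ |x.2 - y.2| = 1
  · have l : wProdZ w0 x y = vmu w0 x.1 := by rw [wProdZ_cases, if_pos hv]
    have r : wProdZ w0 y x = vmu w0 y.1 := by
      rw [wProdZ_cases, if_pos ⟨hv.1.symm, h2.mp hv.2⟩]
    rw [l, r, hv.1]
  · have hv' : ¬(y.1 = x.1 ∧ |y.2 - x.2| = 1) := fun hc => hv ⟨hc.1.symm, h2.mpr hc.2⟩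
    by_cases hh : x.2 = y.2 ∧ 0 < w0 x.1 y.1
    · have l : wProdZ w0 x y = 2 * w0 x.1 y.1 := by rw [wProdZ_cases, if_neg hv, if_pos hh]
      have r : wProdZ w0 y x = 2 * w0 y.1 x.1 := by
        rw [wProdZ_cases, if_neg hv', if_pos ⟨hh.1.symm, by rw [← hsymm]; exact hh.2⟩]
      rw [l, r, hsymm x.1 y.1]
    · have hh' : ¬(y.2 = x.2 ∧ 0 < w0 y.1 x.1) :=
        fun hc => hh ⟨hc.1.symm, by rw [hsymm]; exact hc.2⟩
      have l : wProdZ w0 x y = 0 := by rw [wProdZ_cases, if_neg hv, if_neg hh]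
      have r : wProdZ w0 y x = 0 := by rw [wProdZ_cases, if_neg hv', if_neg hh']
      rw [l, r]

/-- The neighbourhood of `x` in the product graph. -/
noncomputable def Tnbr {V₀ : Type*} {w0 : V₀ → V₀ → ℝ}
    (hlf : ∀ x, {y | 0 < w0 x y}.Finite) (x : V₀ × ℤ) : Finset (V₀ × ℤ) :=
  ((hlf x.1).toFinset.image (fun a => (a, x.2))) ∪ {(x.1, x.2 + 1), (x.1, x.2 - 1)}

lemma wProdZ_support (hlf : ∀ x, {y | 0 < w0 x y}.Finite) (x y : V₀ × ℤ)
    (h : wProdZ w0 x y ≠ 0) : y ∈ Tnbr hlf x := by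
  unfold wProdZ at h
  unfold Tnbr
  split_ifs at h with h1 h2
  · obtain ⟨he, ha⟩ := h1
    rcases abs_eq (by norm_num : (0:ℤ) ≤ 1) |>.mp ha with hd | hd
    · have : y = (x.1, x.2 - 1) := by
        apply Prod.ext
        · exact he.symm
        · simp; omega
      rw [this]; simp
    · have : y = (x.1, x.2 + 1) := by
        apply Prod.ext
        · exact he.symm
        · simp; omega
      rw [this]; simp
  · obtain ⟨he, hp⟩ := h2
    apply Finset.mem_union_left
    apply Finset.mem_image.mpr
    exact ⟨y.1, by simp [Set.Finite.mem_toFinset]; exact hp, by apply Prod.ext <;> simp [he]⟩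
  · exact absurd rfl h

lemma wProdZ_horiz (hnonneg : ∀ x y, 0 ≤ w0 x y) (x1 y1 : V₀) (z : ℤ) :
    wProdZ w0 (x1, z) (y1, z) = 2 * w0 x1 y1 := by
  unfold wProdZ
  rw [if_neg (by simp)]
  by_cases h : 0 < w0 x1 y1
  · rw [if_pos ⟨rfl, h⟩]
  · rw [if_neg (by simp [h]), le_antisymm (not_lt.mp h) (hnonneg x1 y1)]
    ring

lemma wProdZ_vert (x1 : V₀) (z z' : ℤ) (h : |z - z'| = 1) :
    wProdZ w0 (x1, z) (x1, z') = vmu w0 x1 := by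
  unfold wProdZ
  rw [if_pos ⟨rfl, h⟩]

lemma mu_prod_eq (hnonneg : ∀ x y, 0 ≤ w0 x y) (hlf : ∀ x, {y | 0 < w0 x y}.Finite)
    (x : V₀ × ℤ) : vmu (wProdZ w0) x = 4 * vmu w0 x.1 := by
  have hsupp : ∀ y ∉ Tnbr hlf x, wProdZ w0 x y = 0 := by
    intro y hy
    by_contra h
    exact hy (wProdZ_support hlf x y h)
  rw [show vmu (wProdZ w0) x = ∑' y, wProdZ w0 x y from rfl, tsum_eq_sum hsupp]
  unfold Tnbr
  rw [Finset.sum_union]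
  · have h1 : ∑ y ∈ (hlf x.1).toFinset.image (fun a => (a, x.2)), wProdZ w0 x y
        = 2 * vmu w0 x.1 := by
      rw [Finset.sum_image (by intro a _ b _ hab; exact (Prod.mk.injEq _ _ _ _ ▸ hab).1)]
      rw [vmu_eq_sum hnonneg hlf, Finset.mul_sum]
      apply Finset.sum_congr rfl
      intro a ha
      simp only [Set.Finite.mem_toFinset, Set.mem_setOf_eq] at ha
      have : wProdZ w0 x (a, x.2) = 2 * w0 x.1 a := by
        have := wProdZ_horiz hnonneg x.1 a x.2
        simpa using this
      simpa using this
    have h2 : ∑ y ∈ ({(x.1, x.2 + 1), (x.1, x.2 - 1)} : Finset (V₀ × ℤ)), wProdZ w0 x y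
        = 2 * vmu w0 x.1 := by
      rw [Finset.sum_pair (by simp; omega)]
      have ha : wProdZ w0 x (x.1, x.2 + 1) = vmu w0 x.1 := by
        have := wProdZ_vert (w0 := w0) x.1 x.2 (x.2 + 1) (by simp)
        simpa using this
      have hb : wProdZ w0 x (x.1, x.2 - 1) = vmu w0 x.1 := by
        have := wProdZ_vert (w0 := w0) x.1 x.2 (x.2 - 1) (by simp)
        simpa using this
      rw [ha, hb]; ring
    rw [h1, h2]; ring
  · rw [Finset.disjoint_left]
    intro a ha hb
    rw [Finset.mem_image] at ha
    obtain ⟨b, _, rfl⟩ := ha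
    simp only [Finset.mem_insert, Finset.mem_singleton, Prod.mk.injEq] at hb
    rcases hb with ⟨h1, h2⟩ | ⟨h1, h2⟩ <;> omega
end Aux

section Poincare
variable {V₀ : Type*} {w0 : V₀ → V₀ → ℝ}

/-- `W₀` together with all its neighbours. -/
noncomputable def Wplus (hlf : ∀ x, {y | 0 < w0 x y}.Finite)
    {W₀ : Set V₀} (hW₀fin : W₀.Finite) : Finset V₀ :=
  hW₀fin.toFinset ∪ hW₀fin.toFinset.biUnion (fun a => (hlf a).toFinset)

lemma W_subset_Wplus (hlf : ∀ x, {y | 0 < w0 x y}.Finite)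
    {W₀ : Set V₀} (hW₀fin : W₀.Finite) : hW₀fin.toFinset ⊆ Wplus hlf hW₀fin :=
  Finset.subset_union_left

lemma nbr_subset_Wplus (hlf : ∀ x, {y | 0 < w0 x y}.Finite)
    {W₀ : Set V₀} (hW₀fin : W₀.Finite) {a : V₀} (ha : a ∈ W₀) {b : V₀} (hb : 0 < w0 a b) :
    b ∈ Wplus hlf hW₀fin := by
  apply Finset.mem_union_right
  apply Finset.mem_biUnion.mpr
  exact ⟨a, by simp [Set.Finite.mem_toFinset]; exact ha, by simp [Set.Finite.mem_toFinset]; exact hb⟩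

/-- If `φ` is supported in `W₀` and constant along every positive-weight edge inside
`Wplus`, then `φ` vanishes on `W₀` (using a path out of `W₀`). -/
lemma vanish_on_W (hlf : ∀ x, {y | 0 < w0 x y}.Finite)
    {W₀ : Set V₀} (hW₀fin : W₀.Finite) (φ : V₀ → ℝ)
    (hsupp : ∀ a, a ∉ W₀ → φ a = 0)
    (hconst : ∀ x ∈ Wplus hlf hW₀fin, ∀ y ∈ Wplus hlf hW₀fin, 0 < w0 x y → φ x = φ y)
    {x y : V₀} (hxy : Relation.ReflTransGen (fun a b => 0 < w0 a b) x y) (hy : y ∉ W₀) :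
    φ x = 0 := by
  by_cases hx : x ∈ W₀
  · refine Relation.ReflTransGen.head_induction_on (b := y)
      (motive := fun a _ => a ∈ W₀ → φ a = 0) hxy (fun h => absurd h hy) ?_ hx
    intro a c hac _ ih ha
    have haW : a ∈ Wplus hlf hW₀fin :=
      W_subset_Wplus hlf hW₀fin (by simp [Set.Finite.mem_toFinset]; exact ha)
    have hcW : c ∈ Wplus hlf hW₀fin := nbr_subset_Wplus hlf hW₀fin ha hac
    have : φ a = φ c := hconst a haW c hcW hac
    by_cases hc : c ∈ W₀
    · rw [this]; exact ih hc
    · rw [this]; exact hsupp c hc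
  · exact hsupp x hx

lemma base_poincare (hsymm : ∀ x y, w0 x y = w0 y x) (hnonneg : ∀ x y, 0 ≤ w0 x y)
    (hlf : ∀ x, {y | 0 < w0 x y}.Finite)
    (hconn : ∀ x y : V₀, Relation.ReflTransGen (fun a b => 0 < w0 a b) x y)
    {W₀ : Set V₀} (hW₀fin : W₀.Finite) (hW₀ne : W₀.Nonempty) (hW₀proper : W₀ ≠ Set.univ) :
    ∃ lam > (0:ℝ), ∀ φ : V₀ → ℝ, (∀ a, a ∉ W₀ → φ a = 0) →
      lam * ∑ x ∈ hW₀fin.toFinset, (φ x)^2 * vmu w0 x ≤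
        ∑ x ∈ Wplus hlf hW₀fin, ∑ y ∈ Wplus hlf hW₀fin, w0 x y * (φ y - φ x)^2 := by
  classical
  obtain ⟨y₀, hy₀⟩ : ∃ y₀, y₀ ∉ W₀ := by
    by_contra h
    push_neg at h
    exact hW₀proper (Set.eq_univ_of_forall h)
  -- positivity of the base measure
  have hmu0 : ∀ x : V₀, 0 < vmu w0 x := by
    intro x
    by_cases hx : x = y₀
    · obtain ⟨a, ha⟩ := hW₀ne
      exact vmu_pos hnonneg hlf x a (hconn x a) (fun h => hy₀ (hx ▸ h ▸ ha))
    · exact vmu_pos hnonneg hlf x y₀ (hconn x y₀) hx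
  set W : Finset V₀ := hW₀fin.toFinset with hW
  set Wp : Finset V₀ := Wplus hlf hW₀fin with hWp
  -- the finite index type
  let ι := {a // a ∈ W}
  obtain ⟨a₀, ha₀⟩ := hW₀ne
  have ha₀W : a₀ ∈ W := by simp [hW, Set.Finite.mem_toFinset]; exact ha₀
  haveI : Nonempty ι := ⟨⟨a₀, ha₀W⟩⟩
  let ext : (ι → ℝ) → V₀ → ℝ := fun g a => if h : a ∈ W then g ⟨a, h⟩ else 0
  let N : (ι → ℝ) → ℝ := fun g => ∑ i : ι, (g i)^2 * vmu w0 (i : V₀)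
  let Q : (ι → ℝ) → ℝ := fun g => ∑ x ∈ Wp, ∑ y ∈ Wp, w0 x y * (ext g y - ext g x)^2
  have hNcont : Continuous N :=
    continuous_finset_sum _ (fun i _ => ((continuous_apply i).pow 2).mul continuous_const)
  have hextcont : ∀ a, Continuous (fun g : ι → ℝ => ext g a) := by
    intro a
    by_cases h : a ∈ W
    · simpa [ext, h] using continuous_apply (⟨a, h⟩ : ι)
    · simpa [ext, h] using continuous_const (y := (0:ℝ))
  have hQcont : Continuous Q := by
    apply continuous_finset_sum
    intro x _
    apply continuous_finset_sum
    intro y _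
    exact (continuous_const.mul (((hextcont y).sub (hextcont x)).pow 2))
  have hNnonneg : ∀ g, 0 ≤ N g := by
    intro g
    apply Finset.sum_nonneg
    intro i _
    exact mul_nonneg (sq_nonneg _) (hmu0 _).le
  have hQnonneg : ∀ g, 0 ≤ Q g := by
    intro g
    apply Finset.sum_nonneg
    intro x _
    apply Finset.sum_nonneg
    intro y _
    exact mul_nonneg (hnonneg x y) (sq_nonneg _)
  -- N g = 0 implies g = 0
  have hNzero : ∀ g, N g = 0 → g = 0 := by
    intro g hg
    funext i
    have h1 : ∀ j ∈ (Finset.univ : Finset ι), 0 ≤ (g j)^2 * vmu w0 (j : V₀) :=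
      fun j _ => mul_nonneg (sq_nonneg _) (hmu0 _).le
    have h2 := (Finset.sum_eq_zero_iff_of_nonneg h1).mp hg i (Finset.mem_univ i)
    have := (hmu0 (i:V₀)).ne'
    have : (g i)^2 = 0 := by
      rcases mul_eq_zero.mp h2 with h | h
      · exact h
      · exact absurd h this
    simpa using pow_eq_zero_iff (n := 2) (by norm_num) |>.mp this
  -- scaling
  have hext_smul : ∀ (t : ℝ) (g : ι → ℝ) (a : V₀), ext (t • g) a = t * ext g a := by
    intro t g a
    by_cases h : a ∈ W <;> simp [ext, h]
  have hNsmul : ∀ (t : ℝ) (g : ι → ℝ), N (t • g) = t^2 * N g := by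
    intro t g
    simp only [N, Finset.mul_sum]
    apply Finset.sum_congr rfl
    intro i _
    have h : (t • g) i = t * g i := rfl
    rw [h]; ring
  have hQsmul : ∀ (t : ℝ) (g : ι → ℝ), Q (t • g) = t^2 * Q g := by
    intro t g
    simp only [Q, Finset.mul_sum]
    apply Finset.sum_congr rfl
    intro x _
    apply Finset.sum_congr rfl
    intro y _
    rw [hext_smul, hext_smul]
    ring
  -- the sphere
  set S : Set (ι → ℝ) := {g | N g = 1} with hS
  have hSclosed : IsClosed S := isClosed_singleton.preimage hNcont
  set m : ℝ := Finset.univ.inf' (Finset.univ_nonempty) (fun i : ι => vmu w0 (i : V₀)) with hm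
  have hmpos : 0 < m := by
    rw [hm, Finset.lt_inf'_iff]
    intro i _
    exact hmu0 _
  have hSbdd : S ⊆ Metric.closedBall 0 (Real.sqrt (1/m)) := by
    intro g hg
    have hg1 : N g = 1 := hg
    rw [Metric.mem_closedBall, dist_zero_right]
    apply pi_norm_le_iff_of_nonneg (Real.sqrt_nonneg _) |>.mpr
    intro i
    have h1 : (g i)^2 * vmu w0 (i : V₀) ≤ 1 := by
      rw [← hg1]
      exact Finset.single_le_sum (fun j _ => mul_nonneg (sq_nonneg _) (hmu0 _).le)
        (Finset.mem_univ i)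
    have h2 : (g i)^2 ≤ 1/m := by
      rw [le_div_iff₀ hmpos]
      calc (g i)^2 * m ≤ (g i)^2 * vmu w0 (i : V₀) :=
            mul_le_mul_of_nonneg_left (Finset.inf'_le _ (Finset.mem_univ i)) (sq_nonneg _)
        _ ≤ 1 := h1
    rw [Real.norm_eq_abs, ← Real.sqrt_sq_eq_abs]
    exact Real.sqrt_le_sqrt h2
  have hScompact : IsCompact S :=
    (isCompact_closedBall 0 _).of_isClosed_subset hSclosed hSbdd
  have hSne : S.Nonempty := by
    set cc := (Real.sqrt (vmu w0 a₀))⁻¹ with hcc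
    refine ⟨fun i => if i = ⟨a₀, ha₀W⟩ then cc else 0, ?_⟩
    show N _ = 1
    have hval : N (fun i => if i = ⟨a₀, ha₀W⟩ then cc else 0) = cc^2 * vmu w0 a₀ := by
      show (∑ i : ι, (if i = ⟨a₀, ha₀W⟩ then cc else 0)^2 * vmu w0 (i : V₀)) = cc^2 * vmu w0 a₀
      rw [Finset.sum_eq_single (⟨a₀, ha₀W⟩ : ι)]
      · simp
      · intro b _ hb
        rw [if_neg hb]
        ring
      · intro h
        exact absurd (Finset.mem_univ _) h
    rw [hval, hcc, inv_pow, Real.sq_sqrt (hmu0 a₀).le]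
    exact inv_mul_cancel₀ (hmu0 a₀).ne'
  obtain ⟨gm, hgmS, hgmmin⟩ := hScompact.exists_isMinOn hSne hQcont.continuousOn
  set lam := Q gm with hlamdef
  have hlampos : 0 < lam := by
    rcases lt_or_eq_of_le (hQnonneg gm) with h | h
    · exact h
    · exfalso
      have hQ0 : Q gm = 0 := h.symm
      have hconst : ∀ x ∈ Wp, ∀ y ∈ Wp, 0 < w0 x y → ext gm x = ext gm y := by
        intro x hx y hy hxy
        have h1 : ∀ p ∈ Wp, (0:ℝ) ≤ ∑ q ∈ Wp, w0 p q * (ext gm q - ext gm p)^2 :=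
          fun p _ => Finset.sum_nonneg (fun q _ => mul_nonneg (hnonneg p q) (sq_nonneg _))
        have h2 := (Finset.sum_eq_zero_iff_of_nonneg h1).mp hQ0 x hx
        have h3 : ∀ q ∈ Wp, (0:ℝ) ≤ w0 x q * (ext gm q - ext gm x)^2 :=
          fun q _ => mul_nonneg (hnonneg x q) (sq_nonneg _)
        have h4 := (Finset.sum_eq_zero_iff_of_nonneg h3).mp h2 y hy
        rcases mul_eq_zero.mp h4 with h5 | h5
        · exact absurd h5 hxy.ne'
        · have h6 := pow_eq_zero_iff (n := 2) (by norm_num) |>.mp h5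
          linarith
      have hext0 : ∀ a, a ∉ W₀ → ext gm a = 0 := by
        intro b hb
        have : b ∉ W := fun h => hb ((Set.Finite.mem_toFinset hW₀fin).mp h)
        exact dif_neg this
      have hval : ∀ a, a ∈ W₀ → ext gm a = 0 := by
        intro a _
        exact vanish_on_W hlf hW₀fin (ext gm) hext0 hconst (hconn a y₀) hy₀
      have hgm0 : gm = 0 := by
        funext i
        have h7 : ext gm (i : V₀) = gm i := dif_pos i.2
        have h8 : ext gm (i : V₀) = 0 :=
          hval _ ((Set.Finite.mem_toFinset hW₀fin).mp i.2)
        rw [← h7, h8]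
        simp
      have h9 : N gm = 1 := hgmS
      rw [hgm0] at h9
      have h10 : N 0 = 0 := by
        show (∑ i : ι, ((0:ι → ℝ) i)^2 * vmu w0 (i : V₀)) = 0
        apply Finset.sum_eq_zero
        intro i _
        norm_num
      rw [h10] at h9
      exact one_ne_zero h9.symm
  refine ⟨lam, hlampos, ?_⟩
  intro φ hsupp
  set g : ι → ℝ := fun i => φ (i : V₀) with hgdef
  have hextg : ext g = φ := by
    funext a
    by_cases h : a ∈ W
    · show (if h' : a ∈ W then g ⟨a, h'⟩ else 0) = φ a
      rw [dif_pos h]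
    · show (if h' : a ∈ W then g ⟨a, h'⟩ else 0) = φ a
      rw [dif_neg h]
      exact (hsupp a (fun ha => h ((Set.Finite.mem_toFinset hW₀fin).mpr ha))).symm
  have hNg : N g = ∑ x ∈ W, (φ x)^2 * vmu w0 x := by
    rw [← Finset.sum_coe_sort W (fun x => (φ x)^2 * vmu w0 x)]
  have hQg : Q g = ∑ x ∈ Wp, ∑ y ∈ Wp, w0 x y * (φ y - φ x)^2 := by
    show (∑ x ∈ Wp, ∑ y ∈ Wp, w0 x y * (ext g y - ext g x)^2) = _
    rw [hextg]
  rw [← hNg, ← hQg]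
  rcases eq_or_lt_of_le (hNnonneg g) with h0 | hpos
  · rw [← h0, mul_zero]
    exact hQnonneg g
  · set tt := (Real.sqrt (N g))⁻¹ with htt
    have hNt : N (tt • g) = 1 := by
      rw [hNsmul, htt, inv_pow, Real.sq_sqrt (hNnonneg g)]
      exact inv_mul_cancel₀ hpos.ne'
    have h2 : lam ≤ tt^2 * Q g := by
      rw [← hQsmul]
      exact isMinOn_iff.mp hgmmin _ hNt
    have ht2 : tt^2 = (N g)⁻¹ := by
      rw [htt, inv_pow, Real.sq_sqrt (hNnonneg g)]
    rw [ht2] at h2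
    calc lam * N g ≤ ((N g)⁻¹ * Q g) * N g := mul_le_mul_of_nonneg_right h2 hpos.le
      _ = Q g := by field_simp
end Poincare

section Main

lemma contOn_sum {α : Type*} (s : Finset α) (f : α → ℝ → ℝ) (S : Set ℝ)
    (h : ∀ i ∈ s, ContinuousOn (f i) S) :
    ContinuousOn (fun t => ∑ i ∈ s, f i t) S := by
  classical
  induction s using Finset.induction_on with
  | empty => simpa using continuousOn_const
  | @insert a s' hnotmem ih =>
    simp only [Finset.sum_insert hnotmem]
    exact (h a (Finset.mem_insert_self a s')).add
      (ih (fun i hi => h i (Finset.mem_insert_of_mem hi)))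

lemma lip_min_one (a b : ℝ) : |min 1 a - min 1 b| ≤ |a - b| := by
  have h1 := le_abs_self (a - b)
  have h2 := neg_abs_le (a - b)
  rcases le_total a 1 with h | h <;> rcases le_total b 1 with h' | h' <;>
    rw [abs_le] <;> constructor <;>
    simp [min_eq_left, min_eq_right, *] <;> linarith

lemma lip_max_zero (a b : ℝ) : |max 0 a - max 0 b| ≤ |a - b| := by
  have h1 := le_abs_self (a - b)
  have h2 := neg_abs_le (a - b)
  rcases le_total a 0 with h | h <;> rcases le_total b 0 with h' | h' <;>
    rw [abs_le] <;> constructor <;>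
    simp [max_eq_left, max_eq_right, *] <;> linarith


lemma pair_ineq1 (w Ux Uy px py cx cy : ℝ) (hw : 0 ≤ w) (hpx : 0 ≤ px) (hpy : 0 ≤ py)
    (hcx : 0 ≤ cx) (hcy : 0 ≤ cy) (hxy : px < py → cx = 1) (hyx : py < px → cy = 1) :
    -(w * (Uy - Ux) * (Uy*py^2 - Ux*px^2)) ≤
      -(1/2)*(w*(Uy - Ux)^2*(max px py)^2) + 2*(w*(py-px)^2*(cx*Ux^2 + cy*Uy^2)) := by
  have h1 : 0 ≤ w*(cy*Uy^2)*(py-px)^2 :=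
    mul_nonneg (mul_nonneg hw (mul_nonneg hcy (sq_nonneg _))) (sq_nonneg _)
  have h1x : 0 ≤ w*(cx*Ux^2)*(py-px)^2 :=
    mul_nonneg (mul_nonneg hw (mul_nonneg hcx (sq_nonneg _))) (sq_nonneg _)
  rcases lt_trichotomy px py with h|h|h
  · rw [max_eq_right h.le, hxy h]
    rcases le_or_gt 0 ((Uy - Ux) * Ux) with hs|hs
    · nlinarith [mul_nonneg (mul_nonneg (mul_nonneg hw hs) (sub_nonneg.mpr h.le)) (by linarith : (0:ℝ) ≤ px + py),
        mul_nonneg hw (mul_nonneg (sq_nonneg (Uy-Ux)) (sq_nonneg py)),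
        mul_nonneg (mul_nonneg hw (sq_nonneg (py-px))) (sq_nonneg Ux)]
    · nlinarith [mul_nonneg hw (sq_nonneg ((Uy-Ux)*py + 2*Ux*(py-px))),
        mul_nonneg (mul_nonneg hw (le_of_lt (neg_pos.mpr hs))) (sq_nonneg (py-px)),
        mul_nonneg (mul_nonneg hw (sq_nonneg (py-px))) (sq_nonneg Ux)]
  · subst h
    rw [max_self]
    nlinarith [mul_nonneg hw (mul_nonneg (sq_nonneg (Uy-Ux)) (sq_nonneg px))]
  · rw [max_eq_left h.le, hyx h]
    rcases le_or_gt 0 ((Ux - Uy) * Uy) with hs|hs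
    · nlinarith [mul_nonneg (mul_nonneg (mul_nonneg hw hs) (sub_nonneg.mpr h.le)) (by linarith : (0:ℝ) ≤ px + py),
        mul_nonneg hw (mul_nonneg (sq_nonneg (Uy-Ux)) (sq_nonneg px)),
        mul_nonneg (mul_nonneg hw (sq_nonneg (py-px))) (sq_nonneg Uy)]
    · nlinarith [mul_nonneg hw (sq_nonneg ((Ux-Uy)*px + 2*Uy*(px-py))),
        mul_nonneg (mul_nonneg hw (le_of_lt (neg_pos.mpr hs))) (sq_nonneg (py-px)),
        mul_nonneg (mul_nonneg hw (sq_nonneg (py-px))) (sq_nonneg Uy)]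

lemma pair_ineq2 (w Ux Uy px py cx cy : ℝ) (hw : 0 ≤ w) (hpx : 0 ≤ px) (hpy : 0 ≤ py)
    (hcx : 0 ≤ cx) (hcy : 0 ≤ cy) (hxy : px < py → cx = 1) (hyx : py < px → cy = 1) :
    w * (Uy*py - Ux*px)^2 ≤
      2*(w*(Uy - Ux)^2*(max px py)^2) + 2*(w*(py-px)^2*(cx*Ux^2 + cy*Uy^2)) := by
  have h1 : 0 ≤ w*(cy*Uy^2)*(py-px)^2 :=
    mul_nonneg (mul_nonneg hw (mul_nonneg hcy (sq_nonneg _))) (sq_nonneg _)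
  have h1x : 0 ≤ w*(cx*Ux^2)*(py-px)^2 :=
    mul_nonneg (mul_nonneg hw (mul_nonneg hcx (sq_nonneg _))) (sq_nonneg _)
  rcases lt_trichotomy px py with h|h|h
  · rw [max_eq_right h.le, hxy h]
    nlinarith [mul_nonneg hw (sq_nonneg ((Uy-Ux)*py - Ux*(py-px))),
      mul_nonneg hw (mul_nonneg (sq_nonneg (Uy-Ux)) (sq_nonneg py))]
  · subst h
    rw [max_self]
    nlinarith [mul_nonneg hw (mul_nonneg (sq_nonneg (Uy-Ux)) (sq_nonneg px))]
  · rw [max_eq_left h.le, hyx h]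
    nlinarith [mul_nonneg hw (sq_nonneg ((Ux-Uy)*px - Uy*(px-py))),
      mul_nonneg hw (mul_nonneg (sq_nonneg (Uy-Ux)) (sq_nonneg px))]


lemma Tnbr_disj {V₀ : Type*} {w0 : V₀ → V₀ → ℝ} (hlf : ∀ x, {y | 0 < w0 x y}.Finite)
    (x : V₀ × ℤ) :
    Disjoint ((hlf x.1).toFinset.image (fun a => (a, x.2)))
      ({(x.1, x.2 + 1), (x.1, x.2 - 1)} : Finset (V₀ × ℤ)) := by
  classical
  rw [Finset.disjoint_left]
  intro a ha hb
  rw [Finset.mem_image] at ha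
  obtain ⟨b, _, rfl⟩ := ha
  simp only [Finset.mem_insert, Finset.mem_singleton, Prod.mk.injEq] at hb
  rcases hb with ⟨h1, h2⟩ | ⟨h1, h2⟩ <;> omega


set_option maxHeartbeats 2000000 in
/-- Reverse Poincaré inequality for ancient solutions of the heat equation with small
potential on a strip-type graph, with Dirichlet condition outside `W = W₀ × ℤ`. -/
theorem reverse_poincare {V₀ : Type*} (w0 : V₀ → V₀ → ℝ)
    (hsymm : ∀ x y, w0 x y = w0 y x) (hnonneg : ∀ x y, 0 ≤ w0 x y)
    (hlf : ∀ x, {y | 0 < w0 x y}.Finite)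
    (hconn : ∀ x y : V₀, Relation.ReflTransGen (fun a b => 0 < w0 a b) x y)
    (W₀ : Set V₀) (hW₀fin : W₀.Finite) (hW₀ne : W₀.Nonempty) (hW₀proper : W₀ ≠ Set.univ) :
    ∃ ε > (0:ℝ), ∃ C > (0:ℝ),
      ∀ (c : V₀ × ℤ → ℝ) (u : V₀ × ℤ → ℝ → ℝ),
        (∀ x, c x ≤ ε) →
        (∀ x : V₀ × ℤ, x.1 ∈ W₀ → ∀ t ≤ (0:ℝ),
          HasDerivAt (u x) (glap (wProdZ w0) (fun y => u y t) x + c x * u x t) t) →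
        (∀ x : V₀ × ℤ, x.1 ∉ W₀ → ∀ t ≤ (0:ℝ), u x t = 0) →
        ∀ r R : ℕ, 0 < r → r < R →
          Qint w0 u r ≤ C / ((R : ℝ) - (r : ℝ))^2 * (Qint w0 u R - Qint w0 u r) := by
  classical
  obtain ⟨lam, hlam, hpoin⟩ := base_poincare hsymm hnonneg hlf hconn hW₀fin hW₀ne hW₀proper
  obtain ⟨y₀, hy₀⟩ : ∃ y₀, y₀ ∉ W₀ := by
    by_contra h
    push_neg at h
    exact hW₀proper (Set.eq_univ_of_forall h)
  have hmu0 : ∀ x : V₀, 0 < vmu w0 x := by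
    intro x
    by_cases hx : x = y₀
    · obtain ⟨a, ha⟩ := hW₀ne
      exact vmu_pos hnonneg hlf x a (hconn x a) (fun h => hy₀ (hx ▸ h ▸ ha))
    · exact vmu_pos hnonneg hlf x y₀ (hconn x y₀) hx
  refine ⟨lam/32, by linarith, 56/lam, div_pos (by norm_num) hlam, ?_⟩
  intro c u hc hu hdir r R hr hrR
  -- numeric facts
  have hRr1 : (1:ℝ) ≤ (R:ℝ) - r := by
    have : (r:ℝ) + 1 ≤ R := by exact_mod_cast hrR
    linarith
  have hRr0 : (0:ℝ) < (R:ℝ) - r := by linarith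
  have hr2R2 : (0:ℝ) < (R:ℝ)^2 - (r:ℝ)^2 := by
    have h1 : (r:ℝ) < R := by exact_mod_cast hrR
    have h2 : (0:ℝ) ≤ r := Nat.cast_nonneg r
    nlinarith
  have hr20 : -((r:ℝ)^2) ≤ 0 := by nlinarith [sq_nonneg ((r:ℝ))]
  have hR2r2 : -((R:ℝ)^2) ≤ -((r:ℝ)^2) := by nlinarith
  -- the measure
  set mu : V₀ × ℤ → ℝ := vmu (wProdZ w0) with hmudef
  have hmu4 : ∀ x : V₀ × ℤ, mu x = 4 * vmu w0 x.1 := mu_prod_eq hnonneg hlf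
  have hmupos : ∀ x : V₀ × ℤ, 0 < mu x := by
    intro x
    rw [hmu4]
    have := hmu0 x.1
    linarith
  -- finite sets
  set W : Finset V₀ := hW₀fin.toFinset with hWdef
  have hmemW : ∀ a : V₀, a ∈ W ↔ a ∈ W₀ := fun a => Set.Finite.mem_toFinset hW₀fin
  set Wp : Finset V₀ := Wplus hlf hW₀fin with hWpdef
  set Z : ℕ → Finset ℤ := fun ρ => Finset.Icc (-(ρ:ℤ)) ρ with hZdef
  set SS : ℕ → Finset (V₀ × ℤ) := fun ρ => W ×ˢ Z ρ with hSSdef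
  set Zp : Finset ℤ := Finset.Icc (-(R:ℤ)-1) ((R:ℤ)+1) with hZpdef
  set B : Finset (V₀ × ℤ) := Wp ×ˢ Zp with hBdef
  have hSB : ∀ ρ : ℕ, ρ ≤ R → SS ρ ⊆ B := by
    intro ρ hρ
    apply Finset.product_subset_product (W_subset_Wplus hlf hW₀fin)
    intro z hz
    simp only [hZdef, Finset.mem_Icc] at hz
    simp only [hZpdef, Finset.mem_Icc]
    omega
  -- the cutoff
  set ψ : ℤ → ℝ := fun z => max 0 (min 1 (((R:ℝ) - ((|z| : ℤ) : ℝ)) / ((R:ℝ) - r))) with hψdef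
  have hψ0 : ∀ z, 0 ≤ ψ z := fun z => le_max_left 0 _
  have hψ1 : ∀ z, ψ z ≤ 1 := fun z => max_le (by norm_num) (min_le_left 1 _)
  have hψone : ∀ z : ℤ, |z| ≤ (r:ℤ) → ψ z = 1 := by
    intro z hz
    have hz' : ((|z| : ℤ) : ℝ) ≤ (r:ℝ) := by exact_mod_cast hz
    have h1 : (1:ℝ) ≤ ((R:ℝ) - ((|z| : ℤ) : ℝ)) / ((R:ℝ) - r) := by
      rw [le_div_iff₀ hRr0]
      linarith
    simp only [hψdef]
    rw [min_eq_left h1, max_eq_right (by norm_num)]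
  have hψzero : ∀ z : ℤ, (R:ℤ) ≤ |z| → ψ z = 0 := by
    intro z hz
    have hz' : (R:ℝ) ≤ ((|z| : ℤ) : ℝ) := by exact_mod_cast hz
    have h1 : ((R:ℝ) - ((|z| : ℤ) : ℝ)) / ((R:ℝ) - r) ≤ 0 := by
      apply div_nonpos_of_nonpos_of_nonneg <;> linarith
    simp only [hψdef]
    rw [min_eq_right (by linarith), max_eq_left h1]
  have hψlip : ∀ z z' : ℤ, |z - z'| ≤ 1 → |ψ z - ψ z'| ≤ 1/((R:ℝ) - r) := by
    intro z z' hzz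
    have h1 : |ψ z - ψ z'| ≤ |((R:ℝ) - ((|z| : ℤ) : ℝ)) / ((R:ℝ) - r)
        - ((R:ℝ) - ((|z'| : ℤ) : ℝ)) / ((R:ℝ) - r)| := by
      refine le_trans (lip_max_zero _ _) (lip_min_one _ _)
    refine h1.trans ?_
    rw [div_sub_div_same, abs_div, abs_of_pos hRr0]
    gcongr
    have he : ((R:ℝ) - ((|z| : ℤ) : ℝ)) - ((R:ℝ) - ((|z'| : ℤ) : ℝ))
        = (((|z'| - |z| : ℤ)) : ℝ) := by push_cast; ring
    rw [he, ← Int.cast_abs]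
    have hint : |(|z'| - |z| : ℤ)| ≤ 1 :=
      le_trans (abs_abs_sub_abs_le_abs_sub z' z) (by rwa [abs_sub_comm])
    exact_mod_cast hint
  -- the annulus indicator
  set χ : V₀ × ℤ → ℝ := fun x => if ((r:ℤ)+1 ≤ |x.2| ∧ |x.2| ≤ (R:ℤ)) then 1 else 0 with hχdef
  have hχ01 : ∀ x, 0 ≤ χ x ∧ χ x ≤ 1 := by
    intro x
    simp only [hχdef]
    split_ifs <;> norm_num
  -- energies
  set Gf : ℕ → ℝ → ℝ := fun ρ t => ∑ x ∈ SS ρ, (u x t)^2 * mu x with hGfdef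
  set Ff : ℝ → ℝ := fun t => ∑ x ∈ SS R, (u x t)^2 * (ψ x.2)^2 * mu x with hFfdef
  set Af : ℝ → ℝ := fun t => ∑ x ∈ SS R \ SS r, (u x t)^2 * mu x with hAfdef
  set Fd : ℝ → ℝ := fun t => ∑ x ∈ SS R,
    (2 * u x t * (glap (wProdZ w0) (fun y => u y t) x + c x * u x t)) * ((ψ x.2)^2 * mu x)
    with hFddef
  -- u vanishes off W for t ≤ 0
  have hux0 : ∀ x : V₀ × ℤ, x.1 ∉ W → ∀ t ≤ (0:ℝ), u x t = 0 := by
    intro x hx t ht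
    exact hdir x (fun h => hx ((hmemW x.1).mpr h)) t ht
  -- Qint is the integral of Gf
  have hQeq : ∀ ρ : ℕ, Qint w0 u ρ = ∫ t in (-(ρ:ℝ)^2)..(0:ℝ), Gf ρ t := by
    intro ρ
    apply intervalIntegral.integral_congr
    intro t ht
    have ht0 : t ≤ 0 := by
      rw [Set.uIcc_of_le (by nlinarith [sq_nonneg ((ρ:ℝ))] : -(ρ:ℝ)^2 ≤ 0)] at ht
      exact ht.2
    have hsupp : ∀ x : V₀ × ℤ, x ∉ SS ρ →
        (if |x.2| ≤ (ρ:ℤ) then (u x t)^2 * vmu (wProdZ w0) x else 0) = 0 := by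
      intro x hx
      by_cases hz : |x.2| ≤ (ρ:ℤ)
      · rw [if_pos hz]
        have hxW : x.1 ∉ W := by
          intro hW1
          apply hx
          simp only [hSSdef, Finset.mem_product]
          exact ⟨hW1, by simp only [hZdef, Finset.mem_Icc]; exact abs_le.mp hz⟩
        rw [hux0 x hxW t ht0]
        ring
      · rw [if_neg hz]
    calc (∑' x : V₀ × ℤ, if |x.2| ≤ (ρ:ℤ) then (u x t)^2 * vmu (wProdZ w0) x else 0)
        = ∑ x ∈ SS ρ, (if |x.2| ≤ (ρ:ℤ) then (u x t)^2 * vmu (wProdZ w0) x else 0) :=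
          tsum_eq_sum hsupp
      _ = Gf ρ t := by
          apply Finset.sum_congr rfl
          intro x hx
          simp only [hSSdef, Finset.mem_product, hZdef, Finset.mem_Icc] at hx
          rw [if_pos (abs_le.mpr ⟨hx.2.1, hx.2.2⟩)]
  -- continuity of u on (-∞, 0]
  have hucont : ∀ x : V₀ × ℤ, ContinuousOn (u x) (Set.Iic 0) := by
    intro x
    by_cases hx : x.1 ∈ W₀
    · intro t ht
      exact ((hu x hx t ht).continuousAt).continuousWithinAt
    · exact continuousOn_const.congr (fun t ht => hdir x hx t ht)
  have hsqcont : ∀ x : V₀ × ℤ, ContinuousOn (fun t => (u x t)^2) (Set.Iic 0) :=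
    fun x => (hucont x).pow 2
  have hGcont : ∀ ρ : ℕ, ContinuousOn (Gf ρ) (Set.Iic 0) := by
    intro ρ
    apply contOn_sum
    intro x _
    exact (hsqcont x).mul continuousOn_const
  have hFcont : ContinuousOn Ff (Set.Iic 0) := by
    apply contOn_sum
    intro x _
    exact ((hsqcont x).mul continuousOn_const).mul continuousOn_const
  have hAcont : ContinuousOn Af (Set.Iic 0) := by
    apply contOn_sum
    intro x _
    exact (hsqcont x).mul continuousOn_const
  -- glap as a finite sum over B
  have hTB : ∀ x : V₀ × ℤ, x ∈ SS R → Tnbr hlf x ⊆ B := by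
    intro x hx y hy
    simp only [hSSdef, Finset.mem_product] at hx
    simp only [Tnbr, Finset.mem_union, Finset.mem_image, Finset.mem_insert,
      Finset.mem_singleton] at hy
    have hxz := hx.2
    simp only [hZdef, Finset.mem_Icc] at hxz
    simp only [hBdef, Finset.mem_product, hZpdef, Finset.mem_Icc]
    rcases hy with ⟨a, ha, rfl⟩ | hy | hy
    · constructor
      · simp only [Set.Finite.mem_toFinset, Set.mem_setOf_eq] at ha
        exact nbr_subset_Wplus hlf hW₀fin ((hmemW x.1).mp hx.1) ha
      · simp; omega
    · rw [hy]
      exact ⟨W_subset_Wplus hlf hW₀fin hx.1, by simp; omega⟩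
    · rw [hy]
      exact ⟨W_subset_Wplus hlf hW₀fin hx.1, by simp; omega⟩
  have hglapB : ∀ x ∈ SS R, ∀ f : V₀ × ℤ → ℝ,
      glap (wProdZ w0) f x = (∑ y ∈ B, wProdZ w0 x y * (f y - f x)) / mu x := by
    intro x hx f
    have hsupp : ∀ y : V₀ × ℤ, y ∉ B → wProdZ w0 x y * (f y - f x) = 0 := by
      intro y hy
      have : wProdZ w0 x y = 0 := by
        by_contra h
        exact hy (hTB x hx (wProdZ_support hlf x y h))
      rw [this, zero_mul]
    show (∑' y, wProdZ w0 x y * (f y - f x)) / vmu (wProdZ w0) x = _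
    rw [tsum_eq_sum hsupp]
  -- derivative of Ff
  have hFderiv : ∀ t ≤ (0:ℝ), HasDerivAt Ff (Fd t) t := by
    intro t ht
    apply HasDerivAt.fun_sum
    intro x hx
    have hx1 : x.1 ∈ W₀ := by
      simp only [hSSdef, Finset.mem_product] at hx
      exact (hmemW x.1).mp hx.1
    have h1 := hu x hx1 t ht
    have h2 := (h1.pow 2).mul_const ((ψ x.2)^2 * mu x)
    convert h2 using 1
    · rfl
    · funext s
      simp only [Pi.pow_apply]
      ring
    · push_cast
      ring
  -- weight abbreviations
  have hwsym : ∀ x y : V₀ × ℤ, wProdZ w0 x y = wProdZ w0 y x := wProdZ_symm hsymm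
  have hwnn : ∀ x y : V₀ × ℤ, 0 ≤ wProdZ w0 x y := wProdZ_nonneg hnonneg
  -- edges with different cutoff values are vertical
  have hedge : ∀ x y : V₀ × ℤ, wProdZ w0 x y ≠ 0 → ψ x.2 ≠ ψ y.2 →
      x.1 = y.1 ∧ |x.2 - y.2| = 1 := by
    intro x y hw hψne
    by_cases h1 : x.1 = y.1 ∧ |x.2 - y.2| = 1
    · exact h1
    · exfalso
      rw [wProdZ_cases, if_neg h1] at hw
      by_cases h2 : x.2 = y.2 ∧ 0 < w0 x.1 y.1
      · exact hψne (by rw [h2.1])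
      · rw [if_neg h2] at hw
        exact hw rfl
  -- the endpoint with smaller cutoff value lies in the annulus
  have hχout : ∀ x y : V₀ × ℤ, wProdZ w0 x y ≠ 0 → ψ x.2 < ψ y.2 → χ x = 1 := by
    intro x y hw hlt
    obtain ⟨-, habs⟩ := hedge x y hw hlt.ne
    have h1 : ¬ (|x.2| ≤ (r:ℤ)) := by
      intro hle
      rw [hψone x.2 hle] at hlt
      exact absurd (hψ1 y.2) (not_le.mpr hlt)
    have h2 : ¬ ((R:ℤ) ≤ |y.2|) := by
      intro hge
      rw [hψzero y.2 hge] at hlt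
      exact absurd (hψ0 x.2) (not_le.mpr hlt)
    have h3 : |x.2| ≤ |y.2| + 1 := by
      calc |x.2| = |(x.2 - y.2) + y.2| := by ring_nf
        _ ≤ |x.2 - y.2| + |y.2| := abs_add_le _ _
        _ = |y.2| + 1 := by rw [habs]; ring
    simp only [hχdef]
    rw [if_pos (by omega)]
  have hI1 : ∀ (t : ℝ) (x y : V₀ × ℤ),
      -(wProdZ w0 x y * (u y t - u x t) * (u y t * (ψ y.2)^2 - u x t * (ψ x.2)^2)) ≤
        -(1/2) * (wProdZ w0 x y * (u y t - u x t)^2 * (max (ψ x.2) (ψ y.2))^2)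
        + 2 * (wProdZ w0 x y * (ψ y.2 - ψ x.2)^2 * (χ x * (u x t)^2 + χ y * (u y t)^2)) := by
    intro t x y
    by_cases hw : wProdZ w0 x y = 0
    · rw [hw]
      norm_num
    · exact pair_ineq1 _ _ _ _ _ _ _ (hwnn x y) (hψ0 x.2) (hψ0 y.2) (hχ01 x).1 (hχ01 y).1
        (fun h => hχout x y hw h) (fun h => hχout y x (by rw [← hwsym]; exact hw) h)
  have hI2 : ∀ (t : ℝ) (x y : V₀ × ℤ),
      wProdZ w0 x y * (u y t * ψ y.2 - u x t * ψ x.2)^2 ≤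
        2 * (wProdZ w0 x y * (u y t - u x t)^2 * (max (ψ x.2) (ψ y.2))^2)
        + 2 * (wProdZ w0 x y * (ψ y.2 - ψ x.2)^2 * (χ x * (u x t)^2 + χ y * (u y t)^2)) := by
    intro t x y
    by_cases hw : wProdZ w0 x y = 0
    · rw [hw]
      norm_num
    · exact pair_ineq2 _ _ _ _ _ _ _ (hwnn x y) (hψ0 x.2) (hψ0 y.2) (hχ01 x).1 (hχ01 y).1
        (fun h => hχout x y hw h) (fun h => hχout y x (by rw [← hwsym]; exact hw) h)
  -- linear combinations of double sums
  have hlincomb : ∀ (k1 k2 : ℝ) (F G : (V₀ × ℤ) → (V₀ × ℤ) → ℝ),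
      ∑ x ∈ B, ∑ y ∈ B, (k1 * F x y + k2 * G x y)
        = k1 * (∑ x ∈ B, ∑ y ∈ B, F x y) + k2 * (∑ x ∈ B, ∑ y ∈ B, G x y) := by
    intro k1 k2 F G
    rw [Finset.mul_sum, Finset.mul_sum, ← Finset.sum_add_distrib]
    apply Finset.sum_congr rfl
    intro x _
    rw [Finset.mul_sum, Finset.mul_sum, ← Finset.sum_add_distrib]
  -- the Caccioppoli differential inequality
  have hFd_le : ∀ t ≤ (0:ℝ), Fd t ≤ -(lam/16) * Ff t + (5/2) * (1/((R:ℝ)-r))^2 * Af t := by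
    intro t ht
    set PB : ℝ := ∑ x ∈ B, ∑ y ∈ B,
      wProdZ w0 x y * (u y t - u x t) * (u x t * (ψ x.2)^2) with hPBdef
    set SM : ℝ := ∑ x ∈ B, ∑ y ∈ B,
      wProdZ w0 x y * (u y t - u x t)^2 * (max (ψ x.2) (ψ y.2))^2 with hSMdef
    set Sd : ℝ := ∑ x ∈ B, ∑ y ∈ B,
      wProdZ w0 x y * (ψ y.2 - ψ x.2)^2 * (χ x * (u x t)^2 + χ y * (u y t)^2) with hSddef
    set Sv : ℝ := ∑ x ∈ B, ∑ y ∈ B,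
      wProdZ w0 x y * (u y t * ψ y.2 - u x t * ψ x.2)^2 with hSvdef
    set Pg : ℝ := ∑ x ∈ SS R,
      u x t * glap (wProdZ w0) (fun y => u y t) x * ((ψ x.2)^2 * mu x) with hPgdef
    set Cg : ℝ := ∑ x ∈ SS R, c x * ((u x t)^2 * (ψ x.2)^2 * mu x) with hCgdef
    -- (s1) split Fd
    have hs1 : Fd t = 2 * Pg + 2 * Cg := by
      show (∑ x ∈ SS R, 2 * u x t * (glap (wProdZ w0) (fun y => u y t) x + c x * u x t)
          * ((ψ x.2)^2 * mu x)) = 2 * Pg + 2 * Cg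
      rw [hPgdef, hCgdef, Finset.mul_sum, Finset.mul_sum, ← Finset.sum_add_distrib]
      apply Finset.sum_congr rfl
      intro x _
      ring
    -- (s2) potential term
    have hs2 : Cg ≤ (lam/32) * Ff t := by
      have h1 : (lam/32) * Ff t = ∑ x ∈ SS R, (lam/32) * ((u x t)^2 * (ψ x.2)^2 * mu x) := by
        show (lam/32) * (∑ x ∈ SS R, (u x t)^2 * (ψ x.2)^2 * mu x) = _
        rw [Finset.mul_sum]
      rw [h1, hCgdef]
      apply Finset.sum_le_sum
      intro x _
      have hnn : (0:ℝ) ≤ (u x t)^2 * (ψ x.2)^2 * mu x :=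
        mul_nonneg (mul_nonneg (sq_nonneg _) (sq_nonneg _)) (hmupos x).le
      exact mul_le_mul_of_nonneg_right (hc x) hnn
    -- (s3) Pg as a double sum
    have hs3 : Pg = PB := by
      have hterm : ∀ x ∈ SS R,
          u x t * glap (wProdZ w0) (fun y => u y t) x * ((ψ x.2)^2 * mu x)
            = ∑ y ∈ B, wProdZ w0 x y * (u y t - u x t) * (u x t * (ψ x.2)^2) := by
        intro x hx
        rw [hglapB x hx]
        have hne := (hmupos x).ne'
        have h2 : u x t * ((∑ y ∈ B, wProdZ w0 x y * (u y t - u x t)) / mu x)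
            * ((ψ x.2)^2 * mu x)
            = (∑ y ∈ B, wProdZ w0 x y * (u y t - u x t)) * (u x t * (ψ x.2)^2) := by
          field_simp
        rw [h2, Finset.sum_mul]
      rw [hPgdef, Finset.sum_congr rfl hterm, hPBdef]
      apply Finset.sum_subset (hSB R le_rfl)
      intro x hxB hxS
      apply Finset.sum_eq_zero
      intro y _
      have hz : u x t * (ψ x.2)^2 = 0 := by
        by_cases hx1 : x.1 ∈ W
        · have hx2 : x.2 ∉ Z R := by
            intro h
            exact hxS (by simp only [hSSdef]; exact Finset.mem_product.mpr ⟨hx1, h⟩)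
          simp only [hZdef, Finset.mem_Icc] at hx2
          push_neg at hx2
          have habs : (R:ℤ) ≤ |x.2| := by
            apply le_abs.mpr
            omega
          rw [hψzero _ habs]
          ring
        · rw [hux0 x hx1 t ht]
          ring
      rw [hz, mul_zero]
    -- (s4) symmetrization
    have hs4 : 2 * PB = ∑ x ∈ B, ∑ y ∈ B,
        -(wProdZ w0 x y * (u y t - u x t) * (u y t * (ψ y.2)^2 - u x t * (ψ x.2)^2)) := by
      have hcomm : PB = ∑ x ∈ B, ∑ y ∈ B,
          wProdZ w0 y x * (u x t - u y t) * (u y t * (ψ y.2)^2) := by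
        rw [hPBdef]
        exact Finset.sum_comm
      calc 2 * PB = PB + PB := by ring
        _ = (∑ x ∈ B, ∑ y ∈ B, wProdZ w0 x y * (u y t - u x t) * (u x t * (ψ x.2)^2))
            + (∑ x ∈ B, ∑ y ∈ B, wProdZ w0 y x * (u x t - u y t) * (u y t * (ψ y.2)^2)) := by
            rw [← hPBdef, ← hcomm]
        _ = ∑ x ∈ B, ((∑ y ∈ B, wProdZ w0 x y * (u y t - u x t) * (u x t * (ψ x.2)^2))
            + (∑ y ∈ B, wProdZ w0 y x * (u x t - u y t) * (u y t * (ψ y.2)^2))) := by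
            rw [← Finset.sum_add_distrib]
        _ = ∑ x ∈ B, ∑ y ∈ B,
            -(wProdZ w0 x y * (u y t - u x t) * (u y t * (ψ y.2)^2 - u x t * (ψ x.2)^2)) := by
            apply Finset.sum_congr rfl
            intro x _
            rw [← Finset.sum_add_distrib]
            apply Finset.sum_congr rfl
            intro y _
            rw [hwsym y x]
            ring
    -- (s5) sum the first pointwise inequality
    have hs5 : 2 * PB ≤ -(1/2) * SM + 2 * Sd := by
      rw [hs4, hSMdef, hSddef, ← hlincomb]
      apply Finset.sum_le_sum
      intro x _
      apply Finset.sum_le_sum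
      intro y _
      exact hI1 t x y
    -- (s6) sum the second pointwise inequality
    have hs6 : Sv ≤ 2 * SM + 2 * Sd := by
      rw [hSvdef, hSMdef, hSddef, ← hlincomb]
      apply Finset.sum_le_sum
      intro x _
      apply Finset.sum_le_sum
      intro y _
      exact hI2 t x y
    -- (s7) Poincare inequality over B
    have hZRZp : Z R ⊆ Zp := by
      intro z hz
      simp only [hZdef, Finset.mem_Icc] at hz
      simp only [hZpdef, Finset.mem_Icc]
      omega
    have hFfext : Ff t = ∑ x ∈ W ×ˢ Zp, (u x t)^2 * (ψ x.2)^2 * mu x := by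
      show (∑ x ∈ SS R, (u x t)^2 * (ψ x.2)^2 * mu x) = _
      apply Finset.sum_subset
      · simp only [hSSdef]
        exact Finset.product_subset_product (Finset.Subset.refl W) hZRZp
      · intro x hx hxs
        have hx1 : x.1 ∈ W := (Finset.mem_product.mp hx).1
        have hx2 : x.2 ∉ Z R := by
          intro h
          exact hxs (by simp only [hSSdef]; exact Finset.mem_product.mpr ⟨hx1, h⟩)
        simp only [hZdef, Finset.mem_Icc] at hx2
        push_neg at hx2
        have habs : (R:ℤ) ≤ |x.2| := by
          apply le_abs.mpr
          omega
        rw [hψzero _ habs]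
        ring
    have hs7 : (lam/2) * Ff t ≤ Sv := by
      -- per-slice Poincare
      have hslice : ∀ z : ℤ, lam * ∑ a ∈ W, (u (a, z) t * ψ z)^2 * vmu w0 a ≤
          ∑ a ∈ Wp, ∑ b ∈ Wp, w0 a b * ((u (b, z) t * ψ z) - (u (a, z) t * ψ z))^2 := by
        intro z
        exact hpoin (fun a => u (a, z) t * ψ z)
          (fun a ha => by show u (a, z) t * ψ z = 0; rw [hdir (a, z) ha t ht]; ring)
      -- sum over slices
      have hsum : lam * ∑ z ∈ Zp, ∑ a ∈ W, (u (a, z) t * ψ z)^2 * vmu w0 a ≤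
          ∑ z ∈ Zp, ∑ a ∈ Wp, ∑ b ∈ Wp, w0 a b * ((u (b, z) t * ψ z) - (u (a, z) t * ψ z))^2 := by
        rw [Finset.mul_sum]
        exact Finset.sum_le_sum (fun z _ => hslice z)
      -- LHS is a quarter of Ff
      have hLHS : ∑ z ∈ Zp, ∑ a ∈ W, (u (a, z) t * ψ z)^2 * vmu w0 a = (1/4) * Ff t := by
        conv_rhs => rw [hFfext, Finset.sum_product, Finset.sum_comm]
        rw [Finset.mul_sum]
        apply Finset.sum_congr rfl
        intro z _
        rw [Finset.mul_sum]
        apply Finset.sum_congr rfl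
        intro a _
        show (u (a, z) t * ψ z)^2 * vmu w0 a = 1/4 * ((u (a, z) t)^2 * (ψ z)^2 * mu (a, z))
        rw [show mu (a, z) = 4 * vmu w0 a from hmu4 (a, z)]
        ring
      -- RHS is at most half of Sv
      have hRHS : ∑ z ∈ Zp, ∑ a ∈ Wp, ∑ b ∈ Wp,
          w0 a b * ((u (b, z) t * ψ z) - (u (a, z) t * ψ z))^2 ≤ (1/2) * Sv := by
        have hSv4 : Sv = ∑ a ∈ Wp, ∑ z ∈ Zp, ∑ b ∈ Wp, ∑ z' ∈ Zp,
            wProdZ w0 (a, z) (b, z') * (u (b, z') t * ψ z' - u (a, z) t * ψ z)^2 := by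
          rw [hSvdef, hBdef]
          rw [Finset.sum_product]
          apply Finset.sum_congr rfl
          intro a _
          apply Finset.sum_congr rfl
          intro z _
          rw [Finset.sum_product]
        have hdrop : ∀ a ∈ Wp, ∀ z ∈ Zp, ∀ b ∈ Wp,
            wProdZ w0 (a, z) (b, z) * (u (b, z) t * ψ z - u (a, z) t * ψ z)^2 ≤
            ∑ z' ∈ Zp, wProdZ w0 (a, z) (b, z') * (u (b, z') t * ψ z' - u (a, z) t * ψ z)^2 := by
          intro a _ z hz b _
          exact Finset.single_le_sum
            (f := fun z' => wProdZ w0 (a, z) (b, z') * (u (b, z') t * ψ z' - u (a, z) t * ψ z)^2)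
            (fun z' _ => mul_nonneg (hwnn _ _) (sq_nonneg _)) hz
        have hmain : 2 * (∑ z ∈ Zp, ∑ a ∈ Wp, ∑ b ∈ Wp,
            w0 a b * ((u (b, z) t * ψ z) - (u (a, z) t * ψ z))^2) ≤ Sv := by
          rw [hSv4]
          have hstep : ∑ z ∈ Zp, ∑ a ∈ Wp, ∑ b ∈ Wp,
              2 * (w0 a b * ((u (b, z) t * ψ z) - (u (a, z) t * ψ z))^2)
              ≤ ∑ a ∈ Wp, ∑ z ∈ Zp, ∑ b ∈ Wp, ∑ z' ∈ Zp,
              wProdZ w0 (a, z) (b, z') * (u (b, z') t * ψ z' - u (a, z) t * ψ z)^2 := by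
            rw [Finset.sum_comm]
            apply Finset.sum_le_sum
            intro a ha
            apply Finset.sum_le_sum
            intro z hz
            apply Finset.sum_le_sum
            intro b hb
            have heq : 2 * (w0 a b * ((u (b, z) t * ψ z) - (u (a, z) t * ψ z))^2)
                = wProdZ w0 (a, z) (b, z) * (u (b, z) t * ψ z - u (a, z) t * ψ z)^2 := by
              rw [wProdZ_horiz hnonneg a b z]
              ring
            rw [heq]
            exact hdrop a ha z hz b hb
          calc 2 * (∑ z ∈ Zp, ∑ a ∈ Wp, ∑ b ∈ Wp,
              w0 a b * ((u (b, z) t * ψ z) - (u (a, z) t * ψ z))^2)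
              = ∑ z ∈ Zp, ∑ a ∈ Wp, ∑ b ∈ Wp,
                2 * (w0 a b * ((u (b, z) t * ψ z) - (u (a, z) t * ψ z))^2) := by
                rw [Finset.mul_sum]
                apply Finset.sum_congr rfl
                intro z _
                rw [Finset.mul_sum]
                apply Finset.sum_congr rfl
                intro a _
                rw [Finset.mul_sum]
            _ ≤ _ := hstep
        linarith
      calc (lam/2) * Ff t = 2 * (lam * ((1/4) * Ff t)) := by ring
        _ = 2 * (lam * (∑ z ∈ Zp, ∑ a ∈ W, (u (a, z) t * ψ z)^2 * vmu w0 a)) := by rw [hLHS]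
        _ ≤ 2 * ((1/2) * Sv) := by
            have := le_trans hsum hRHS
            linarith
        _ = Sv := by ring
    -- (s8) bound on Sd
    have hinner : ∀ x : V₀ × ℤ, ∑ y ∈ B, wProdZ w0 x y * (ψ y.2 - ψ x.2)^2
        ≤ 2 * vmu w0 x.1 * (1/((R:ℝ)-r))^2 := by
      intro x
      have hzero : ∀ y ∈ B, y ∉ B ∩ Tnbr hlf x →
          wProdZ w0 x y * (ψ y.2 - ψ x.2)^2 = 0 := by
        intro y hyB hyn
        have hnT : y ∉ Tnbr hlf x := fun h => hyn (Finset.mem_inter.mpr ⟨hyB, h⟩)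
        have : wProdZ w0 x y = 0 := by
          by_contra h
          exact hnT (wProdZ_support hlf x y h)
        rw [this, zero_mul]
      rw [← Finset.sum_subset (Finset.inter_subset_left) hzero]
      calc ∑ y ∈ B ∩ Tnbr hlf x, wProdZ w0 x y * (ψ y.2 - ψ x.2)^2
          ≤ ∑ y ∈ Tnbr hlf x, wProdZ w0 x y * (ψ y.2 - ψ x.2)^2 :=
            Finset.sum_le_sum_of_subset_of_nonneg (Finset.inter_subset_right)
              (fun y _ _ => mul_nonneg (hwnn x y) (sq_nonneg _))
        _ ≤ 2 * vmu w0 x.1 * (1/((R:ℝ)-r))^2 := by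
            show (∑ y ∈ ((hlf x.1).toFinset.image (fun a => (a, x.2)))
              ∪ {(x.1, x.2 + 1), (x.1, x.2 - 1)}, wProdZ w0 x y * (ψ y.2 - ψ x.2)^2) ≤ _
            rw [Finset.sum_union (Tnbr_disj hlf x)]
            have him : ∑ y ∈ (hlf x.1).toFinset.image (fun a => (a, x.2)),
                wProdZ w0 x y * (ψ y.2 - ψ x.2)^2 = 0 := by
              apply Finset.sum_eq_zero
              intro y hy
              rw [Finset.mem_image] at hy
              obtain ⟨a, _, rfl⟩ := hy
              show wProdZ w0 x (a, x.2) * (ψ x.2 - ψ x.2)^2 = 0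
              rw [sub_self]
              ring
            have hδbd : ∀ z' : ℤ, |x.2 - z'| = 1 → (ψ z' - ψ x.2)^2 ≤ (1/((R:ℝ)-r))^2 := by
              intro z' hz'
              rw [← sq_abs]
              apply pow_le_pow_left₀ (abs_nonneg _) _ 2
              apply hψlip z' x.2
              rw [abs_sub_comm] at hz'
              rw [hz']
            have habs1 : |x.2 - (x.2 + 1)| = 1 := by
              rw [show x.2 - (x.2 + 1) = -1 by ring]
              simp
            have habs2 : |x.2 - (x.2 - 1)| = 1 := by
              rw [show x.2 - (x.2 - 1) = 1 by ring]
              simp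
            have hpair : ∑ y ∈ ({(x.1, x.2 + 1), (x.1, x.2 - 1)} : Finset (V₀ × ℤ)),
                wProdZ w0 x y * (ψ y.2 - ψ x.2)^2 ≤ 2 * vmu w0 x.1 * (1/((R:ℝ)-r))^2 := by
              rw [Finset.sum_pair (by
                intro hcon
                rw [Prod.mk.injEq] at hcon
                omega)]
              have h1 : wProdZ w0 x (x.1, x.2 + 1) * (ψ (x.2 + 1) - ψ x.2)^2
                  ≤ vmu w0 x.1 * (1/((R:ℝ)-r))^2 := by
                rw [show wProdZ w0 x (x.1, x.2 + 1) = vmu w0 x.1 by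
                  rw [wProdZ_cases, if_pos ⟨rfl, habs1⟩]]
                exact mul_le_mul_of_nonneg_left (hδbd (x.2 + 1) habs1) (vmu_nonneg hnonneg x.1)
              have h2 : wProdZ w0 x (x.1, x.2 - 1) * (ψ (x.2 - 1) - ψ x.2)^2
                  ≤ vmu w0 x.1 * (1/((R:ℝ)-r))^2 := by
                rw [show wProdZ w0 x (x.1, x.2 - 1) = vmu w0 x.1 by
                  rw [wProdZ_cases, if_pos ⟨rfl, habs2⟩]]
                exact mul_le_mul_of_nonneg_left (hδbd (x.2 - 1) habs2) (vmu_nonneg hnonneg x.1)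
              show wProdZ w0 x (x.1, x.2 + 1) * (ψ (x.2 + 1) - ψ x.2)^2
                + wProdZ w0 x (x.1, x.2 - 1) * (ψ (x.2 - 1) - ψ x.2)^2 ≤ _
              linarith
            rw [him, zero_add]
            exact hpair
    -- the annulus sum
    have hchiA : ∑ x ∈ B, χ x * ((u x t)^2 * mu x) = Af t := by
      have h1 : ∀ x ∈ B, χ x * ((u x t)^2 * mu x)
          = if ((r:ℤ)+1 ≤ |x.2| ∧ |x.2| ≤ (R:ℤ)) then (u x t)^2 * mu x else 0 := by
        intro x _
        simp only [hχdef]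
        split_ifs <;> ring
      rw [Finset.sum_congr rfl h1, ← Finset.sum_filter]
      have hsub : SS R \ SS r ⊆ B.filter (fun x => (r:ℤ)+1 ≤ |x.2| ∧ |x.2| ≤ (R:ℤ)) := by
        intro x hx
        rw [Finset.mem_sdiff] at hx
        obtain ⟨hxR, hxr⟩ := hx
        simp only [hSSdef, Finset.mem_product, hZdef, Finset.mem_Icc] at hxR hxr
        push_neg at hxr
        rw [Finset.mem_filter]
        refine ⟨?_, ?_, abs_le.mpr ⟨hxR.2.1, hxR.2.2⟩⟩
        · simp only [hBdef, Finset.mem_product, hZpdef, Finset.mem_Icc]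
          exact ⟨W_subset_Wplus hlf hW₀fin hxR.1, by omega⟩
        · have h3 := hxr hxR.1
          apply le_abs.mpr
          rcases le_or_gt (-(r:ℤ)) x.2 with h4 | h4
          · left; have := h3 h4; omega
          · right; omega
      have hvan : ∀ x ∈ B.filter (fun x => (r:ℤ)+1 ≤ |x.2| ∧ |x.2| ≤ (R:ℤ)),
          x ∉ SS R \ SS r → (u x t)^2 * mu x = 0 := by
        intro x hx hxn
        rw [Finset.mem_filter] at hx
        obtain ⟨hxB, hP1, hP2⟩ := hx
        have hzR : x.2 ∈ Z R := by
          simp only [hZdef, Finset.mem_Icc]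
          exact abs_le.mp hP2
        have hnr : x ∉ SS r := by
          intro hmem
          simp only [hSSdef, Finset.mem_product, hZdef, Finset.mem_Icc] at hmem
          have : |x.2| ≤ (r:ℤ) := abs_le.mpr ⟨hmem.2.1, hmem.2.2⟩
          omega
        have hnR : x ∉ SS R := by
          intro hmem
          exact hxn (Finset.mem_sdiff.mpr ⟨hmem, hnr⟩)
        have hx1 : x.1 ∉ W := by
          intro h
          exact hnR (by simp only [hSSdef]; exact Finset.mem_product.mpr ⟨h, hzR⟩)
        rw [hux0 x hx1 t ht]
        ring
      show _ = ∑ x ∈ SS R \ SS r, (u x t)^2 * mu x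
      exact (Finset.sum_subset hsub hvan).symm
    -- bound on Sd
    have hsd : Sd ≤ (1/((R:ℝ)-r))^2 * Af t := by
      have hsplit : Sd = (∑ x ∈ B, ∑ y ∈ B,
            wProdZ w0 x y * (ψ y.2 - ψ x.2)^2 * (χ x * (u x t)^2))
          + (∑ x ∈ B, ∑ y ∈ B,
            wProdZ w0 x y * (ψ y.2 - ψ x.2)^2 * (χ y * (u y t)^2)) := by
        rw [hSddef, ← Finset.sum_add_distrib]
        apply Finset.sum_congr rfl
        intro x _
        rw [← Finset.sum_add_distrib]
        apply Finset.sum_congr rfl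
        intro y _
        ring
      have hS21 : (∑ x ∈ B, ∑ y ∈ B,
            wProdZ w0 x y * (ψ y.2 - ψ x.2)^2 * (χ y * (u y t)^2))
          = (∑ x ∈ B, ∑ y ∈ B,
            wProdZ w0 x y * (ψ y.2 - ψ x.2)^2 * (χ x * (u x t)^2)) := by
        rw [Finset.sum_comm]
        apply Finset.sum_congr rfl
        intro x _
        apply Finset.sum_congr rfl
        intro y _
        rw [hwsym y x]
        ring
      have hS1 : (∑ x ∈ B, ∑ y ∈ B,
            wProdZ w0 x y * (ψ y.2 - ψ x.2)^2 * (χ x * (u x t)^2))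
          ≤ (1/((R:ℝ)-r))^2 * (1/2) * Af t := by
        have hstep : ∀ x ∈ B, ∑ y ∈ B, wProdZ w0 x y * (ψ y.2 - ψ x.2)^2 * (χ x * (u x t)^2)
            ≤ (1/((R:ℝ)-r))^2 * (1/2) * (χ x * ((u x t)^2 * mu x)) := by
          intro x _
          rw [← Finset.sum_mul]
          have h2 : (∑ y ∈ B, wProdZ w0 x y * (ψ y.2 - ψ x.2)^2) * (χ x * (u x t)^2)
              ≤ (2 * vmu w0 x.1 * (1/((R:ℝ)-r))^2) * (χ x * (u x t)^2) :=
            mul_le_mul_of_nonneg_right (hinner x) (mul_nonneg (hχ01 x).1 (sq_nonneg _))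
          refine h2.trans (le_of_eq ?_)
          rw [show mu x = 4 * vmu w0 x.1 from hmu4 x]
          ring
        calc (∑ x ∈ B, ∑ y ∈ B, wProdZ w0 x y * (ψ y.2 - ψ x.2)^2 * (χ x * (u x t)^2))
            ≤ ∑ x ∈ B, (1/((R:ℝ)-r))^2 * (1/2) * (χ x * ((u x t)^2 * mu x)) :=
              Finset.sum_le_sum hstep
          _ = (1/((R:ℝ)-r))^2 * (1/2) * (∑ x ∈ B, χ x * ((u x t)^2 * mu x)) := by
              rw [← Finset.mul_sum]
          _ = (1/((R:ℝ)-r))^2 * (1/2) * Af t := by rw [hchiA]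
      linarith
    -- final assembly at fixed time
    linarith [hs1, hs2, hs3, hs5, hs6, hs7, hsd]
  -- ===== time integration =====
  have hInt : ∀ (f : ℝ → ℝ), ContinuousOn f (Set.Iic 0) → ∀ a b : ℝ, a ≤ 0 → b ≤ 0 →
      IntervalIntegrable f MeasureTheory.volume a b := by
    intro f hf a b ha hb
    apply ContinuousOn.intervalIntegrable
    apply hf.mono
    intro s hs
    rw [Set.mem_uIcc] at hs
    rcases hs with ⟨h1, h2⟩ | ⟨h1, h2⟩
    · exact Set.mem_Iic.mpr (le_trans h2 hb)
    · exact Set.mem_Iic.mpr (le_trans h2 ha)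
  have hFdcont : ContinuousOn Fd (Set.Iic 0) := by
    apply contOn_sum
    intro x hx
    have hgl : ContinuousOn (fun t => glap (wProdZ w0) (fun y => u y t) x) (Set.Iic 0) := by
      apply ContinuousOn.congr
        ((contOn_sum B (fun y t => wProdZ w0 x y * (u y t - u x t)) (Set.Iic 0)
          (fun y _ => continuousOn_const.mul ((hucont y).sub (hucont x)))).div_const (mu x))
      intro t _
      exact hglapB x hx (fun y => u y t)
    exact ((continuousOn_const.mul (hucont x)).mul
      (hgl.add (continuousOn_const.mul (hucont x)))).mul continuousOn_const
  -- pointwise comparisons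
  have hFf0 : ∀ τ, 0 ≤ Ff τ := by
    intro τ
    apply Finset.sum_nonneg
    intro x _
    exact mul_nonneg (mul_nonneg (sq_nonneg _) (sq_nonneg _)) (hmupos x).le
  have hAf0 : ∀ τ, 0 ≤ Af τ := by
    intro τ
    apply Finset.sum_nonneg
    intro x _
    exact mul_nonneg (sq_nonneg _) (hmupos x).le
  have hGf0 : ∀ (ρ : ℕ) τ, 0 ≤ Gf ρ τ := by
    intro ρ τ
    apply Finset.sum_nonneg
    intro x _
    exact mul_nonneg (sq_nonneg _) (hmupos x).le
  have hSSsub : SS r ⊆ SS R := by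
    simp only [hSSdef]
    apply Finset.product_subset_product (Finset.Subset.refl W)
    intro z hz
    simp only [hZdef, Finset.mem_Icc] at hz ⊢
    omega
  have hFfleG : ∀ τ, Ff τ ≤ Gf R τ := by
    intro τ
    apply Finset.sum_le_sum
    intro x _
    have h1 : (ψ x.2)^2 ≤ 1 := by
      rw [← one_pow 2]
      exact pow_le_pow_left₀ (hψ0 x.2) (hψ1 x.2) 2
    nlinarith [sq_nonneg (u x τ), (hmupos x).le, mul_nonneg (sq_nonneg (u x τ)) (hmupos x).le]
  have hAfleG : ∀ τ, Af τ ≤ Gf R τ := by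
    intro τ
    apply Finset.sum_le_sum_of_subset_of_nonneg (Finset.sdiff_subset)
    intro x _ _
    exact mul_nonneg (sq_nonneg _) (hmupos x).le
  have hGrleF : ∀ τ, Gf r τ ≤ Ff τ := by
    intro τ
    have h1 : Gf r τ = ∑ x ∈ SS r, (u x τ)^2 * (ψ x.2)^2 * mu x := by
      apply Finset.sum_congr rfl
      intro x hx
      have hx2 : |x.2| ≤ (r:ℤ) := by
        simp only [hSSdef, Finset.mem_product, hZdef, Finset.mem_Icc] at hx
        exact abs_le.mpr ⟨hx.2.1, hx.2.2⟩
      rw [hψone x.2 hx2]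
      ring
    rw [h1]
    apply Finset.sum_le_sum_of_subset_of_nonneg hSSsub
    intro x _ _
    exact mul_nonneg (mul_nonneg (sq_nonneg _) (sq_nonneg _)) (hmupos x).le
  have hGsub : ∀ τ, Af τ = Gf R τ - Gf r τ := by
    intro τ
    have := Finset.sum_sdiff (f := fun x => (u x τ)^2 * mu x) hSSsub
    show (∑ x ∈ SS R \ SS r, (u x τ)^2 * mu x) = _
    have h2 : Gf R τ = ∑ x ∈ SS R, (u x τ)^2 * mu x := rfl
    have h3 : Gf r τ = ∑ x ∈ SS r, (u x τ)^2 * mu x := rfl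
    rw [h2, h3]
    linarith [this]
  have hR20 : -((R:ℝ)^2) ≤ 0 := by nlinarith [sq_nonneg ((R:ℝ))]
  set J : ℝ := ∫ τ in (-(r:ℝ)^2)..(0:ℝ), Ff τ with hJdef
  set IA : ℝ := ∫ τ in (-(R:ℝ)^2)..(0:ℝ), Af τ with hIAdef
  -- key estimate for each time s in the early window
  have hkey : ∀ s ∈ Set.Icc (-(R:ℝ)^2) (-(r:ℝ)^2),
      (lam/16) * J ≤ Ff s + ((5/2) * (1/((R:ℝ)-r))^2) * IA := by
    rintro s ⟨hs1, hs2⟩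
    have hs0 : s ≤ 0 := le_trans hs2 hr20
    have hftc : ∫ τ in s..0, Fd τ = Ff 0 - Ff s := by
      apply intervalIntegral.integral_eq_sub_of_hasDerivAt
      · intro τ hτ
        rw [Set.uIcc_of_le hs0] at hτ
        exact hFderiv τ hτ.2
      · exact hInt Fd hFdcont s 0 hs0 le_rfl
    have hcomb : ContinuousOn (fun τ => -(lam/16) * Ff τ + (5/2) * (1/((R:ℝ)-r))^2 * Af τ)
        (Set.Iic 0) := (continuousOn_const.mul hFcont).add (continuousOn_const.mul hAcont)
    have hmono : ∫ τ in s..0, Fd τ ≤ ∫ τ in s..0,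
        (-(lam/16) * Ff τ + (5/2) * (1/((R:ℝ)-r))^2 * Af τ) := by
      apply intervalIntegral.integral_mono_on hs0
        (hInt Fd hFdcont s 0 hs0 le_rfl) (hInt _ hcomb s 0 hs0 le_rfl)
      intro τ hτ
      exact hFd_le τ hτ.2
    have hsplitint : ∫ τ in s..0, (-(lam/16) * Ff τ + (5/2) * (1/((R:ℝ)-r))^2 * Af τ)
        = -(lam/16) * (∫ τ in s..0, Ff τ)
          + (5/2) * (1/((R:ℝ)-r))^2 * (∫ τ in s..0, Af τ) := by
      rw [intervalIntegral.integral_add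
        (hInt (fun τ => -(lam/16) * Ff τ) (continuousOn_const.mul hFcont) s 0 hs0 le_rfl)
        (hInt (fun τ => (5/2) * (1/((R:ℝ)-r))^2 * Af τ) (continuousOn_const.mul hAcont) s 0 hs0 le_rfl),
        intervalIntegral.integral_const_mul, intervalIntegral.integral_const_mul]
    have hJle : J ≤ ∫ τ in s..0, Ff τ := by
      have hsplit2 : ∫ τ in s..0, Ff τ = (∫ τ in s..(-(r:ℝ)^2), Ff τ) + J := by
        rw [hJdef]
        exact (intervalIntegral.integral_add_adjacent_intervals
          (hInt Ff hFcont s _ hs0 hr20) (hInt Ff hFcont _ 0 hr20 le_rfl)).symm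
      have hnn : 0 ≤ ∫ τ in s..(-(r:ℝ)^2), Ff τ :=
        intervalIntegral.integral_nonneg hs2 (fun τ _ => hFf0 τ)
      linarith
    have hAle : ∫ τ in s..0, Af τ ≤ IA := by
      have hsplit3 : IA = (∫ τ in (-(R:ℝ)^2)..s, Af τ) + ∫ τ in s..0, Af τ := by
        rw [hIAdef]
        exact (intervalIntegral.integral_add_adjacent_intervals
          (hInt Af hAcont _ s hR20 hs0) (hInt Af hAcont s 0 hs0 le_rfl)).symm
      have hnn : 0 ≤ ∫ τ in (-(R:ℝ)^2)..s, Af τ :=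
        intervalIntegral.integral_nonneg hs1 (fun τ _ => hAf0 τ)
      linarith
    have hM'nn : (0:ℝ) ≤ (5/2) * (1/((R:ℝ)-r))^2 := by positivity
    have hκ : (0:ℝ) ≤ lam/16 := by linarith
    have hz1 := mul_le_mul_of_nonneg_left hJle hκ
    have hz2 := mul_le_mul_of_nonneg_left hAle hM'nn
    have hF00 := hFf0 0
    linarith [hftc, hmono, hsplitint, hz1, hz2]
  -- integrate the key estimate in s
  have havg : ((R:ℝ)^2 - (r:ℝ)^2) * ((lam/16) * J)
      ≤ (∫ s in (-(R:ℝ)^2)..(-(r:ℝ)^2), Ff s)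
        + ((R:ℝ)^2 - (r:ℝ)^2) * (((5/2) * (1/((R:ℝ)-r))^2) * IA) := by
    have h1 : ∫ s in (-(R:ℝ)^2)..(-(r:ℝ)^2), ((lam/16) * J) 
        = ((R:ℝ)^2 - (r:ℝ)^2) * ((lam/16) * J) := by
      rw [intervalIntegral.integral_const, smul_eq_mul]
      ring_nf
    have h2 : ∫ s in (-(R:ℝ)^2)..(-(r:ℝ)^2),
        (Ff s + ((5/2) * (1/((R:ℝ)-r))^2) * IA)
        = (∫ s in (-(R:ℝ)^2)..(-(r:ℝ)^2), Ff s)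
          + ((R:ℝ)^2 - (r:ℝ)^2) * (((5/2) * (1/((R:ℝ)-r))^2) * IA) := by
      rw [intervalIntegral.integral_add (hInt Ff hFcont _ _ hR20 hr20)
        intervalIntegrable_const, intervalIntegral.integral_const, smul_eq_mul]
      ring_nf
    rw [← h1, ← h2]
    exact intervalIntegral.integral_mono_on hR2r2
      intervalIntegrable_const
      ((hInt Ff hFcont _ _ hR20 hr20).add intervalIntegrable_const)
      hkey
  -- decomposition of the energy difference
  have hGRsplit : ∫ t in (-(R:ℝ)^2)..(0:ℝ), Gf R t
      = (∫ s in (-(R:ℝ)^2)..(-(r:ℝ)^2), Gf R s) + ∫ s in (-(r:ℝ)^2)..(0:ℝ), Gf R s :=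
    (intervalIntegral.integral_add_adjacent_intervals
      (hInt _ (hGcont R) _ _ hR20 hr20) (hInt _ (hGcont R) _ 0 hr20 le_rfl)).symm
  have hGdiff : (∫ s in (-(r:ℝ)^2)..(0:ℝ), Gf R s) - (∫ s in (-(r:ℝ)^2)..(0:ℝ), Gf r s)
      = ∫ τ in (-(r:ℝ)^2)..(0:ℝ), Af τ := by
    rw [← intervalIntegral.integral_sub (hInt _ (hGcont R) _ 0 hr20 le_rfl)
      (hInt _ (hGcont r) _ 0 hr20 le_rfl)]
    apply intervalIntegral.integral_congr
    intro τ _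
    exact (hGsub τ).symm
  have hD : Qint w0 u R - Qint w0 u r
      = (∫ s in (-(R:ℝ)^2)..(-(r:ℝ)^2), Gf R s) + ∫ τ in (-(r:ℝ)^2)..(0:ℝ), Af τ := by
    rw [hQeq R, hQeq r, hGRsplit]
    linarith [hGdiff]
  have hGpart0 : 0 ≤ ∫ s in (-(R:ℝ)^2)..(-(r:ℝ)^2), Gf R s :=
    intervalIntegral.integral_nonneg hR2r2 (fun s _ => hGf0 R s)
  have hApart0 : 0 ≤ ∫ τ in (-(r:ℝ)^2)..(0:ℝ), Af τ :=
    intervalIntegral.integral_nonneg hr20 (fun τ _ => hAf0 τ)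
  have hD0 : 0 ≤ Qint w0 u R - Qint w0 u r := by
    rw [hD]
    linarith
  have hFfGf : ∫ s in (-(R:ℝ)^2)..(-(r:ℝ)^2), Ff s ≤ ∫ s in (-(R:ℝ)^2)..(-(r:ℝ)^2), Gf R s :=
    intervalIntegral.integral_mono_on hR2r2 (hInt Ff hFcont _ _ hR20 hr20)
      (hInt _ (hGcont R) _ _ hR20 hr20) (fun s _ => hFfleG s)
  have hIAD : IA ≤ Qint w0 u R - Qint w0 u r := by
    have hsplit4 : IA = (∫ s in (-(R:ℝ)^2)..(-(r:ℝ)^2), Af s) + ∫ τ in (-(r:ℝ)^2)..(0:ℝ), Af τ := by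
      rw [hIAdef]
      exact (intervalIntegral.integral_add_adjacent_intervals
        (hInt Af hAcont _ _ hR20 hr20) (hInt Af hAcont _ 0 hr20 le_rfl)).symm
    have h5 : ∫ s in (-(R:ℝ)^2)..(-(r:ℝ)^2), Af s ≤ ∫ s in (-(R:ℝ)^2)..(-(r:ℝ)^2), Gf R s :=
      intervalIntegral.integral_mono_on hR2r2 (hInt Af hAcont _ _ hR20 hr20)
        (hInt _ (hGcont R) _ _ hR20 hr20) (fun s _ => hAfleG s)
    rw [hD, hsplit4]
    linarith
  have hQrJ : Qint w0 u r ≤ J := by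
    rw [hQeq r, hJdef]
    exact intervalIntegral.integral_mono_on hr20 (hInt _ (hGcont r) _ 0 hr20 le_rfl)
      (hInt Ff hFcont _ 0 hr20 le_rfl) (fun τ _ => hGrleF τ)
  -- final arithmetic
  have he0 : (0:ℝ) ≤ (1/((R:ℝ)-r))^2 := by positivity
  have hq : (1:ℝ) ≤ ((R:ℝ)^2 - (r:ℝ)^2) * (1/((R:ℝ)-r))^2 := by
    have h1 : ((R:ℝ)-r)^2 * (1/((R:ℝ)-r))^2 = 1 := by
      field_simp
    have h2 : ((R:ℝ)-r)^2 ≤ (R:ℝ)^2 - (r:ℝ)^2 := by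
      have h3 : (0:ℝ) ≤ r := Nat.cast_nonneg r
      have h4 : (r:ℝ) < R := by exact_mod_cast hrR
      nlinarith
    nlinarith [mul_le_mul_of_nonneg_right h2 he0]
  have hκ : (0:ℝ) ≤ lam/16 := by linarith
  set D : ℝ := Qint w0 u R - Qint w0 u r with hDdef
  have hXY' : ((R:ℝ)^2 - (r:ℝ)^2) * ((lam/16) * Qint w0 u r)
      ≤ ((R:ℝ)^2 - (r:ℝ)^2) * ((7/2) * (1/((R:ℝ)-r))^2 * D) := by
    have hz3 : ((R:ℝ)^2 - (r:ℝ)^2) * ((lam/16) * Qint w0 u r)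
        ≤ ((R:ℝ)^2 - (r:ℝ)^2) * ((lam/16) * J) := by
      apply mul_le_mul_of_nonneg_left _ hr2R2.le
      exact mul_le_mul_of_nonneg_left hQrJ hκ
    have hz4 : ((R:ℝ)^2 - (r:ℝ)^2) * (((5/2) * (1/((R:ℝ)-r))^2) * IA)
        ≤ ((R:ℝ)^2 - (r:ℝ)^2) * (((5/2) * (1/((R:ℝ)-r))^2) * D) := by
      apply mul_le_mul_of_nonneg_left _ hr2R2.le
      apply mul_le_mul_of_nonneg_left hIAD (by positivity)
    have hz5 : (∫ s in (-(R:ℝ)^2)..(-(r:ℝ)^2), Ff s) ≤ D := by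
      rw [hD]
      linarith [hFfGf, hApart0]
    -- D + (R²-r²)(5/2)e·D ≤ (R²-r²)(7/2)e·D  using 1 ≤ (R²-r²)e and D ≥ 0
    have hz6 : D + ((R:ℝ)^2 - (r:ℝ)^2) * (((5/2) * (1/((R:ℝ)-r))^2) * D)
        ≤ ((R:ℝ)^2 - (r:ℝ)^2) * ((7/2) * (1/((R:ℝ)-r))^2 * D) := by
      have := mul_le_mul_of_nonneg_right hq hD0
      nlinarith [this]
    linarith [havg, hz3, hz4, hz5, hz6]
  have hXY : (lam/16) * Qint w0 u r ≤ (7/2) * (1/((R:ℝ)-r))^2 * D :=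
    le_of_mul_le_mul_left hXY' hr2R2
  have h16 : (0:ℝ) < 16/lam := div_pos (by norm_num) hlam
  calc Qint w0 u r = (16/lam) * ((lam/16) * Qint w0 u r) := by
        field_simp
    _ ≤ (16/lam) * ((7/2) * (1/((R:ℝ)-r))^2 * D) :=
        mul_le_mul_of_nonneg_left hXY h16.le
    _ = 56/lam / ((R:ℝ) - (r:ℝ))^2 * D := by
        field_simp
        ring
end Main
end

section
/- Let G = (V, E, w) be a finite connected weighted graph and u: V × ℝ_{≤0} → ℝ an ancient solution of ∂_t u = Δu. If |u(x,t)| ≤ C(1 + √(-t))^d for positive constants C, d and all (x,t) ∈ V × ℝ_{≤0}, then u is constant in time and u(·,t) is a harmonic function on G (i.e., Δu = 0). -/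
open scoped BigOperators
noncomputable def vmuF {V : Type*} [Fintype V] (w : V → V → ℝ) (x : V) : ℝ := ∑ y, w x y

noncomputable def glapF {V : Type*} [Fintype V] (w : V → V → ℝ) (f : V → ℝ) (x : V) : ℝ :=
  (∑ y, w x y * (f y - f x)) / vmuF w x

section AuxACFG
variable {V : Type*} [Fintype V]

lemma acfg_w_zero (w : V → V → ℝ) (hnn : ∀ x y, 0 ≤ w x y) {x : V}
    (h : vmuF w x = 0) (y : V) : w x y = 0 :=
  (Finset.sum_eq_zero_iff_of_nonneg (fun y _ => hnn x y)).1 h y (Finset.mem_univ y)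

lemma acfg_mu_mul_glap (w : V → V → ℝ) (hnn : ∀ x y, 0 ≤ w x y) (f : V → ℝ) (x : V) :
    vmuF w x * glapF w f x = ∑ y, w x y * (f y - f x) := by
  by_cases h : vmuF w x = 0
  · simp [glapF, h, acfg_w_zero w hnn h]
  · rw [glapF, mul_comm, div_mul_cancel₀ _ h]

lemma acfg_swap (w : V → V → ℝ) (hsymm : ∀ x y, w x y = w y x) (F : V → V → ℝ) :
    ∑ x, ∑ y, w x y * F x y = ∑ x, ∑ y, w x y * F y x := by
  rw [Finset.sum_comm]
  refine Finset.sum_congr rfl fun x _ => Finset.sum_congr rfl fun y _ => ?_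
  rw [hsymm]

lemma acfg_sum_f_L (w : V → V → ℝ) (hsymm : ∀ x y, w x y = w y x) (f : V → ℝ) :
    ∑ x, ∑ y, w x y * (f x * (f y - f x))
      = -(1/2) * ∑ x, ∑ y, w x y * (f y - f x)^2 := by
  have h1 : ∑ x, ∑ y, w x y * (f x * (f y - f x))
      = ∑ x, ∑ y, w x y * (f y * (f x - f y)) :=
    acfg_swap w hsymm (fun x y => f x * (f y - f x))
  have h3 : (∑ x, ∑ y, w x y * (f x * (f y - f x)))
      + (∑ x, ∑ y, w x y * (f y * (f x - f y)))
      = -(∑ x, ∑ y, w x y * (f y - f x)^2) := by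
    rw [← Finset.sum_add_distrib, ← Finset.sum_neg_distrib]
    refine Finset.sum_congr rfl fun x _ => ?_
    rw [← Finset.sum_add_distrib, ← Finset.sum_neg_distrib]
    exact Finset.sum_congr rfl fun y _ => by ring
  linarith [h1, h3]

lemma acfg_cs (μ a b : V → ℝ) (hμ : ∀ x, 0 ≤ μ x) :
    (∑ x, μ x * (a x * b x))^2 ≤ (∑ x, μ x * (a x)^2) * (∑ x, μ x * (b x)^2) := by
  have key := Finset.sum_mul_sq_le_sq_mul_sq Finset.univ
      (fun x => Real.sqrt (μ x) * a x) (fun x => Real.sqrt (μ x) * b x)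
  have e1 : ∀ x : V, (Real.sqrt (μ x) * a x) * (Real.sqrt (μ x) * b x) = μ x * (a x * b x) := by
    intro x
    have h := Real.mul_self_sqrt (hμ x)
    calc (Real.sqrt (μ x) * a x) * (Real.sqrt (μ x) * b x)
        = (Real.sqrt (μ x) * Real.sqrt (μ x)) * (a x * b x) := by ring
      _ = μ x * (a x * b x) := by rw [h]
  have e2 : ∀ x : V, (Real.sqrt (μ x) * a x)^2 = μ x * (a x)^2 := by
    intro x
    rw [mul_pow, Real.sq_sqrt (hμ x)]
  have e3 : ∀ x : V, (Real.sqrt (μ x) * b x)^2 = μ x * (b x)^2 := by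
    intro x
    rw [mul_pow, Real.sq_sqrt (hμ x)]
  simp only [e1, e2, e3] at key
  exact key

lemma acfg_glap_zero_of_Q (w : V → V → ℝ) (hnn : ∀ x y, 0 ≤ w x y) (f : V → ℝ)
    (h : ∑ x, ∑ y, w x y * (f y - f x)^2 = 0) (x : V) : glapF w f x = 0 := by
  have hx : ∑ y, w x y * (f y - f x)^2 = 0 := by
    have := (Finset.sum_eq_zero_iff_of_nonneg (fun x _ =>
      Finset.sum_nonneg fun y _ => mul_nonneg (hnn x y) (sq_nonneg _))).1 h x (Finset.mem_univ x)
    exact this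
  have hterm : ∀ y : V, w x y * (f y - f x) = 0 := by
    intro y
    have h0 : w x y * (f y - f x)^2 = 0 :=
      (Finset.sum_eq_zero_iff_of_nonneg (fun y _ => mul_nonneg (hnn x y) (sq_nonneg _))).1
        hx y (Finset.mem_univ y)
    rcases mul_eq_zero.1 h0 with h1 | h1
    · rw [h1, zero_mul]
    · rw [pow_eq_zero_iff (two_ne_zero)] at h1
      rw [h1, mul_zero]
  rw [glapF, Finset.sum_eq_zero fun y _ => hterm y, zero_div]

end AuxACFG

/-- On a finite connected weighted graph, an ancient solution of the heat equation with
polynomial growth in time is constant in time and harmonic. -/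
theorem ancient_caloric_finite_graph {V : Type*} [Fintype V] (w : V → V → ℝ)
    (hsymm : ∀ x y, w x y = w y x) (hnonneg : ∀ x y, 0 ≤ w x y)
    (hconn : ∀ x y : V, Relation.ReflTransGen (fun a b => 0 < w a b) x y)
    (u : V → ℝ → ℝ)
    (hheat : ∀ x : V, ∀ t ≤ (0:ℝ), HasDerivAt (u x) (glapF w (fun y => u y t) x) t)
    (C d : ℝ) (hC : 0 < C) (hd : 0 < d)
    (hgrowth : ∀ x : V, ∀ t ≤ (0:ℝ), |u x t| ≤ C * (1 + Real.sqrt (-t)) ^ d) :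
    (∀ x : V, ∀ s ≤ (0:ℝ), ∀ t ≤ (0:ℝ), u x s = u x t) ∧
    (∀ x : V, ∀ t ≤ (0:ℝ), glapF w (fun y => u y t) x = 0) := by
  classical
  set g : ℝ → V → ℝ := fun t x => glapF w (fun y => u y t) x with hgdef
  set Qf : ℝ → ℝ := fun t => ∑ x, ∑ y, w x y * (u y t - u x t)^2 with hQdef
  set φ : ℝ → ℝ := fun t => ∑ x, vmuF w x * (u x t)^2 with hphidef
  set Dm : ℝ → ℝ := fun t => ∑ x, vmuF w x * (g t x)^2 with hDdef
  have hμnn : ∀ x, 0 ≤ vmuF w x := fun x => Finset.sum_nonneg fun y _ => hnonneg x y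
  have hQnn : ∀ t, 0 ≤ Qf t := fun t => Finset.sum_nonneg fun x _ =>
    Finset.sum_nonneg fun y _ => mul_nonneg (hnonneg x y) (sq_nonneg _)
  have hφnn : ∀ t, 0 ≤ φ t := fun t => Finset.sum_nonneg fun x _ =>
    mul_nonneg (hμnn x) (sq_nonneg _)
  have hDnn : ∀ t, 0 ≤ Dm t := fun t => Finset.sum_nonneg fun x _ =>
    mul_nonneg (hμnn x) (sq_nonneg _)
  -- key identity: ∑ x, u x t * (μ x * g t x) = -(1/2) * Qf t
  have hmug : ∀ t, ∑ x, u x t * (vmuF w x * g t x) = -(1/2) * Qf t := by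
    intro t
    calc ∑ x, u x t * (vmuF w x * g t x)
        = ∑ x, ∑ y, w x y * (u x t * (u y t - u x t)) := by
          refine Finset.sum_congr rfl fun x _ => ?_
          rw [hgdef, acfg_mu_mul_glap w hnonneg, Finset.mul_sum]
          exact Finset.sum_congr rfl fun y _ => by ring
      _ = -(1/2) * Qf t := acfg_sum_f_L w hsymm (fun y => u y t)
  -- derivative of φ
  have hφ' : ∀ t ≤ (0:ℝ), HasDerivAt φ (-(Qf t)) t := by
    intro t ht
    have h := HasDerivAt.fun_sum (fun x (_ : x ∈ Finset.univ) =>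
      (((hheat x t ht).pow 2).const_mul (vmuF w x)))
    convert h using 1
    · exact rfl
    · exact rfl
    · exact rfl
    have e1 : ∑ x, vmuF w x * ((2:ℝ) * u x t ^ (2-1) * g t x)
        = 2 * ∑ x, u x t * (vmuF w x * g t x) := by
      rw [Finset.mul_sum]
      exact Finset.sum_congr rfl fun x _ => by ring
    rw [show (∑ x, vmuF w x * ((2:ℕ) * u x t ^ (2-1) * glapF w (fun y => u y t) x))
        = ∑ x, vmuF w x * ((2:ℝ) * u x t ^ (2-1) * g t x) from by norm_num [hgdef]]
    rw [e1, hmug t]; ring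
  -- derivative of Qf
  have hQ' : ∀ t ≤ (0:ℝ), HasDerivAt Qf (-4 * Dm t) t := by
    intro t ht
    have h := HasDerivAt.fun_sum (fun x (_ : x ∈ Finset.univ) =>
      HasDerivAt.fun_sum (fun y (_ : y ∈ Finset.univ) =>
        ((((hheat y t ht).sub (hheat x t ht)).pow 2).const_mul (w x y))))
    convert h using 1
    · exact rfl
    · exact rfl
    · exact rfl
    have hswap := acfg_swap w hsymm (fun x y => (u y t - u x t) * g t y)
    -- hswap : ∑∑ w*((u_y-u_x)*g_y) = ∑∑ w*((u_x-u_y)*g_x)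
    have hTneg : ∑ x, ∑ y, w x y * ((u x t - u y t) * g t x)
        = -∑ x, ∑ y, w x y * ((u y t - u x t) * g t x) := by
      rw [← Finset.sum_neg_distrib]
      refine Finset.sum_congr rfl fun x _ => ?_
      rw [← Finset.sum_neg_distrib]
      exact Finset.sum_congr rfl fun y _ => by ring
    have hT : ∑ x, ∑ y, w x y * ((u y t - u x t) * g t x) = Dm t := by
      refine Finset.sum_congr rfl fun x _ => ?_
      have e : ∑ y, w x y * ((u y t - u x t) * g t x)
          = (∑ y, w x y * (u y t - u x t)) * g t x := by
        rw [Finset.sum_mul]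
        exact Finset.sum_congr rfl fun y _ => by ring
      rw [e, ← acfg_mu_mul_glap w hnonneg (fun y => u y t) x]
      show vmuF w x * g t x * g t x = vmuF w x * (g t x)^2
      ring
    have expand : ∀ x y : V, w x y * ((2:ℝ) * (u y t - u x t) ^ (2-1) * (g t y - g t x))
        = 2 * (w x y * ((u y t - u x t) * g t y)) - 2 * (w x y * ((u y t - u x t) * g t x)) := by
      intro x y; ring
    have main : ∑ x, ∑ y, w x y * ((2:ℝ) * (u y t - u x t) ^ (2-1) * (g t y - g t x))
        = -4 * Dm t := by
      have : ∑ x, ∑ y, w x y * ((2:ℝ) * (u y t - u x t) ^ (2-1) * (g t y - g t x))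
          = 2 * (∑ x, ∑ y, w x y * ((u y t - u x t) * g t y))
            - 2 * (∑ x, ∑ y, w x y * ((u y t - u x t) * g t x)) := by
        rw [Finset.mul_sum, Finset.mul_sum, ← Finset.sum_sub_distrib]
        refine Finset.sum_congr rfl fun x _ => ?_
        rw [Finset.mul_sum, Finset.mul_sum, ← Finset.sum_sub_distrib]
        exact Finset.sum_congr rfl fun y _ => expand x y
      rw [this, hswap, hTneg, hT]; ring
    rw [show (∑ x, ∑ y, w x y * ((2:ℕ) * (u y - u x) t ^ (2-1)
          * (glapF w (fun z => u z t) y - glapF w (fun z => u z t) x)))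
        = ∑ x, ∑ y, w x y * ((2:ℝ) * (u y t - u x t) ^ (2-1) * (g t y - g t x)) from by
      norm_num [hgdef]]
    exact main.symm
  -- Cauchy-Schwarz : Qf t ^ 2 ≤ 4 * (φ t * Dm t)
  have hCS : ∀ t, Qf t ^ 2 ≤ 4 * (φ t * Dm t) := by
    intro t
    have h0 := acfg_cs (vmuF w) (fun x => u x t) (g t) hμnn
    have h1 : ∑ x, vmuF w x * (u x t * g t x) = -(1/2) * Qf t := by
      rw [← hmug t]
      exact Finset.sum_congr rfl fun x _ => by ring
    rw [h1] at h0
    have h2 : (-(1/2) * Qf t)^2 = Qf t ^2 / 4 := by ring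
    rw [h2] at h0
    have hφeq : ∑ x, vmuF w x * (u x t)^2 = φ t := rfl
    have hDeq : ∑ x, vmuF w x * (g t x)^2 = Dm t := rfl
    rw [hφeq, hDeq] at h0
    linarith
  -- Qf ≤ 4 φ
  have hQle : ∀ t, Qf t ≤ 4 * φ t := by
    intro t
    have h1 : ∀ x y : V, w x y * (u y t - u x t)^2
        ≤ 2 * (w x y * (u y t)^2) + 2 * (w x y * (u x t)^2) := by
      intro x y
      nlinarith [mul_nonneg (hnonneg x y) (sq_nonneg (u y t + u x t))]
    have h2 : Qf t ≤ ∑ x, ∑ y, (2 * (w x y * (u y t)^2) + 2 * (w x y * (u x t)^2)) :=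
      Finset.sum_le_sum fun x _ => Finset.sum_le_sum fun y _ => h1 x y
    have h3 : ∑ x, ∑ y, w x y * (u y t)^2 = φ t := by
      rw [acfg_swap w hsymm (fun x y => (u y t)^2)]
      refine Finset.sum_congr rfl fun x _ => ?_
      rw [← Finset.sum_mul]
      rfl
    have h4 : ∑ x, ∑ y, w x y * (u x t)^2 = φ t := by
      refine Finset.sum_congr rfl fun x _ => ?_
      rw [← Finset.sum_mul]
      rfl
    have h5 : ∑ x, ∑ y, (2 * (w x y * (u y t)^2) + 2 * (w x y * (u x t)^2))
        = 2 * (∑ x, ∑ y, w x y * (u y t)^2) + 2 * (∑ x, ∑ y, w x y * (u x t)^2) := by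
      rw [Finset.mul_sum, Finset.mul_sum, ← Finset.sum_add_distrib]
      refine Finset.sum_congr rfl fun x _ => ?_
      rw [Finset.mul_sum, Finset.mul_sum, ← Finset.sum_add_distrib]
    linarith [h2, h3, h4, h5.symm ▸ h2]
  -- main claim
  have hQ0 : ∀ t ≤ (0:ℝ), Qf t = 0 := by
    by_contra hcon
    push_neg at hcon
    obtain ⟨t₀, ht₀, hQt₀⟩ := hcon
    have hQpos : 0 < Qf t₀ := lt_of_le_of_ne (hQnn t₀) (Ne.symm hQt₀)
    have hφt₀ : 0 < φ t₀ := by linarith [hQle t₀]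
    -- φ is antitone on Iic 0
    have hφanti : AntitoneOn φ (Set.Iic (0:ℝ)) := by
      apply antitoneOn_of_deriv_nonpos (convex_Iic 0)
      · exact fun t ht => ((hφ' t ht).continuousAt).continuousWithinAt
      · intro t ht
        rw [interior_Iic] at ht
        exact ((hφ' t ht.le).differentiableAt).differentiableWithinAt
      · intro t ht
        rw [interior_Iic] at ht
        rw [(hφ' t ht.le).deriv]
        linarith [hQnn t]
    have hφpos : ∀ s ≤ t₀, 0 < φ s := fun s hs =>
      lt_of_lt_of_le hφt₀ (hφanti (Set.mem_Iic.2 (hs.trans ht₀)) (Set.mem_Iic.2 ht₀) hs)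
    -- the ratio G = -Q/φ is monotone on Iic t₀
    set G : ℝ → ℝ := fun t => -(Qf t) / φ t with hGdef
    have hG' : ∀ t ≤ t₀, HasDerivAt G
        ((4 * Dm t * φ t - -(Qf t) * -(Qf t)) / φ t ^ 2) t := by
      intro t ht
      have h1 : HasDerivAt (fun s => -(Qf s)) (-(-4 * Dm t)) t := (hQ' t (ht.trans ht₀)).neg
      have h2 := hφ' t (ht.trans ht₀)
      have := h1.div h2 (ne_of_gt (hφpos t ht))
      convert this using 1
      · exact rfl
      · exact rfl
      · exact rfl
      ring
    have hGmono : MonotoneOn G (Set.Iic t₀) := by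
      apply monotoneOn_of_deriv_nonneg (convex_Iic t₀)
      · exact fun t ht => ((hG' t ht).continuousAt).continuousWithinAt
      · intro t ht
        rw [interior_Iic] at ht
        exact ((hG' t ht.le).differentiableAt).differentiableWithinAt
      · intro t ht
        rw [interior_Iic] at ht
        rw [(hG' t ht.le).deriv]
        apply div_nonneg _ (sq_nonneg _)
        have := hCS t
        nlinarith [hCS t]
    -- h = log φ - G t₀ * t is antitone on Iic t₀
    set a : ℝ := Qf t₀ / φ t₀ with hadef
    have hapos : 0 < a := div_pos hQpos hφt₀
    have hGt₀ : G t₀ = -a := by rw [hGdef, hadef]; ring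
    have hh' : ∀ t ≤ t₀, HasDerivAt (fun s => Real.log (φ s) - G t₀ * s)
        (G t - G t₀) t := by
      intro t ht
      have h1 : HasDerivAt (fun s => Real.log (φ s)) (-(Qf t) / φ t) t :=
        (hφ' t (ht.trans ht₀)).log (ne_of_gt (hφpos t ht))
      have h2 : HasDerivAt (fun s => G t₀ * s) (G t₀) t := by
        simpa using (hasDerivAt_id t).const_mul (G t₀)
      exact h1.sub h2
    have hhanti : AntitoneOn (fun s => Real.log (φ s) - G t₀ * s) (Set.Iic t₀) := by
      apply antitoneOn_of_deriv_nonpos (convex_Iic t₀)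
      · exact fun t ht => ((hh' t ht).continuousAt).continuousWithinAt
      · intro t ht
        rw [interior_Iic] at ht
        exact ((hh' t ht.le).differentiableAt).differentiableWithinAt
      · intro t ht
        rw [interior_Iic] at ht
        rw [(hh' t ht.le).deriv]
        have := hGmono (Set.mem_Iic.2 ht.le) (Set.mem_Iic.2 (le_refl t₀)) ht.le
        linarith
    -- lower bound: log φ s ≥ log φ t₀ + a * (t₀ - s) for s ≤ t₀
    have hlow : ∀ s ≤ t₀, Real.log (φ t₀) + a * (t₀ - s) ≤ Real.log (φ s) := by
      intro s hs
      have := hhanti (Set.mem_Iic.2 hs) (Set.mem_Iic.2 (le_refl t₀)) hs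
      rw [hGt₀] at this
      simp only at this
      nlinarith [this]
    -- upper bound via growth
    set M : ℝ := ∑ x : V, vmuF w x with hMdef
    have hφub : ∀ s ≤ (0:ℝ), φ s ≤ M * (C * (1 + Real.sqrt (-s)) ^ d)^2 := by
      intro s hs
      have hB : (0:ℝ) ≤ C * (1 + Real.sqrt (-s)) ^ d := by positivity
      have h1 : ∀ x : V, vmuF w x * (u x s)^2
          ≤ vmuF w x * (C * (1 + Real.sqrt (-s)) ^ d)^2 := by
        intro x
        apply mul_le_mul_of_nonneg_left _ (hμnn x)
        rw [← sq_abs]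
        exact pow_le_pow_left₀ (abs_nonneg _) (hgrowth x s hs) 2
      calc φ s ≤ ∑ x, vmuF w x * (C * (1 + Real.sqrt (-s)) ^ d)^2 :=
            Finset.sum_le_sum fun x _ => h1 x
        _ = M * (C * (1 + Real.sqrt (-s)) ^ d)^2 := by rw [hMdef, Finset.sum_mul]
    have hMpos : 0 < M := by
      by_contra hM
      push_neg at hM
      have : φ t₀ ≤ 0 := by
        have := hφub t₀ ht₀
        nlinarith [sq_nonneg (C * (1 + Real.sqrt (-t₀)) ^ d)]
      linarith
    -- combine: for all r ≥ 0, a * r ≤ K + 2*d*√r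
    have hbase : ∀ s : ℝ, (1:ℝ) ≤ 1 + Real.sqrt (-s) := fun s => by
      linarith [Real.sqrt_nonneg (-s)]
    have hlogub : ∀ s ≤ t₀, Real.log (φ s)
        ≤ Real.log M + 2 * Real.log C + 2 * (d * Real.sqrt (-s)) := by
      intro s hs
      have hs0 : s ≤ 0 := hs.trans ht₀
      have hb1 : (0:ℝ) < 1 + Real.sqrt (-s) := lt_of_lt_of_le one_pos (hbase s)
      have h2 : Real.log (φ s) ≤ Real.log (M * (C * (1 + Real.sqrt (-s)) ^ d)^2) :=
        Real.log_le_log (hφpos s hs) (hφub s hs0)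
      have h3 : Real.log (M * (C * (1 + Real.sqrt (-s)) ^ d)^2)
          = Real.log M + 2 * Real.log C + 2 * (d * Real.log (1 + Real.sqrt (-s))) := by
        rw [Real.log_mul (ne_of_gt hMpos) (by positivity), Real.log_pow,
          Real.log_mul (ne_of_gt hC) (by positivity), Real.log_rpow hb1]
        push_cast
        ring
      have h4 : Real.log (1 + Real.sqrt (-s)) ≤ Real.sqrt (-s) := by
        have := Real.log_le_sub_one_of_pos hb1
        linarith
      rw [h3] at h2
      nlinarith [h2, h4, hd]
    have hkey : ∀ r : ℝ, 0 ≤ r →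
        a * r ≤ (Real.log M + 2 * Real.log C + 2 * (d * Real.sqrt (-t₀)) - Real.log (φ t₀))
          + 2 * d * Real.sqrt r := by
      intro r hr
      have hs : t₀ - r ≤ t₀ := by linarith
      have hlo := hlow (t₀ - r) hs
      have hup := hlogub (t₀ - r) hs
      have hsqrt : Real.sqrt (-(t₀ - r)) ≤ Real.sqrt r + Real.sqrt (-t₀) := by
        have h1 : -(t₀ - r) = r + (-t₀) := by ring
        rw [h1]
        have ht0' : (0:ℝ) ≤ -t₀ := by linarith
        have e : r + (-t₀) ≤ (Real.sqrt r + Real.sqrt (-t₀))^2 := by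
          have e1 := Real.sq_sqrt hr
          have e2 := Real.sq_sqrt ht0'
          nlinarith [mul_nonneg (Real.sqrt_nonneg r) (Real.sqrt_nonneg (-t₀))]
        calc Real.sqrt (r + -t₀) ≤ Real.sqrt ((Real.sqrt r + Real.sqrt (-t₀))^2) :=
              Real.sqrt_le_sqrt e
          _ = Real.sqrt r + Real.sqrt (-t₀) := Real.sqrt_sq (by positivity)
      nlinarith [hd, Real.sqrt_nonneg r, Real.sqrt_nonneg (-t₀)]
    -- choose r large to get contradiction
    set K : ℝ := Real.log M + 2 * Real.log C + 2 * (d * Real.sqrt (-t₀)) - Real.log (φ t₀)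
      with hKdef
    set x : ℝ := max ((2 * d + 1) / a) (|K| + 1) with hxdef
    have hx1 : (2 * d + 1) / a ≤ x := le_max_left _ _
    have hx2 : |K| + 1 ≤ x := le_max_right _ _
    have hxpos : 0 < x := lt_of_lt_of_le (by positivity) hx2
    have hax : 2 * d + 1 ≤ a * x := by
      rw [div_le_iff₀ hapos] at hx1
      linarith [hx1]
    have hcontr := hkey (x^2) (sq_nonneg x)
    rw [Real.sqrt_sq hxpos.le] at hcontr
    have hKabs : K ≤ |K| := le_abs_self K
    nlinarith [hcontr, hax, hx2, hKabs, hxpos]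
  constructor
  · -- constant in time
    have hzero : ∀ x : V, ∀ t ≤ (0:ℝ), HasDerivAt (u x) 0 t := by
      intro x t ht
      have h := hheat x t ht
      rwa [acfg_glap_zero_of_Q w hnonneg (fun y => u y t) (hQ0 t ht) x] at h
    have key : ∀ x : V, ∀ s t : ℝ, s ≤ t → t ≤ 0 → u x t = u x s := by
      intro x s t hst ht0
      have hcont : ContinuousOn (u x) (Set.Icc s t) := fun y hy =>
        ((hzero x y (hy.2.trans ht0)).continuousAt).continuousWithinAt
      have hderiv : ∀ y ∈ Set.Ico s t, HasDerivWithinAt (u x) 0 (Set.Ici y) y :=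
        fun y hy => (hzero x y (hy.2.le.trans ht0)).hasDerivWithinAt
      exact constant_of_has_deriv_right_zero hcont hderiv t ⟨hst, le_refl t⟩
    intro x s hs t ht
    rcases le_total s t with h | h
    · exact (key x s t h ht).symm
    · exact key x t s h hs
  · intro x t ht
    exact acfg_glap_zero_of_Q w hnonneg (fun y => u y t) (hQ0 t ht) x
end

section
/- Let G = (V, E, w) be a weighted graph and u: V × [a,b] → ℝ with u(·,t), ∂_t u(·,t) ∈ W^{1,2}_μ(V) at each time slice. Suppose ∂_t u = Δu + c(x)u for some bounded function c: V → ℝ. If u(·, b) ≡ 0, then u ≡ 0 on V × [a,b]. -/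
open MeasureTheory intervalIntegral Set


open scoped BigOperators

/-- Squared gradient `|∇f|²(x) = Σ_y (w x y / μ x) (f y - f x)²`. -/
noncomputable def gnormSq {V : Type*} (w : V → V → ℝ) (f : V → ℝ) (x : V) : ℝ :=
  ∑' y, (w x y / vmu w x) * (f y - f x)^2

/-- `I(t) = Σ_x u(x,t)² μ(x)`. -/
noncomputable def Ifun {V : Type*} (w : V → V → ℝ) (u : V → ℝ → ℝ) (t : ℝ) : ℝ :=
  ∑' x, (u x t)^2 * vmu w x

/-- `D(t) = -Σ_x |∇u|²(x,t) μ(x)`. -/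
noncomputable def Dfun {V : Type*} (w : V → V → ℝ) (u : V → ℝ → ℝ) (t : ℝ) : ℝ :=
  -∑' x, gnormSq w (fun y => u y t) x * vmu w x

/-- The parabolic frequency `U(t) = D(t)/I(t)`. -/
noncomputable def Ufun {V : Type*} (w : V → V → ℝ) (u : V → ℝ → ℝ) (t : ℝ) : ℝ :=
  Dfun w u t / Ifun w u t



private lemma RG {f : ℝ → ℝ} {t₀ t₁ A Kc : ℝ} (h01 : t₀ ≤ t₁) (hA : 0 ≤ A) (hK : 0 ≤ Kc)
    (hint : IntervalIntegrable f volume t₀ t₁)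
    (hpos : ∀ t ∈ Set.Icc t₀ t₁, 0 ≤ f t)
    (hyp : ∀ t ∈ Set.Icc t₀ t₁, f t ≤ A + Kc * ∫ s in t₀..t, f s) :
    ∀ t ∈ Set.Icc t₀ t₁, f t ≤ A * Real.exp (Kc * (t - t₀)) := by
  rcases eq_or_lt_of_le hK with hK0 | hKpos
  · intro t ht
    have h1 : f t ≤ A := by
      have := hyp t ht; rw [← hK0] at this; simpa using this
    have : Real.exp (Kc * (t - t₀)) = 1 := by rw [← hK0]; simp
    rw [this]; simpa using h1
  set G : ℝ → ℝ := fun t => ∫ s in t₀..t, f s with hG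
  have hKne : Kc ≠ 0 := ne_of_gt hKpos
  have hsubint : ∀ t ∈ Set.Icc t₀ t₁, IntervalIntegrable f volume t₀ t := by
    intro t ht
    exact hint.mono_set (Set.uIcc_subset_uIcc (by simp [Set.mem_uIcc, le_refl, h01])
      (by simp [Set.mem_uIcc]; left; exact ⟨ht.1, ht.2⟩))
  have hGcont : ContinuousOn G (Set.Icc t₀ t₁) := by
    have h1 : IntegrableOn f (Set.uIcc t₀ t₁) volume := by
      rw [Set.uIcc_of_le h01]
      rw [integrableOn_Icc_iff_integrableOn_Ioc]
      exact hint.1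
    have := intervalIntegral.continuousOn_primitive_interval (μ := volume) (f := f) (a := t₀) (b := t₁) h1
    rwa [Set.uIcc_of_le h01] at this
  have hGle : ∀ t ∈ Set.Icc t₀ t₁, G t ≤ G t₁ := by
    intro t ht
    have hadd : G t + ∫ s in t..t₁, f s = G t₁ :=
      intervalIntegral.integral_add_adjacent_intervals (hsubint t ht)
        (hint.mono_set (Set.uIcc_subset_uIcc (by simp [Set.mem_uIcc]; left; exact ⟨ht.1, ht.2⟩)
          (by simp [Set.mem_uIcc, h01, le_refl])))
    have hnn : 0 ≤ ∫ s in t..t₁, f s :=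
      intervalIntegral.integral_nonneg ht.2 (fun s hs => hpos s ⟨le_trans ht.1 hs.1, hs.2⟩)
    linarith
  set B : ℝ := G t₁ with hBdef
  have hB0 : 0 ≤ B := by
    have h0 : G t₀ = 0 := intervalIntegral.integral_same
    have := hGle t₀ ⟨le_refl _, h01⟩
    linarith
  have hGnn : ∀ t ∈ Set.Icc t₀ t₁, 0 ≤ G t := by
    intro t ht
    exact intervalIntegral.integral_nonneg ht.1 (fun s hs => hpos s ⟨hs.1, le_trans hs.2 ht.2⟩)
  have key : ∀ n : ℕ, ∀ t ∈ Set.Icc t₀ t₁,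
      G t ≤ (A/Kc) * (Real.exp (Kc*(t-t₀)) - 1) + B * (Kc*(t-t₀))^n / n.factorial := by
    intro n
    induction n with
    | zero =>
      intro t ht
      have h1 : (0:ℝ) ≤ (A/Kc) * (Real.exp (Kc*(t-t₀)) - 1) := by
        apply mul_nonneg (div_nonneg hA hK)
        have : (1:ℝ) ≤ Real.exp (Kc*(t-t₀)) :=
          Real.one_le_exp (mul_nonneg hK (by linarith [ht.1]))
        linarith
      have := hGle t ht
      simp only [pow_zero, Nat.factorial_zero, Nat.cast_one, mul_one]
      linarith
    | succ n ih =>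
      intro t ht
      have htt : Set.Icc t₀ t ⊆ Set.Icc t₀ t₁ := Set.Icc_subset_Icc le_rfl ht.2
      have hGcont' : ContinuousOn G (Set.uIcc t₀ t) := by
        rw [Set.uIcc_of_le ht.1]; exact hGcont.mono htt
      have hint1 : IntervalIntegrable (fun s => A + Kc * G s) volume t₀ t :=
        (continuousOn_const.add (continuousOn_const.mul hGcont')).intervalIntegrable
      have hcont2 : ContinuousOn (fun s => A * Real.exp (Kc*(s-t₀))
          + B * Kc^(n+1) * (s-t₀)^n / n.factorial) (Set.uIcc t₀ t) := by
        fun_prop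
      have hint2 : IntervalIntegrable (fun s => A * Real.exp (Kc*(s-t₀))
          + B * Kc^(n+1) * (s-t₀)^n / n.factorial) volume t₀ t := hcont2.intervalIntegrable
      have h1 : G t ≤ ∫ s in t₀..t, (A + Kc * G s) := by
        apply intervalIntegral.integral_mono_on ht.1 (hsubint t ht) hint1
        intro s hs
        exact hyp s (htt hs)
      have h2 : ∫ s in t₀..t, (A + Kc * G s) ≤ ∫ s in t₀..t,
          (A * Real.exp (Kc*(s-t₀)) + B * Kc^(n+1) * (s-t₀)^n / n.factorial) := by
        apply intervalIntegral.integral_mono_on ht.1 hint1 hint2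
        intro s hs
        have := ih s (htt hs)
        have hexpand : A + Kc * ((A/Kc) * (Real.exp (Kc*(s-t₀)) - 1) + B * (Kc*(s-t₀))^n / n.factorial)
            = A * Real.exp (Kc*(s-t₀)) + B * Kc^(n+1) * (s-t₀)^n / n.factorial := by
          rw [mul_pow]
          field_simp
          ring
        nlinarith [this, hKpos]
      have h3 : ∫ s in t₀..t, (A * Real.exp (Kc*(s-t₀)) + B * Kc^(n+1) * (s-t₀)^n / n.factorial)
          = (A/Kc) * (Real.exp (Kc*(t-t₀)) - 1) + B * (Kc*(t-t₀))^(n+1) / (n+1).factorial := by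
        have hftc : ∀ s ∈ Set.uIcc t₀ t, HasDerivAt
            (fun s => (A/Kc) * Real.exp (Kc*(s-t₀)) + B * Kc^(n+1) * (s-t₀)^(n+1) / ((n+1).factorial))
            (A * Real.exp (Kc*(s-t₀)) + B * Kc^(n+1) * (s-t₀)^n / n.factorial) s := by
          intro s _
          have d1 : HasDerivAt (fun s => (A/Kc) * Real.exp (Kc*(s-t₀))) (A * Real.exp (Kc*(s-t₀))) s := by
            have : HasDerivAt (fun s : ℝ => Kc*(s-t₀)) Kc s := by
              simpa using (((hasDerivAt_id s).sub_const t₀).const_mul Kc)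
            have := (this.exp).const_mul (A/Kc)
            refine this.congr_deriv ?_
            field_simp
          have d2 : HasDerivAt (fun s => B * Kc^(n+1) * (s-t₀)^(n+1) / ((n+1).factorial))
              (B * Kc^(n+1) * (s-t₀)^n / n.factorial) s := by
            have hp : HasDerivAt (fun s : ℝ => (s-t₀)^(n+1)) ((n+1) * (s-t₀)^n) s := by
              simpa using (((hasDerivAt_id s).sub_const t₀).fun_pow (n+1))
            have := hp.const_mul (B * Kc^(n+1) / ((n+1).factorial))
            have e : (fun s => B * Kc^(n+1) * (s-t₀)^(n+1) / ((n+1).factorial : ℝ))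
                = fun y => B * Kc^(n+1) / ((n+1).factorial) * (y-t₀)^(n+1) := by
              funext s; ring
            rw [e]
            refine this.congr_deriv ?_
            · rw [Nat.factorial_succ]
              push_cast
              field_simp
          exact d1.add d2
        rw [intervalIntegral.integral_eq_sub_of_hasDerivAt hftc hint2]
        simp only [sub_self, mul_zero, Real.exp_zero]
        rw [mul_pow]
        field_simp
        ring
      calc G t ≤ ∫ s in t₀..t, (A + Kc * G s) := h1
        _ ≤ _ := h2
        _ = _ := h3
  have hGbound : ∀ t ∈ Set.Icc t₀ t₁, G t ≤ (A/Kc) * (Real.exp (Kc*(t-t₀)) - 1) := by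
    intro t ht
    have htend : Filter.Tendsto
        (fun n : ℕ => (A/Kc) * (Real.exp (Kc*(t-t₀)) - 1) + B * (Kc*(t-t₀))^n / n.factorial)
        Filter.atTop (nhds ((A/Kc) * (Real.exp (Kc*(t-t₀)) - 1))) := by
      have h0 : Filter.Tendsto (fun n : ℕ => (Kc*(t-t₀))^n / n.factorial) Filter.atTop (nhds 0) :=
        FloorSemiring.tendsto_pow_div_factorial_atTop (Kc*(t-t₀))
      have := (h0.const_mul B).const_add ((A/Kc) * (Real.exp (Kc*(t-t₀)) - 1))
      simpa [mul_div_assoc] using this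
    exact ge_of_tendsto htend (Filter.Eventually.of_forall (fun n => key n t ht))
  intro t ht
  have := hyp t ht
  have h2 : Kc * G t ≤ Kc * ((A/Kc) * (Real.exp (Kc*(t-t₀)) - 1)) :=
    mul_le_mul_of_nonneg_left (hGbound t ht) hK
  have h3 : Kc * ((A/Kc) * (Real.exp (Kc*(t-t₀)) - 1)) = A * (Real.exp (Kc*(t-t₀)) - 1) := by
    field_simp
  nlinarith [this, h2]

private lemma BRG {f : ℝ → ℝ} {t₀ t₁ A Kc : ℝ} (h01 : t₀ ≤ t₁) (hA : 0 ≤ A) (hK : 0 ≤ Kc)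
    (hint : IntervalIntegrable f volume t₀ t₁)
    (hpos : ∀ t ∈ Set.Icc t₀ t₁, 0 ≤ f t)
    (hyp : ∀ t ∈ Set.Icc t₀ t₁, f t ≤ A + Kc * ∫ s in t..t₁, f s) :
    ∀ t ∈ Set.Icc t₀ t₁, f t ≤ A * Real.exp (Kc * (t₁ - t)) := by
  set c : ℝ := t₀ + t₁ with hc
  have hmem : ∀ s ∈ Set.Icc t₀ t₁, c - s ∈ Set.Icc t₀ t₁ := by
    intro s hs; constructor <;> [linarith [hs.2]; linarith [hs.1]]
  have hintg : IntervalIntegrable (fun x => f (c - x)) volume t₀ t₁ := by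
    have := (hint.comp_sub_left c).symm
    simpa [hc, show c - t₀ = t₁ by ring, show c - t₁ = t₀ by ring] using this
  have := RG (f := fun x => f (c - x)) h01 hA hK hintg
    (fun s hs => hpos _ (hmem s hs))
    (by
      intro s hs
      have h1 : ∫ σ in t₀..s, f (c - σ) = ∫ x in (c-s)..t₁, f x := by
        rw [intervalIntegral.integral_comp_sub_left f c]
        congr 1
        rw [hc]; ring
      rw [h1]
      exact hyp _ (hmem s hs))
  intro t ht
  have h2 := this (c - t) (hmem t ht)
  simp only [show c - (c - t) = t by ring] at h2
  convert h2 using 3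
  ring


private lemma LOC {g : ℝ → ℝ} {α β p q : ℝ} (hpq : p ≤ q) (hsub : Set.Icc p q ⊆ Set.Icc α β)
    (h : ∀ τ ∈ Set.Icc p q, ∃ δ > 0, ∃ C, ∀ σ ∈ Set.Icc α β, |σ - τ| < δ → g σ ≤ C) :
    ∃ C, ∀ σ ∈ Set.Icc p q, g σ ≤ C := by
  classical
  have h' : ∀ τ : ℝ, ∃ dC : ℝ × ℝ, 0 < dC.1 ∧
      (τ ∈ Set.Icc p q → ∀ σ ∈ Set.Icc α β, |σ - τ| < dC.1 → g σ ≤ dC.2) := by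
    intro τ
    by_cases hτ : τ ∈ Set.Icc p q
    · obtain ⟨δ, hδ, C, hC⟩ := h τ hτ
      exact ⟨(δ, C), hδ, fun _ => hC⟩
    · exact ⟨(1, 0), one_pos, fun hmem => absurd hmem hτ⟩
  choose dC hpos hC using h'
  have hcover : Set.Icc p q ⊆ ⋃ τ ∈ Set.Icc p q, Metric.ball τ (dC τ).1 := by
    intro τ hτ
    exact Set.mem_biUnion hτ (by simpa [Metric.mem_ball] using hpos τ)
  obtain ⟨b', hb'sub, hb'fin, hb'cover⟩ :=
    isCompact_Icc.elim_finite_subcover_image (fun τ _ => Metric.isOpen_ball) hcover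
  refine ⟨∑ τ ∈ hb'fin.toFinset, max ((dC τ).2) 0, ?_⟩
  intro σ hσ
  obtain ⟨τ₀, hτ₀b, hσball⟩ := Set.mem_iUnion₂.mp (hb'cover hσ)
  have h1 : g σ ≤ (dC τ₀).2 := by
    apply hC τ₀ (hb'sub hτ₀b) σ (hsub hσ)
    rw [Metric.mem_ball, Real.dist_eq] at hσball
    exact hσball
  calc g σ ≤ max ((dC τ₀).2) 0 := le_trans h1 (le_max_left _ _)
    _ ≤ ∑ τ ∈ hb'fin.toFinset, max ((dC τ).2) 0 :=
        Finset.single_le_sum (f := fun τ => max ((dC τ).2) 0) (fun τ _ => le_max_right _ _) (hb'fin.mem_toFinset.mpr hτ₀b)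

private lemma int_of_bdd {g : ℝ → ℝ} (hmeas : Measurable g) (hnn : ∀ t, 0 ≤ g t)
    {p q C : ℝ} (hpq : p ≤ q) (h : ∀ σ ∈ Set.Ioc p q, g σ ≤ C) :
    IntervalIntegrable g volume p q := by
  rw [intervalIntegrable_iff_integrableOn_Ioc_of_le hpq]
  apply Measure.integrableOn_of_bounded (M := max C 0) measure_Ioc_lt_top.ne
    hmeas.aestronglyMeasurable
  rw [ae_restrict_iff' measurableSet_Ioc]
  apply ae_of_all
  intro σ hσ
  rw [Real.norm_eq_abs, abs_of_nonneg (hnn σ)]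
  exact le_trans (h σ hσ) (le_max_left _ _)
private lemma STEP {g : ℝ → ℝ} {α β Kc N₀ : ℝ} (hK : 0 ≤ Kc) (hN : 0 ≤ N₀)
    (hgnn : ∀ t, 0 ≤ g t) (hgmeas : Measurable g)
    (hM5 : ∀ t s, t ∈ Set.Icc α β → s ∈ Set.Icc α β → t ≤ s → IntervalIntegrable g volume t s →
      g s ≤ g t + Kc * ∫ σ in t..s, g σ ∧ g t ≤ g s + Kc * ∫ σ in t..s, g σ)
    {γ s : ℝ} (hγ : γ ∈ Set.Icc α β) (hs : s ∈ Set.Icc α β) (hγs : γ < s)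
    (hNγ : g γ ≤ N₀)
    (hloc : ∀ τ, γ < τ → τ ≤ s → ∃ δ > 0, ∃ C, ∀ σ ∈ Set.Icc α β, |σ - τ| < δ → g σ ≤ C) :
    g s ≤ (N₀ + 1) * Real.exp (Kc * (β - α)) := by
  have hαβ : α ≤ β := le_trans hγ.1 hγ.2
  have hexple : ∀ r : ℝ, r ≤ β - α → Real.exp (Kc * r) ≤ Real.exp (Kc * (β - α)) :=
    fun r hr => Real.exp_le_exp.mpr (mul_le_mul_of_nonneg_left hr hK)
  set s₀ : ℝ := (γ + s)/2 with hs₀def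
  have hγs₀ : γ < s₀ := by rw [hs₀def]; linarith
  have hs₀s : s₀ < s := by rw [hs₀def]; linarith
  have hs₀Icc : s₀ ∈ Set.Icc α β := ⟨le_trans hγ.1 (le_of_lt hγs₀), le_trans (le_of_lt hs₀s) hs.2⟩
  have hmemIcc : ∀ τ, γ < τ → τ ≤ s → τ ∈ Set.Icc α β :=
    fun τ h1 h2 => ⟨le_trans hγ.1 (le_of_lt h1), le_trans h2 hs.2⟩
  -- bounds and integrability on compacts of (γ, s]
  have hcb : ∀ p q, γ < p → p ≤ q → q ≤ s → ∃ C, ∀ τ ∈ Set.Icc p q, g τ ≤ C := by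
    intro p q hp hpq hq
    apply LOC hpq (Set.Icc_subset_Icc (le_trans hγ.1 (le_of_lt hp)) (le_trans hq hs.2))
    intro τ hτ
    exact hloc τ (lt_of_lt_of_le hp hτ.1) (le_trans hτ.2 hq)
  have hci : ∀ p q, γ < p → p ≤ q → q ≤ s → IntervalIntegrable g volume p q := by
    intro p q hp hpq hq
    obtain ⟨C, hC⟩ := hcb p q hp hpq hq
    exact int_of_bdd hgmeas hgnn hpq (fun σ hσ => hC σ ⟨le_of_lt hσ.1, hσ.2⟩)
  -- (i) uniform bound C₁ on (γ, s₀]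
  set A₁ : ℝ := max (g s₀) 0 with hA₁def
  have hA₁ : 0 ≤ A₁ := le_max_right _ _
  set C₁ : ℝ := A₁ * Real.exp (Kc * (β - α)) with hC₁def
  have hC₁0 : 0 ≤ C₁ := mul_nonneg hA₁ (Real.exp_nonneg _)
  have hC1 : ∀ τ, γ < τ → τ ≤ s₀ → g τ ≤ C₁ := by
    intro τ hτ1 hτ2
    have hτIcc : τ ∈ Set.Icc α β := hmemIcc τ hτ1 (le_trans hτ2 (le_of_lt hs₀s))
    have hhyp : ∀ t ∈ Set.Icc τ s₀, g t ≤ A₁ + Kc * ∫ σ in t..s₀, g σ := by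
      intro t ht
      have htIcc : t ∈ Set.Icc α β := hmemIcc t (lt_of_lt_of_le hτ1 ht.1)
        (le_trans ht.2 (le_of_lt hs₀s))
      have := (hM5 t s₀ htIcc hs₀Icc ht.2
        (hci t s₀ (lt_of_lt_of_le hτ1 ht.1) ht.2 (le_of_lt hs₀s))).2
      have h2 : g s₀ ≤ A₁ := le_max_left _ _
      linarith
    have hB := BRG (f := g) (t₀ := τ) (t₁ := s₀) hτ2 hA₁ hK
      (hci τ s₀ hτ1 hτ2 (le_of_lt hs₀s)) (fun t _ => hgnn t) hhyp τ ⟨le_refl _, hτ2⟩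
    calc g τ ≤ A₁ * Real.exp (Kc * (s₀ - τ)) := hB
      _ ≤ C₁ := mul_le_mul_of_nonneg_left
          (hexple _ (by linarith [hs₀Icc.2, hτIcc.1])) hA₁
  -- (ii) integrability up to γ
  have hint₀ : IntervalIntegrable g volume γ s₀ :=
    int_of_bdd hgmeas hgnn (le_of_lt hγs₀) (fun σ hσ => hC1 σ hσ.1 hσ.2)
  -- (iii) point σ₁ close to γ with small integral
  set σ₁ : ℝ := min s₀ (γ + 1/(Kc*C₁+1)) with hσ₁def
  have hKC₁ : 0 < Kc*C₁+1 := by positivity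
  have hγσ₁ : γ < σ₁ := lt_min hγs₀ (by linarith [one_div_pos.mpr hKC₁])
  have hσ₁s₀ : σ₁ ≤ s₀ := min_le_left _ _
  have hσ₁Icc : σ₁ ∈ Set.Icc α β :=
    hmemIcc σ₁ hγσ₁ (le_trans hσ₁s₀ (le_of_lt hs₀s))
  have hIσ₁ : Kc * ∫ σ in γ..σ₁, g σ ≤ 1 := by
    have hIoc : IntegrableOn g (Set.Ioc γ σ₁) volume := by
      have := (intervalIntegrable_iff_integrableOn_Ioc_of_le (le_of_lt hγs₀)).mp hint₀
      exact this.mono_set (Set.Ioc_subset_Ioc_right hσ₁s₀)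
    have h1 : ∫ σ in γ..σ₁, g σ ≤ C₁ * (σ₁ - γ) := by
      rw [intervalIntegral.integral_of_le (le_of_lt hγσ₁)]
      calc (∫ σ in Set.Ioc γ σ₁, g σ) ≤ ∫ _ in Set.Ioc γ σ₁, C₁ :=
            setIntegral_mono_on hIoc (integrableOn_const measure_Ioc_lt_top.ne)
              measurableSet_Ioc (fun σ hσ => hC1 σ hσ.1 (le_trans hσ.2 hσ₁s₀))
        _ = C₁ * (σ₁ - γ) := by
            rw [setIntegral_const, Real.volume_real_Ioc_of_le (le_of_lt hγσ₁), smul_eq_mul]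
            ring
    have h2 : σ₁ - γ ≤ 1/(Kc*C₁+1) := by
      rw [hσ₁def]
      have := min_le_right s₀ (γ + 1/(Kc*C₁+1))
      linarith
    calc Kc * ∫ σ in γ..σ₁, g σ ≤ Kc * (C₁ * (1/(Kc*C₁+1))) := by
          apply mul_le_mul_of_nonneg_left _ hK
          calc (∫ σ in γ..σ₁, g σ) ≤ C₁ * (σ₁ - γ) := h1
            _ ≤ C₁ * (1/(Kc*C₁+1)) := mul_le_mul_of_nonneg_left h2 hC₁0
      _ ≤ 1 := by
          rw [← mul_assoc, mul_one_div]
          exact div_le_one_of_le₀ (by linarith) (le_of_lt hKC₁)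
  -- g σ₁ ≤ N₀ + 1
  have hσ₁bound : g σ₁ ≤ N₀ + 1 := by
    have hsub2 : IntervalIntegrable g volume γ σ₁ := by
      apply hint₀.mono_set
      rw [Set.uIcc_of_le (le_of_lt hγσ₁), Set.uIcc_of_le (le_of_lt hγs₀)]
      exact Set.Icc_subset_Icc_right hσ₁s₀
    have h5 := (hM5 γ σ₁ hγ hσ₁Icc (le_of_lt hγσ₁) hsub2).1
    linarith
  -- (iv) forward Gronwall from σ₁ to s
  have hhyp2 : ∀ t ∈ Set.Icc σ₁ s, g t ≤ (N₀+1) + Kc * ∫ σ in σ₁..t, g σ := by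
    intro t ht
    have htIcc : t ∈ Set.Icc α β := hmemIcc t (lt_of_lt_of_le hγσ₁ ht.1) ht.2
    have := (hM5 σ₁ t hσ₁Icc htIcc ht.1 (hci σ₁ t hγσ₁ ht.1 ht.2)).1
    linarith
  have hfin := RG (f := g) (t₀ := σ₁) (t₁ := s) (A := N₀+1)
    (le_trans hσ₁s₀ (le_of_lt hs₀s)) (by linarith) hK
    (hci σ₁ s hγσ₁ (le_trans hσ₁s₀ (le_of_lt hs₀s)) (le_refl _)) (fun t _ => hgnn t) hhyp2
    s ⟨le_trans hσ₁s₀ (le_of_lt hs₀s), le_refl _⟩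
  calc g s ≤ (N₀+1) * Real.exp (Kc * (s - σ₁)) := hfin
    _ ≤ (N₀+1) * Real.exp (Kc * (β - α)) :=
        mul_le_mul_of_nonneg_left (hexple _ (by linarith [hs.2, hσ₁Icc.1])) (by linarith)
private lemma STEP' {g : ℝ → ℝ} {α β Kc N₀ : ℝ} (hK : 0 ≤ Kc) (hN : 0 ≤ N₀)
    (hgnn : ∀ t, 0 ≤ g t) (hgmeas : Measurable g)
    (hM5 : ∀ t s, t ∈ Set.Icc α β → s ∈ Set.Icc α β → t ≤ s → IntervalIntegrable g volume t s →
      g s ≤ g t + Kc * ∫ σ in t..s, g σ ∧ g t ≤ g s + Kc * ∫ σ in t..s, g σ)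
    {γ s : ℝ} (hγ : γ ∈ Set.Icc α β) (hs : s ∈ Set.Icc α β) (hsγ : s < γ)
    (hNγ : g γ ≤ N₀)
    (hloc : ∀ τ, s ≤ τ → τ < γ → ∃ δ > 0, ∃ C, ∀ σ ∈ Set.Icc α β, |σ - τ| < δ → g σ ≤ C) :
    g s ≤ (N₀ + 1) * Real.exp (Kc * (β - α)) := by
  have hαβ : α ≤ β := le_trans hγ.1 hγ.2
  have hexple : ∀ r : ℝ, r ≤ β - α → Real.exp (Kc * r) ≤ Real.exp (Kc * (β - α)) :=
    fun r hr => Real.exp_le_exp.mpr (mul_le_mul_of_nonneg_left hr hK)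
  set s₀ : ℝ := (s + γ)/2 with hs₀def
  have hss₀ : s < s₀ := by rw [hs₀def]; linarith
  have hs₀γ : s₀ < γ := by rw [hs₀def]; linarith
  have hmemIcc : ∀ τ, s ≤ τ → τ ≤ γ → τ ∈ Set.Icc α β :=
    fun τ h1 h2 => ⟨le_trans hs.1 h1, le_trans h2 hγ.2⟩
  have hs₀Icc : s₀ ∈ Set.Icc α β := hmemIcc s₀ (le_of_lt hss₀) (le_of_lt hs₀γ)
  have hcb : ∀ p q, s ≤ p → p ≤ q → q < γ → ∃ C, ∀ τ ∈ Set.Icc p q, g τ ≤ C := by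
    intro p q hp hpq hq
    apply LOC hpq (Set.Icc_subset_Icc (le_trans hs.1 hp) (le_trans (le_of_lt hq) hγ.2))
    intro τ hτ
    exact hloc τ (le_trans hp hτ.1) (lt_of_le_of_lt hτ.2 hq)
  have hci : ∀ p q, s ≤ p → p ≤ q → q < γ → IntervalIntegrable g volume p q := by
    intro p q hp hpq hq
    obtain ⟨C, hC⟩ := hcb p q hp hpq hq
    exact int_of_bdd hgmeas hgnn hpq (fun σ hσ => hC σ ⟨le_of_lt hσ.1, hσ.2⟩)
  set A₁ : ℝ := max (g s₀) 0 with hA₁def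
  have hA₁ : 0 ≤ A₁ := le_max_right _ _
  set C₁ : ℝ := A₁ * Real.exp (Kc * (β - α)) with hC₁def
  have hC₁0 : 0 ≤ C₁ := mul_nonneg hA₁ (Real.exp_nonneg _)
  have hC1 : ∀ τ, s₀ ≤ τ → τ < γ → g τ ≤ C₁ := by
    intro τ hτ1 hτ2
    have hτIcc : τ ∈ Set.Icc α β := hmemIcc τ (le_trans (le_of_lt hss₀) hτ1) (le_of_lt hτ2)
    have hhyp : ∀ t ∈ Set.Icc s₀ τ, g t ≤ A₁ + Kc * ∫ σ in s₀..t, g σ := by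
      intro t ht
      have htIcc : t ∈ Set.Icc α β := hmemIcc t (le_trans (le_of_lt hss₀) ht.1)
        (le_trans ht.2 (le_of_lt hτ2))
      have := (hM5 s₀ t hs₀Icc htIcc ht.1
        (hci s₀ t (le_of_lt hss₀) ht.1 (lt_of_le_of_lt ht.2 hτ2))).1
      have h2 : g s₀ ≤ A₁ := le_max_left _ _
      linarith
    have hB := RG (f := g) (t₀ := s₀) (t₁ := τ) hτ1 hA₁ hK
      (hci s₀ τ (le_of_lt hss₀) hτ1 hτ2) (fun t _ => hgnn t) hhyp τ ⟨hτ1, le_refl _⟩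
    calc g τ ≤ A₁ * Real.exp (Kc * (τ - s₀)) := hB
      _ ≤ C₁ := mul_le_mul_of_nonneg_left
          (hexple _ (by linarith [hτIcc.2, hs₀Icc.1])) hA₁
  set C₂ : ℝ := max C₁ N₀ with hC₂def
  have hC₂0 : 0 ≤ C₂ := le_trans hC₁0 (le_max_left _ _)
  have hbd2 : ∀ σ ∈ Set.Ioc s₀ γ, g σ ≤ C₂ := by
    intro σ hσ
    rcases eq_or_lt_of_le hσ.2 with heq | hlt
    · rw [heq]; exact le_trans hNγ (le_max_right _ _)
    · exact le_trans (hC1 σ (le_of_lt hσ.1) hlt) (le_max_left _ _)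
  have hint₀ : IntervalIntegrable g volume s₀ γ :=
    int_of_bdd hgmeas hgnn (le_of_lt hs₀γ) hbd2
  set σ₁ : ℝ := max s₀ (γ - 1/(Kc*C₂+1)) with hσ₁def
  have hKC₂ : 0 < Kc*C₂+1 := by positivity
  have hσ₁γ : σ₁ < γ := max_lt hs₀γ (by linarith [one_div_pos.mpr hKC₂])
  have hs₀σ₁ : s₀ ≤ σ₁ := le_max_left _ _
  have hσ₁Icc : σ₁ ∈ Set.Icc α β :=
    hmemIcc σ₁ (le_trans (le_of_lt hss₀) hs₀σ₁) (le_of_lt hσ₁γ)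
  have hIσ₁ : Kc * ∫ σ in σ₁..γ, g σ ≤ 1 := by
    have hIoc : IntegrableOn g (Set.Ioc σ₁ γ) volume := by
      have := (intervalIntegrable_iff_integrableOn_Ioc_of_le (le_of_lt hs₀γ)).mp hint₀
      exact this.mono_set (Set.Ioc_subset_Ioc_left hs₀σ₁)
    have h1 : ∫ σ in σ₁..γ, g σ ≤ C₂ * (γ - σ₁) := by
      rw [intervalIntegral.integral_of_le (le_of_lt hσ₁γ)]
      calc (∫ σ in Set.Ioc σ₁ γ, g σ) ≤ ∫ _ in Set.Ioc σ₁ γ, C₂ :=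
            setIntegral_mono_on hIoc (integrableOn_const measure_Ioc_lt_top.ne)
              measurableSet_Ioc (fun σ hσ => hbd2 σ ⟨lt_of_le_of_lt hs₀σ₁ hσ.1, hσ.2⟩)
        _ = C₂ * (γ - σ₁) := by
            rw [setIntegral_const, Real.volume_real_Ioc_of_le (le_of_lt hσ₁γ), smul_eq_mul]
            ring
    have h2 : γ - σ₁ ≤ 1/(Kc*C₂+1) := by
      rw [hσ₁def]
      have := le_max_right s₀ (γ - 1/(Kc*C₂+1))
      linarith
    calc Kc * ∫ σ in σ₁..γ, g σ ≤ Kc * (C₂ * (1/(Kc*C₂+1))) := by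
          apply mul_le_mul_of_nonneg_left _ hK
          calc (∫ σ in σ₁..γ, g σ) ≤ C₂ * (γ - σ₁) := h1
            _ ≤ C₂ * (1/(Kc*C₂+1)) := mul_le_mul_of_nonneg_left h2 hC₂0
      _ ≤ 1 := by
          rw [← mul_assoc, mul_one_div]
          exact div_le_one_of_le₀ (by linarith) (le_of_lt hKC₂)
  have hσ₁bound : g σ₁ ≤ N₀ + 1 := by
    have hsub2 : IntervalIntegrable g volume σ₁ γ := by
      apply hint₀.mono_set
      rw [Set.uIcc_of_le (le_of_lt hσ₁γ), Set.uIcc_of_le (le_of_lt hs₀γ)]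
      exact Set.Icc_subset_Icc_left hs₀σ₁
    have h5 := (hM5 σ₁ γ hσ₁Icc hγ (le_of_lt hσ₁γ) hsub2).2
    linarith
  have hsσ₁ : s ≤ σ₁ := le_trans (le_of_lt hss₀) hs₀σ₁
  have hhyp2 : ∀ t ∈ Set.Icc s σ₁, g t ≤ (N₀+1) + Kc * ∫ σ in t..σ₁, g σ := by
    intro t ht
    have htIcc : t ∈ Set.Icc α β := hmemIcc t ht.1 (le_trans ht.2 (le_of_lt hσ₁γ))
    have := (hM5 t σ₁ htIcc hσ₁Icc ht.2 (hci t σ₁ ht.1 ht.2 hσ₁γ)).2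
    linarith
  have hfin := BRG (f := g) (t₀ := s) (t₁ := σ₁) (A := N₀+1)
    hsσ₁ (by linarith) hK (hci s σ₁ (le_refl _) hsσ₁ hσ₁γ) (fun t _ => hgnn t) hhyp2
    s ⟨le_refl _, hsσ₁⟩
  calc g s ≤ (N₀+1) * Real.exp (Kc * (σ₁ - s)) := hfin
    _ ≤ (N₀+1) * Real.exp (Kc * (β - α)) :=
        mul_le_mul_of_nonneg_left (hexple _ (by linarith [hσ₁Icc.2, hs.1])) (by linarith)
private lemma GLOBALBOUND {g : ℝ → ℝ} {α β Kc : ℝ} (hαβ : α < β) (hK : 0 ≤ Kc)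
    (hgnn : ∀ t, 0 ≤ g t) (hgmeas : Measurable g)
    (hcl : ∀ r : ℝ, IsClosed {t | t ∈ Set.Icc α β ∧ g t ≤ r})
    (hM5 : ∀ t s, t ∈ Set.Icc α β → s ∈ Set.Icc α β → t ≤ s → IntervalIntegrable g volume t s →
      g s ≤ g t + Kc * ∫ σ in t..s, g σ ∧ g t ≤ g s + Kc * ∫ σ in t..s, g σ) :
    ∃ C, ∀ t ∈ Set.Icc α β, g t ≤ C := by
  classical
  set Bad : Set ℝ :=
    {t | t ∈ Set.Icc α β ∧ ∀ δ > (0:ℝ), ¬∃ C, ∀ σ ∈ Set.Icc α β, |σ - t| < δ → g σ ≤ C}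
    with hBadDef
  have hBadIcc : Bad ⊆ Set.Icc α β := fun t ht => ht.1
  have hnotBad : ∀ τ ∈ Set.Icc α β, τ ∉ Bad →
      ∃ δ > (0:ℝ), ∃ C, ∀ σ ∈ Set.Icc α β, |σ - τ| < δ → g σ ≤ C := by
    intro τ hτ hn
    by_contra hcon
    push_neg at hcon
    exact hn ⟨hτ, fun δ hδ h => by
      obtain ⟨C, hC⟩ := h
      obtain ⟨σ, hσ1, hσ2, hσ3⟩ := hcon δ hδ C
      exact absurd (hC σ hσ1 hσ2) (not_le.mpr hσ3)⟩
  have hBadClosed : IsClosed Bad := by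
    apply isClosed_of_closure_subset
    intro t htc
    have htIcc : t ∈ Set.Icc α β := by
      have h1 : closure Bad ⊆ Set.Icc α β := closure_minimal hBadIcc isClosed_Icc
      exact h1 htc
    refine ⟨htIcc, ?_⟩
    intro δ hδ hex
    obtain ⟨C, hC⟩ := hex
    obtain ⟨t', ht'Bad, ht'd⟩ := Metric.mem_closure_iff.mp htc (δ/2) (by linarith)
    apply ht'Bad.2 (δ/2) (by linarith)
    refine ⟨C, fun σ hσ hd => hC σ hσ ?_⟩
    rw [Real.dist_eq] at ht'd
    have : |σ - t| ≤ |σ - t'| + |t' - t| := abs_sub_le σ t' t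
    have h2 : |t' - t| < δ/2 := by rwa [abs_sub_comm] at ht'd
    linarith
  by_cases hBadEmpty : Bad = ∅
  · apply LOC (le_of_lt hαβ) (subset_refl _)
    intro τ hτ
    apply hnotBad τ hτ
    rw [hBadEmpty]
    exact Set.notMem_empty τ
  · have hBadNe : Bad.Nonempty := Set.nonempty_iff_ne_empty.mpr hBadEmpty
    exfalso
    haveI : CompleteSpace ↥Bad := hBadClosed.completeSpace_coe
    haveI : Nonempty ↥Bad := hBadNe.to_subtype
    have hclosed' : ∀ n : ℕ,
        IsClosed (((↑) ⁻¹' {t | t ∈ Set.Icc α β ∧ g t ≤ (n:ℝ)}) : Set ↥Bad) :=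
      fun n => (hcl n).preimage continuous_subtype_val
    have hcover : (⋃ n : ℕ, ((↑) ⁻¹' {t | t ∈ Set.Icc α β ∧ g t ≤ (n:ℝ)} : Set ↥Bad)) =
        Set.univ := by
      ext t
      simp only [Set.mem_iUnion, Set.mem_preimage, Set.mem_setOf_eq, Set.mem_univ, iff_true]
      obtain ⟨n, hn⟩ := exists_nat_ge (g ↑t)
      exact ⟨n, t.2.1, hn⟩
    obtain ⟨N₀, hN₀⟩ := nonempty_interior_of_iUnion_of_closed hclosed' hcover
    obtain ⟨z₀, hz₀⟩ := hN₀
    rw [mem_interior_iff_mem_nhds, Metric.mem_nhds_iff] at hz₀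
    obtain ⟨ε, hε, hball⟩ := hz₀
    set z : ℝ := ↑z₀ with hzdef
    have hzBad : z ∈ Bad := z₀.2
    have hzIcc : z ∈ Set.Icc α β := hzBad.1
    have hN0nn : (0:ℝ) ≤ (N₀:ℝ) := Nat.cast_nonneg N₀
    have hNbound : ∀ σ ∈ Bad, |σ - z| < ε → g σ ≤ (N₀:ℝ) := by
      intro σ hσ hd
      have hmem : (⟨σ, hσ⟩ : ↥Bad) ∈ Metric.ball z₀ ε := by
        rw [Metric.mem_ball, Subtype.dist_eq, Real.dist_eq]
        exact hd
      exact (hball hmem).2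
    apply hzBad.2 (ε/2) (by linarith)
    refine ⟨max (((N₀:ℝ)+1) * Real.exp (Kc * (β - α))) (N₀:ℝ), ?_⟩
    intro σ hσIcc hσd
    by_cases hσBad : σ ∈ Bad
    · exact le_trans (hNbound σ hσBad (by linarith [abs_nonneg (σ - z)])) (le_max_right _ _)
    rcases lt_trichotomy σ z with hlt | heqz | hgt
    · -- σ < z : use sInf of Bad ∩ [σ, z] and STEP'
      have hne : (Bad ∩ Set.Icc σ z).Nonempty := ⟨z, hzBad, ⟨le_of_lt hlt, le_refl _⟩⟩
      have hcpt : IsCompact (Bad ∩ Set.Icc σ z) :=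
        Metric.isCompact_of_isClosed_isBounded (hBadClosed.inter isClosed_Icc)
          ((Metric.isBounded_Icc σ z).subset Set.inter_subset_right)
      have hγmem := hcpt.sInf_mem hne
      set γ : ℝ := sInf (Bad ∩ Set.Icc σ z) with hγdef
      have hγBad : γ ∈ Bad := hγmem.1
      have hγ1 : σ ≤ γ := hγmem.2.1
      have hγ2 : γ ≤ z := hγmem.2.2
      have hσγ : σ < γ := lt_of_le_of_ne hγ1 (fun h => hσBad (h ▸ hγBad))
      have hγd : |γ - z| < ε := by
        have h1 : z - σ < ε/2 := by
          have h2 := (abs_lt.mp hσd).1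
          linarith
        rw [abs_sub_comm, abs_of_nonneg (by linarith : (0:ℝ) ≤ z - γ)]
        linarith
      have hNγ : g γ ≤ (N₀:ℝ) := hNbound γ hγBad hγd
      have hloc : ∀ τ, σ ≤ τ → τ < γ → ∃ δ > (0:ℝ), ∃ C,
          ∀ ρ ∈ Set.Icc α β, |ρ - τ| < δ → g ρ ≤ C := by
        intro τ hτ1 hτ2
        have hτIcc : τ ∈ Set.Icc α β := ⟨le_trans hσIcc.1 hτ1,
          le_trans (le_of_lt hτ2) (le_trans hγ2 hzIcc.2)⟩
        apply hnotBad τ hτIcc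
        intro hτBad
        have : γ ≤ τ := csInf_le (Metric.isBounded_Icc σ z |>.subset
          Set.inter_subset_right).bddBelow ⟨hτBad, hτ1, le_trans (le_of_lt hτ2) hγ2⟩
        linarith
      have := STEP' (α := α) (β := β) hK hN0nn hgnn hgmeas hM5
        ⟨le_trans hσIcc.1 hγ1, le_trans hγ2 hzIcc.2⟩ hσIcc hσγ hNγ hloc
      exact le_trans this (le_max_left _ _)
    · exact absurd (heqz ▸ hzBad) hσBad
    · -- z < σ : use sSup of Bad ∩ [z, σ] and STEP
      have hne : (Bad ∩ Set.Icc z σ).Nonempty := ⟨z, hzBad, ⟨le_refl _, le_of_lt hgt⟩⟩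
      have hcpt : IsCompact (Bad ∩ Set.Icc z σ) :=
        Metric.isCompact_of_isClosed_isBounded (hBadClosed.inter isClosed_Icc)
          ((Metric.isBounded_Icc z σ).subset Set.inter_subset_right)
      have hγmem := hcpt.sSup_mem hne
      set γ : ℝ := sSup (Bad ∩ Set.Icc z σ) with hγdef
      have hγBad : γ ∈ Bad := hγmem.1
      have hγ1 : z ≤ γ := hγmem.2.1
      have hγ2 : γ ≤ σ := hγmem.2.2
      have hγσ : γ < σ := lt_of_le_of_ne hγ2 (fun h => hσBad (h ▸ hγBad))
      have hγd : |γ - z| < ε := by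
        have h1 : σ - z < ε/2 := (abs_lt.mp hσd).2
        rw [abs_of_nonneg (by linarith : (0:ℝ) ≤ γ - z)]
        linarith
      have hNγ : g γ ≤ (N₀:ℝ) := hNbound γ hγBad hγd
      have hloc : ∀ τ, γ < τ → τ ≤ σ → ∃ δ > (0:ℝ), ∃ C,
          ∀ ρ ∈ Set.Icc α β, |ρ - τ| < δ → g ρ ≤ C := by
        intro τ hτ1 hτ2
        have hτIcc : τ ∈ Set.Icc α β := ⟨le_trans hzIcc.1 (le_trans hγ1 (le_of_lt hτ1)),
          le_trans hτ2 hσIcc.2⟩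
        apply hnotBad τ hτIcc
        intro hτBad
        have : τ ≤ γ := le_csSup (Metric.isBounded_Icc z σ |>.subset
          Set.inter_subset_right).bddAbove ⟨hτBad, le_trans hγ1 (le_of_lt hτ1), hτ2⟩
        linarith
      have := STEP (α := α) (β := β) hK hN0nn hgnn hgmeas hM5
        ⟨le_trans hzIcc.1 hγ1, le_trans hγ2 hσIcc.2⟩ hσIcc hγσ hNγ hloc
      exact le_trans this (le_max_left _ _)

/-- Backward uniqueness for the heat equation with bounded potential on a weighted graph:
if `u(·,b) ≡ 0` then `u ≡ 0` on `V × [a,b]`. -/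
theorem backward_uniqueness {V : Type*} (w : V → V → ℝ)
    (hsymm : ∀ x y, w x y = w y x) (hnonneg : ∀ x y, 0 ≤ w x y)
    (hlf : ∀ x, {y | 0 < w x y}.Finite)
    (a b : ℝ) (hab : a ≤ b) (u : V → ℝ → ℝ) (c : V → ℝ)
    (hc : ∃ M : ℝ, ∀ x, |c x| ≤ M)
    (heq : ∀ x : V, ∀ t ∈ Set.Icc a b,
      HasDerivAt (u x) (glap w (fun y => u y t) x + c x * u x t) t)
    (hW12 : ∀ t ∈ Set.Icc a b, Summable (fun x => (u x t)^2 * vmu w x) ∧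
      Summable (fun x => (glap w (fun y => u y t) x + c x * u x t)^2 * vmu w x) ∧
      Summable (fun x => gnormSq w (fun y => u y t) x * vmu w x))
    (hb : ∀ x, u x b = 0) :
    ∀ x : V, ∀ t ∈ Set.Icc a b, u x t = 0 := by
  classical
  obtain ⟨M₀, hM₀⟩ := hc
  rcases eq_or_lt_of_le hab with rfl | hlt
  · intro x t ht
    have h : t = a := le_antisymm ht.2 ht.1
    rw [h]
    exact hb x
  set M : ℝ := max M₀ 0 with hMdef
  have hM : ∀ x, |c x| ≤ M := fun x => le_trans (hM₀ x) (le_max_left _ _)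
  have hM0 : (0:ℝ) ≤ M := le_max_right _ _
  set K : ℝ := 4 + 2*M with hKdef
  have hK0 : (0:ℝ) ≤ K := by rw [hKdef]; linarith
  -- μ basics
  set NB : V → Finset V := fun x => (hlf x).toFinset with hNBdef
  have hNBmem : ∀ x y, y ∈ NB x ↔ 0 < w x y := fun x y => Set.Finite.mem_toFinset _
  have hwzero : ∀ x y, y ∉ NB x → w x y = 0 := fun x y hy =>
    le_antisymm (not_lt.mp (fun h => hy ((hNBmem x y).mpr h))) (hnonneg x y)
  have hμsummable : ∀ x, Summable (fun y => w x y) := fun x =>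
    summable_of_ne_finset_zero (s := NB x) (fun y hy => hwzero x y hy)
  have hμnn : ∀ x, 0 ≤ vmu w x := fun x => tsum_nonneg (fun y => hnonneg x y)
  have hwle : ∀ x y, w x y ≤ vmu w x := fun x y =>
    Summable.le_tsum (hμsummable x) y (fun z _ => hnonneg x z)
  have hμeq : ∀ x, vmu w x = ∑ y ∈ NB x, w x y :=
    fun x => tsum_eq_sum (fun y hy => hwzero x y hy)
  have hglapμ : ∀ (t:ℝ) x, glap w (fun y => u y t) x * vmu w x
      = ∑ y ∈ NB x, w x y * (u y t - u x t) := by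
    intro t x
    rcases eq_or_ne (vmu w x) 0 with h0 | hne
    · rw [h0, mul_zero]
      symm
      apply Finset.sum_eq_zero
      intro y _
      have hw0 : w x y = 0 := le_antisymm (h0 ▸ hwle x y) (hnonneg x y)
      rw [hw0, zero_mul]
    · unfold glap
      rw [div_mul_cancel₀ _ hne]
      exact tsum_eq_sum (fun y hy => by rw [hwzero x y hy, zero_mul])
  have hucont : ∀ x, ContinuousOn (u x) (Set.Icc a b) :=
    fun x t ht => ((heq x t ht).continuousAt).continuousWithinAt
  -- countable essential support
  set V₀ : Set V := ⋃ q : ℚ, {x | (q:ℝ) ∈ Set.Icc a b ∧ u x q ≠ 0 ∧ vmu w x ≠ 0} with hV₀def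
  have hV₀count : V₀.Countable := by
    apply Set.countable_iUnion
    intro q
    by_cases hq : (q:ℝ) ∈ Set.Icc a b
    · apply Set.Countable.mono _ ((hW12 q hq).1.countable_support)
      intro x hx
      simp only [Function.mem_support]
      intro hcon
      rcases mul_eq_zero.mp hcon with h | h
      · exact hx.2.1 (pow_eq_zero_iff two_ne_zero |>.mp h)
      · exact hx.2.2 h
    · have hempty : {x : V | (q:ℝ) ∈ Set.Icc a b ∧ u x q ≠ 0 ∧ vmu w x ≠ 0} = ∅ := by
        ext x; simp [hq]
      rw [hempty]
      exact Set.countable_empty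
  have hoff : ∀ t ∈ Set.Icc a b, ∀ x, x ∉ V₀ → (u x t)^2 * vmu w x = 0 := by
    intro t ht x hx
    rcases eq_or_ne (vmu w x) 0 with h0 | hne
    · rw [h0, mul_zero]
    rcases eq_or_ne (u x t) 0 with h0u | hneu
    · rw [h0u]; ring
    exfalso
    have hev : ∀ᶠ s in nhds t, u x s ≠ 0 := ((heq x t ht).continuousAt).eventually_ne hneu
    rw [Metric.eventually_nhds_iff] at hev
    obtain ⟨ε, hε, hballev⟩ := hev
    have hlo : max a (t-ε) < min b (t+ε) := by
      rcases ht with ⟨h1, h2⟩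
      apply max_lt
      · exact lt_min hlt (by linarith)
      · exact lt_min (by linarith) (by linarith)
    obtain ⟨q, hq1, hq2⟩ := exists_rat_btwn hlo
    apply hx
    rw [hV₀def]
    apply Set.mem_iUnion.mpr
    refine ⟨q, ⟨?_, ?_, hne⟩⟩
    · constructor
      · exact le_of_lt (lt_of_le_of_lt (le_max_left a (t-ε)) hq1)
      · exact le_of_lt (lt_of_lt_of_le hq2 (min_le_left b (t+ε)))
    · apply hballev
      rw [Real.dist_eq]
      apply abs_lt.mpr
      constructor
      · have := lt_of_le_of_lt (le_max_right a (t-ε)) hq1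
        linarith
      · have := lt_of_lt_of_le hq2 (min_le_right b (t+ε))
        linarith
  -- exhaustion
  obtain ⟨S, hSmono, hSexh⟩ : ∃ S : ℕ → Finset V, Monotone S ∧ ∀ x ∈ V₀, ∃ n, x ∈ S n := by
    rcases V₀.eq_empty_or_nonempty with hemp | hne
    · exact ⟨fun _ => ∅, monotone_const, fun x hx => absurd hx (hemp ▸ Set.notMem_empty x)⟩
    · obtain ⟨e, he⟩ := Set.Countable.exists_eq_range hV₀count hne
      refine ⟨fun n => (Finset.range (n+1)).image e, ?_, ?_⟩
      · intro m n hmn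
        apply Finset.image_subset_image
        exact Finset.range_subset_range.mpr (by omega)
      · intro x hx
        rw [he] at hx
        obtain ⟨i, hi⟩ := hx
        exact ⟨i, Finset.mem_image.mpr ⟨i, Finset.self_mem_range_succ i, hi⟩⟩
  have hSbound : ∀ F : Finset V, (∀ x ∈ F, ∃ n, x ∈ S n) → ∃ n, ∀ x ∈ F, x ∈ S n := by
    intro F
    induction F using Finset.induction_on with
    | empty => exact fun _ => ⟨0, fun x hx => absurd hx (Finset.notMem_empty x)⟩
    | @insert z F' hzF ih =>
      intro h
      obtain ⟨n₁, hn₁⟩ := ih (fun x hx => h x (Finset.mem_insert_of_mem hx))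
      obtain ⟨n₂, hn₂⟩ := h _ (Finset.mem_insert_self _ _)
      refine ⟨max n₁ n₂, ?_⟩
      intro x hx
      rcases Finset.mem_insert.mp hx with rfl | hx'
      · exact hSmono (le_max_right n₁ n₂) hn₂
      · exact hSmono (le_max_left n₁ n₂) (hn₁ x hx')
  -- partial energies
  set ES : Finset V → ℝ → ℝ := fun F t => ∑ x ∈ F, (u x t)^2 * vmu w x with hESdef
  have htermnn : ∀ (x:V) (t:ℝ), 0 ≤ (u x t)^2 * vmu w x :=
    fun x t => mul_nonneg (sq_nonneg _) (hμnn x)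
  have hESnn : ∀ F t, 0 ≤ ES F t := fun F t => Finset.sum_nonneg (fun x _ => htermnn x t)
  have hEnn : ∀ t, 0 ≤ Ifun w u t := fun t => tsum_nonneg (fun x => htermnn x t)
  have hESle : ∀ F, ∀ t ∈ Set.Icc a b, ES F t ≤ Ifun w u t :=
    fun F t ht => Summable.sum_le_tsum F (fun x _ => htermnn x t) (hW12 t ht).1
  have hESmono : ∀ t, Monotone (fun n => ES (S n) t) := fun t m n hmn =>
    Finset.sum_le_sum_of_subset_of_nonneg (hSmono hmn) (fun x _ _ => htermnn x t)
  have hEStendsto : ∀ t ∈ Set.Icc a b,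
      Filter.Tendsto (fun n => ES (S n) t) Filter.atTop (nhds (Ifun w u t)) := by
    intro t ht
    have hbdd : ∀ n, ES (S n) t ≤ Ifun w u t := fun n => hESle (S n) t ht
    have hbddA : BddAbove (Set.range (fun n => ES (S n) t)) := by
      refine ⟨Ifun w u t, ?_⟩
      rintro r ⟨n, rfl⟩
      exact hbdd n
    have hlim := tendsto_atTop_ciSup (hESmono t) hbddA
    suffices hsup : ⨆ n, ES (S n) t = Ifun w u t by rwa [hsup] at hlim
    apply le_antisymm (ciSup_le hbdd)
    have hhs := (hW12 t ht).1.hasSum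
    apply le_of_tendsto hhs
    apply Filter.Eventually.of_forall
    intro F
    have heqF : ∑ x ∈ F, (u x t)^2 * vmu w x
        = ∑ x ∈ F.filter (fun x => x ∈ V₀), (u x t)^2 * vmu w x := by
      symm
      apply Finset.sum_subset (Finset.filter_subset _ _)
      intro x hxF hxF'
      exact hoff t ht x (fun hmem => hxF' (Finset.mem_filter.mpr ⟨hxF, hmem⟩))
    rw [heqF]
    obtain ⟨n, hn⟩ := hSbound (F.filter (fun x => x ∈ V₀))
      (fun x hx => hSexh x (Finset.mem_filter.mp hx).2)
    calc ∑ x ∈ F.filter (fun x => x ∈ V₀), (u x t)^2 * vmu w x ≤ ES (S n) t :=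
          Finset.sum_le_sum_of_subset_of_nonneg (fun x hx => hn x hx) (fun x _ _ => htermnn x t)
      _ ≤ ⨆ n, ES (S n) t := le_ciSup hbddA n
  -- derivative of partial energies
  set DS : Finset V → ℝ → ℝ := fun F t => ∑ x ∈ F,
      (2 * u x t * (glap w (fun y => u y t) x + c x * u x t)) * vmu w x with hDSdef
  have hESderiv : ∀ F : Finset V, ∀ t ∈ Set.Icc a b, HasDerivAt (fun s => ES F s) (DS F t) t := by
    intro F t ht
    simp only [hESdef, hDSdef]
    apply HasDerivAt.fun_sum
    intro x _
    have h1 := ((heq x t ht).pow 2).mul_const (vmu w x)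
    refine h1.congr_deriv ?_
    push_cast
    ring
  have hglapcont : ∀ x, ContinuousOn (fun t => glap w (fun y => u y t) x) (Set.Icc a b) := by
    intro x
    have hrw : (fun t => glap w (fun y => u y t) x)
        = fun t => (∑ y ∈ NB x, w x y * (u y t - u x t)) / vmu w x := by
      funext t
      unfold glap
      rw [tsum_eq_sum (s := NB x) (fun y hy => by rw [hwzero x y hy, zero_mul])]
    rw [hrw]
    apply ContinuousOn.div_const
    apply continuousOn_finset_sum
    intro y _
    exact continuousOn_const.mul ((hucont y).sub (hucont x))
  have hDScont : ∀ F : Finset V, ContinuousOn (fun t => DS F t) (Set.Icc a b) := by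
    intro F
    simp only [hDSdef]
    apply continuousOn_finset_sum
    intro x _
    apply ContinuousOn.mul _ continuousOn_const
    exact (continuousOn_const.mul (hucont x)).mul
      ((hglapcont x).add (continuousOn_const.mul (hucont x)))
  -- Q bound
  have hQbound : ∀ F : Finset V, ∀ t ∈ Set.Icc a b,
      ∑ x ∈ F, ∑ y ∈ NB x, w x y * (u y t)^2 ≤ Ifun w u t := by
    intro F t ht
    have hsum1 := (hW12 t ht).1
    have hsumy : ∀ x : V, Summable (fun y => w x y * (u y t)^2) := fun x =>
      summable_of_ne_finset_zero (s := NB x) (fun y hy => by rw [hwzero x y hy, zero_mul])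
    have hterm2 : ∀ y, ∑ x ∈ F, w x y * (u y t)^2 ≤ (u y t)^2 * vmu w y := by
      intro y
      have h2 : ∑ x ∈ F, w x y ≤ vmu w y := by
        calc ∑ x ∈ F, w x y = ∑ x ∈ F, w y x := Finset.sum_congr rfl (fun x _ => hsymm x y)
          _ ≤ vmu w y := Summable.sum_le_tsum F (fun x _ => hnonneg y x) (hμsummable y)
      calc ∑ x ∈ F, w x y * (u y t)^2 = (∑ x ∈ F, w x y) * (u y t)^2 := (Finset.sum_mul _ _ _).symm
        _ ≤ vmu w y * (u y t)^2 := mul_le_mul_of_nonneg_right h2 (sq_nonneg _)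
        _ = (u y t)^2 * vmu w y := mul_comm _ _
    have h1 : ∑ x ∈ F, ∑ y ∈ NB x, w x y * (u y t)^2 = ∑' y, ∑ x ∈ F, w x y * (u y t)^2 := by
      rw [Summable.tsum_finsetSum (fun x _ => hsumy x)]
      apply Finset.sum_congr rfl
      intro x _
      exact (tsum_eq_sum (fun y hy => by rw [hwzero x y hy, zero_mul])).symm
    rw [h1]
    exact Summable.tsum_le_tsum hterm2 (Summable.of_nonneg_of_le
      (fun y => Finset.sum_nonneg (fun x _ => mul_nonneg (hnonneg x y) (sq_nonneg _)))
      hterm2 hsum1) hsum1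
  -- derivative bound
  have hDSbound : ∀ F : Finset V, ∀ t ∈ Set.Icc a b, |DS F t| ≤ K * Ifun w u t := by
    intro F t ht
    have hsplit : DS F t = 2 * (∑ x ∈ F, ∑ y ∈ NB x, w x y * u x t * (u y t - u x t))
        + 2 * (∑ x ∈ F, c x * (u x t)^2 * vmu w x) := by
      simp only [hDSdef]
      rw [Finset.mul_sum, Finset.mul_sum, ← Finset.sum_add_distrib]
      apply Finset.sum_congr rfl
      intro x _
      have h2 : u x t * ∑ y ∈ NB x, w x y * (u y t - u x t)
          = ∑ y ∈ NB x, w x y * u x t * (u y t - u x t) := by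
        rw [Finset.mul_sum]
        exact Finset.sum_congr rfl (fun y _ => by ring)
      calc (2 * u x t * (glap w (fun y => u y t) x + c x * u x t)) * vmu w x
          = 2 * (u x t * (glap w (fun y => u y t) x * vmu w x))
            + 2 * (c x * (u x t)^2 * vmu w x) := by ring
        _ = 2 * (∑ y ∈ NB x, w x y * u x t * (u y t - u x t))
            + 2 * (c x * (u x t)^2 * vmu w x) := by rw [hglapμ t x, h2]
    have hT2 : |∑ x ∈ F, c x * (u x t)^2 * vmu w x| ≤ M * Ifun w u t := by
      have hEq : ∑ x ∈ F, M * ((u x t)^2 * vmu w x) = M * ES F t := by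
        simp only [hESdef]
        rw [Finset.mul_sum]
      calc |∑ x ∈ F, c x * (u x t)^2 * vmu w x| ≤ ∑ x ∈ F, |c x * (u x t)^2 * vmu w x| :=
            Finset.abs_sum_le_sum_abs _ _
        _ ≤ ∑ x ∈ F, M * ((u x t)^2 * vmu w x) := by
            apply Finset.sum_le_sum
            intro x _
            rw [mul_assoc, abs_mul, abs_of_nonneg (htermnn x t)]
            exact mul_le_mul_of_nonneg_right (hM x) (htermnn x t)
        _ = M * ES F t := hEq
        _ ≤ M * Ifun w u t := mul_le_mul_of_nonneg_left (hESle F t ht) hM0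
    have hT1 : |∑ x ∈ F, ∑ y ∈ NB x, w x y * u x t * (u y t - u x t)| ≤ 2 * Ifun w u t := by
      have hterm : ∀ x ∈ F, |∑ y ∈ NB x, w x y * u x t * (u y t - u x t)|
          ≤ (3/2) * ((u x t)^2 * vmu w x) + (1/2) * ∑ y ∈ NB x, w x y * (u y t)^2 := by
        intro x _
        have hstep1 : ∑ y ∈ NB x, (w x y * ((3/2) * (u x t)^2) + w x y * ((1/2) * (u y t)^2))
            = (3/2) * ((u x t)^2 * vmu w x) + (1/2) * ∑ y ∈ NB x, w x y * (u y t)^2 := by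
          calc ∑ y ∈ NB x, (w x y * ((3/2) * (u x t)^2) + w x y * ((1/2) * (u y t)^2))
              = ∑ y ∈ NB x, (((3/2) * (u x t)^2) * w x y + (1/2) * (w x y * (u y t)^2)) :=
                Finset.sum_congr rfl (fun y _ => by ring)
            _ = ((3/2) * (u x t)^2) * (∑ y ∈ NB x, w x y)
                + (1/2) * ∑ y ∈ NB x, w x y * (u y t)^2 := by
                rw [Finset.sum_add_distrib, ← Finset.mul_sum, ← Finset.mul_sum]
            _ = (3/2) * ((u x t)^2 * vmu w x) + (1/2) * ∑ y ∈ NB x, w x y * (u y t)^2 := by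
                rw [← hμeq x]
                ring
        calc |∑ y ∈ NB x, w x y * u x t * (u y t - u x t)|
            ≤ ∑ y ∈ NB x, |w x y * u x t * (u y t - u x t)| := Finset.abs_sum_le_sum_abs _ _
          _ ≤ ∑ y ∈ NB x, (w x y * ((3/2) * (u x t)^2) + w x y * ((1/2) * (u y t)^2)) := by
              apply Finset.sum_le_sum
              intro y _
              have h4 : |w x y * u x t * (u y t - u x t)| = w x y * |u x t * (u y t - u x t)| := by
                rw [mul_assoc, abs_mul, abs_of_nonneg (hnonneg x y)]
              rw [h4, ← mul_add]
              apply mul_le_mul_of_nonneg_left _ (hnonneg x y)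
              apply abs_le.mpr
              constructor
              · nlinarith [sq_nonneg (u x t + u y t), sq_nonneg (u x t - u y t)]
              · nlinarith [sq_nonneg (u x t + u y t), sq_nonneg (u x t - u y t)]
          _ = _ := hstep1
      have hsum3 : ∑ x ∈ F, ((3/2) * ((u x t)^2 * vmu w x) + (1/2) * ∑ y ∈ NB x, w x y * (u y t)^2)
          = (3/2) * ES F t + (1/2) * ∑ x ∈ F, ∑ y ∈ NB x, w x y * (u y t)^2 := by
        simp only [hESdef]
        rw [Finset.sum_add_distrib, ← Finset.mul_sum, ← Finset.mul_sum]
      calc |∑ x ∈ F, ∑ y ∈ NB x, w x y * u x t * (u y t - u x t)|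
          ≤ ∑ x ∈ F, |∑ y ∈ NB x, w x y * u x t * (u y t - u x t)| :=
            Finset.abs_sum_le_sum_abs _ _
        _ ≤ ∑ x ∈ F, ((3/2) * ((u x t)^2 * vmu w x) + (1/2) * ∑ y ∈ NB x, w x y * (u y t)^2) :=
            Finset.sum_le_sum hterm
        _ = (3/2) * ES F t + (1/2) * ∑ x ∈ F, ∑ y ∈ NB x, w x y * (u y t)^2 := hsum3
        _ ≤ (3/2) * Ifun w u t + (1/2) * Ifun w u t :=
            add_le_add (mul_le_mul_of_nonneg_left (hESle F t ht) (by norm_num))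
              (mul_le_mul_of_nonneg_left (hQbound F t ht) (by norm_num))
        _ = 2 * Ifun w u t := by ring
    rw [hsplit]
    calc |2 * (∑ x ∈ F, ∑ y ∈ NB x, w x y * u x t * (u y t - u x t))
          + 2 * (∑ x ∈ F, c x * (u x t)^2 * vmu w x)|
        ≤ |2 * (∑ x ∈ F, ∑ y ∈ NB x, w x y * u x t * (u y t - u x t))|
          + |2 * (∑ x ∈ F, c x * (u x t)^2 * vmu w x)| := abs_add_le _ _
      _ = 2 * |∑ x ∈ F, ∑ y ∈ NB x, w x y * u x t * (u y t - u x t)|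
          + 2 * |∑ x ∈ F, c x * (u x t)^2 * vmu w x| := by
          rw [abs_mul, abs_mul]
          norm_num
      _ ≤ 2 * (2 * Ifun w u t) + 2 * (M * Ifun w u t) :=
          add_le_add (mul_le_mul_of_nonneg_left hT1 (by norm_num))
            (mul_le_mul_of_nonneg_left hT2 (by norm_num))
      _ = K * Ifun w u t := by
          rw [hKdef]
          ring
  -- clamp and measurable envelope
  set clamp : ℝ → ℝ := fun t => max a (min b t) with hclampdef
  have hclampmem : ∀ t, clamp t ∈ Set.Icc a b := fun t =>
    ⟨le_max_left _ _, max_le hab (min_le_left _ _)⟩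
  have hclampid : ∀ t ∈ Set.Icc a b, clamp t = t := by
    intro t ht
    simp only [hclampdef]
    rw [min_eq_right ht.2, max_eq_right ht.1]
  have hclampcont : Continuous clamp := continuous_const.max (continuous_const.min continuous_id)
  set ESc : ℕ → ℝ → ℝ := fun n t => ES (S n) (clamp t) with hEScdef
  have hESccont : ∀ n, Continuous (ESc n) := by
    intro n
    have h1 : ContinuousOn (fun t => ES (S n) t) (Set.Icc a b) := by
      simp only [hESdef]
      apply continuousOn_finset_sum
      intro x _
      exact ((hucont x).pow 2).mul continuousOn_const
    exact h1.comp_continuous hclampcont hclampmem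
  set Ebar : ℝ → ℝ := fun t => (⨆ n, ENNReal.ofReal (ESc n t)).toReal with hEbardef
  have hEbar_meas : Measurable Ebar := by
    apply Measurable.ennreal_toReal
    apply Measurable.iSup
    intro n
    exact (ENNReal.continuous_ofReal.comp (hESccont n)).measurable
  have hEbar_eq : ∀ t ∈ Set.Icc a b, Ebar t = Ifun w u t := by
    intro t ht
    have h1 : ∀ n, ESc n t = ES (S n) t := by
      intro n
      simp only [hEScdef, hclampid t ht]
    have h2 : (⨆ n, ENNReal.ofReal (ESc n t)) = ENNReal.ofReal (Ifun w u t) := by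
      apply le_antisymm
      · apply iSup_le
        intro n
        rw [h1 n]
        exact ENNReal.ofReal_le_ofReal (hESle (S n) t ht)
      · have h3 : Filter.Tendsto (fun n => ENNReal.ofReal (ES (S n) t)) Filter.atTop
            (nhds (ENNReal.ofReal (Ifun w u t))) :=
          (ENNReal.continuous_ofReal.tendsto _).comp (hEStendsto t ht)
        apply le_of_tendsto h3
        apply Filter.Eventually.of_forall
        intro n
        rw [← h1 n]
        exact le_iSup (fun m => ENNReal.ofReal (ESc m t)) n
    simp only [hEbardef]
    rw [h2, ENNReal.toReal_ofReal (hEnn t)]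
  have hEbar_nn : ∀ t, 0 ≤ Ebar t := fun t => ENNReal.toReal_nonneg
  -- sublevel closedness
  have hcl : ∀ r : ℝ, IsClosed {t | t ∈ Set.Icc a b ∧ Ebar t ≤ r} := by
    intro r
    have hset : {t | t ∈ Set.Icc a b ∧ Ebar t ≤ r}
        = Set.Icc a b ∩ ⋂ n, (ESc n) ⁻¹' (Set.Iic r) := by
      ext t
      simp only [Set.mem_setOf_eq, Set.mem_inter_iff, Set.mem_iInter, Set.mem_preimage,
        Set.mem_Iic]
      constructor
      · rintro ⟨ht, hle⟩
        refine ⟨ht, fun n => ?_⟩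
        have h5 := hESle (S n) t ht
        rw [← hEbar_eq t ht] at h5
        calc ESc n t = ES (S n) t := by simp only [hEScdef, hclampid t ht]
          _ ≤ r := le_trans h5 hle
      · rintro ⟨ht, hall⟩
        refine ⟨ht, ?_⟩
        rw [hEbar_eq t ht]
        apply le_of_tendsto (hEStendsto t ht)
        apply Filter.Eventually.of_forall
        intro n
        have h6 := hall n
        rwa [show ESc n t = ES (S n) t from by simp only [hEScdef, hclampid t ht]] at h6
    rw [hset]
    exact isClosed_Icc.inter (isClosed_iInter (fun n => (isClosed_Iic).preimage (hESccont n)))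
  -- two-sided integral inequality
  have hM5 : ∀ t s, t ∈ Set.Icc a b → s ∈ Set.Icc a b → t ≤ s →
      IntervalIntegrable Ebar volume t s →
      Ebar s ≤ Ebar t + K * ∫ σ in t..s, Ebar σ ∧
      Ebar t ≤ Ebar s + K * ∫ σ in t..s, Ebar σ := by
    intro t s ht hs hts hint
    have hsubIcc : Set.Icc t s ⊆ Set.Icc a b := Set.Icc_subset_Icc ht.1 hs.2
    have huIcc : Set.uIcc t s = Set.Icc t s := Set.uIcc_of_le hts
    have hKEint : IntervalIntegrable (fun σ => K * Ebar σ) volume t s := hint.const_mul K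
    have hDSint : ∀ n, IntervalIntegrable (fun σ => DS (S n) σ) volume t s := by
      intro n
      apply ContinuousOn.intervalIntegrable
      rw [huIcc]
      exact (hDScont (S n)).mono hsubIcc
    have hFTC : ∀ n, ES (S n) s - ES (S n) t = ∫ σ in t..s, DS (S n) σ := by
      intro n
      symm
      apply intervalIntegral.integral_eq_sub_of_hasDerivAt
      · intro σ hσ
        rw [huIcc] at hσ
        exact hESderiv (S n) σ (hsubIcc hσ)
      · exact hDSint n
    have hup : ∀ n, ES (S n) s ≤ ES (S n) t + K * ∫ σ in t..s, Ebar σ := by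
      intro n
      have h1 : ∫ σ in t..s, DS (S n) σ ≤ ∫ σ in t..s, K * Ebar σ := by
        apply intervalIntegral.integral_mono_on hts (hDSint n) hKEint
        intro σ hσ
        have h2 := hDSbound (S n) σ (hsubIcc hσ)
        have h3 : Ifun w u σ = Ebar σ := (hEbar_eq σ (hsubIcc hσ)).symm
        calc DS (S n) σ ≤ |DS (S n) σ| := le_abs_self _
          _ ≤ K * Ifun w u σ := h2
          _ = K * Ebar σ := by rw [h3]
      rw [intervalIntegral.integral_const_mul] at h1
      have h5 := hFTC n
      linarith
    have hdown : ∀ n, ES (S n) t ≤ ES (S n) s + K * ∫ σ in t..s, Ebar σ := by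
      intro n
      have h1 : ∫ σ in t..s, (-(K * Ebar σ)) ≤ ∫ σ in t..s, DS (S n) σ := by
        apply intervalIntegral.integral_mono_on hts hKEint.neg (hDSint n)
        intro σ hσ
        have h2 := hDSbound (S n) σ (hsubIcc hσ)
        have h3 : Ifun w u σ = Ebar σ := (hEbar_eq σ (hsubIcc hσ)).symm
        calc -(K * Ebar σ) = -(K * Ifun w u σ) := by rw [h3]
          _ ≤ -|DS (S n) σ| := neg_le_neg h2
          _ ≤ DS (S n) σ := neg_abs_le _
      rw [intervalIntegral.integral_neg, intervalIntegral.integral_const_mul] at h1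
      have h5 := hFTC n
      linarith
    constructor
    · rw [hEbar_eq s hs, hEbar_eq t ht]
      exact le_of_tendsto_of_tendsto' (hEStendsto s hs)
        ((hEStendsto t ht).add_const (K * ∫ σ in t..s, Ebar σ)) hup
    · rw [hEbar_eq s hs, hEbar_eq t ht]
      exact le_of_tendsto_of_tendsto' (hEStendsto t ht)
        ((hEStendsto s hs).add_const (K * ∫ σ in t..s, Ebar σ)) hdown
  -- global bound, integrability, and vanishing
  obtain ⟨Cg, hCg⟩ := GLOBALBOUND (g := Ebar) hlt hK0 hEbar_nn hEbar_meas hcl hM5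
  have hintab : IntervalIntegrable Ebar volume a b :=
    int_of_bdd hEbar_meas hEbar_nn hab (fun σ hσ => hCg σ ⟨le_of_lt hσ.1, hσ.2⟩)
  have hEbarb : Ebar b = 0 := by
    rw [hEbar_eq b ⟨hab, le_refl b⟩]
    have hz : (fun x : V => (u x b)^2 * vmu w x) = fun _ => 0 := by
      funext x
      rw [hb x]
      ring
    show (∑' x, (u x b)^2 * vmu w x) = 0
    rw [hz, tsum_zero]
  have hzero : ∀ t ∈ Set.Icc a b, Ebar t = 0 := by
    have hhyp : ∀ t ∈ Set.Icc a b, Ebar t ≤ 0 + K * ∫ σ in t..b, Ebar σ := by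
      intro t ht
      have hsub : IntervalIntegrable Ebar volume t b := by
        apply hintab.mono_set
        rw [Set.uIcc_of_le ht.2, Set.uIcc_of_le hab]
        exact Set.Icc_subset_Icc_left ht.1
      have h7 := (hM5 t b ht ⟨hab, le_refl b⟩ ht.2 hsub).2
      rw [hEbarb] at h7
      linarith
    have hBRG := BRG (f := Ebar) (t₀ := a) (t₁ := b) hab (le_refl 0) hK0 hintab
      (fun t _ => hEbar_nn t) hhyp
    intro t ht
    have h8 := hBRG t ht
    rw [zero_mul] at h8
    exact le_antisymm h8 (hEbar_nn t)
  -- extraction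
  intro x t ht
  have hEzero : Ifun w u t = 0 := by
    rw [← hEbar_eq t ht]
    exact hzero t ht
  rcases eq_or_ne (vmu w x) 0 with hμ0 | hμne
  · have hderiv : ∀ s ∈ Set.Icc a b, HasDerivAt (u x) (c x * u x s) s := by
      intro s hs
      have h9 := heq x s hs
      have hglap0 : glap w (fun y => u y s) x = 0 := by
        unfold glap
        rw [hμ0, div_zero]
      rwa [hglap0, zero_add] at h9
    have hcont := hucont x
    have hfint : IntervalIntegrable (fun s => |u x s|) volume a b := by
      apply ContinuousOn.intervalIntegrable
      rw [Set.uIcc_of_le hab]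
      exact hcont.abs
    have hhyp : ∀ s ∈ Set.Icc a b, |u x s| ≤ 0 + M * ∫ σ in s..b, |u x σ| := by
      intro s hs
      have hFTC2 : ∫ σ in s..b, c x * u x σ = u x b - u x s := by
        apply intervalIntegral.integral_eq_sub_of_hasDerivAt
        · intro σ hσ
          rw [Set.uIcc_of_le hs.2] at hσ
          exact hderiv σ ⟨le_trans hs.1 hσ.1, hσ.2⟩
        · apply ContinuousOn.intervalIntegrable
          rw [Set.uIcc_of_le hs.2]
          exact continuousOn_const.mul (hcont.mono (Set.Icc_subset_Icc_left hs.1))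
      have h1 : u x s = -∫ σ in s..b, c x * u x σ := by
        rw [hFTC2, hb x]
        ring
      have hchain : |u x s| ≤ M * ∫ σ in s..b, |u x σ| := by
        calc |u x s| = |∫ σ in s..b, c x * u x σ| := by rw [h1, abs_neg]
          _ ≤ ∫ σ in s..b, |c x * u x σ| :=
              intervalIntegral.abs_integral_le_integral_abs hs.2
          _ ≤ ∫ σ in s..b, M * |u x σ| := by
              apply intervalIntegral.integral_mono_on hs.2
              · apply ContinuousOn.intervalIntegrable
                rw [Set.uIcc_of_le hs.2]
                exact (continuousOn_const.mul (hcont.mono (Set.Icc_subset_Icc_left hs.1))).abs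
              · apply ContinuousOn.intervalIntegrable
                rw [Set.uIcc_of_le hs.2]
                exact continuousOn_const.mul ((hcont.mono (Set.Icc_subset_Icc_left hs.1)).abs)
              · intro σ _
                rw [abs_mul]
                exact mul_le_mul_of_nonneg_right (hM x) (abs_nonneg _)
          _ = M * ∫ σ in s..b, |u x σ| := intervalIntegral.integral_const_mul _ _
      linarith
    have hBRG := BRG (f := fun s => |u x s|) (t₀ := a) (t₁ := b) hab (le_refl 0) hM0 hfint
      (fun s _ => abs_nonneg _) hhyp
    have h10 := hBRG t ht
    rw [zero_mul] at h10
    exact abs_eq_zero.mp (le_antisymm h10 (abs_nonneg _))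
  · have hterm : (u x t)^2 * vmu w x ≤ 0 := by
      rw [← hEzero]
      exact Summable.le_tsum (hW12 t ht).1 x (fun y _ => htermnn y t)
    have h0 : (u x t)^2 * vmu w x = 0 := le_antisymm hterm (htermnn x t)
    rcases mul_eq_zero.mp h0 with h | h
    · exact pow_eq_zero_iff two_ne_zero |>.mp h
    · exact absurd h hμne
end
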